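/- arXiv:1702.06897 — 9 statements merged into one kernel-verified Lean document; each statement's English description precedes it below -/
import Mathlib

section
/- Let a_1, …, a_{n+1} be distinct integers and define the (n+1) × n matrix W by row i equal to (a_i − a_1, …, a_i − a_{i−1}, a_i − a_{i+1}, …, a_i − a_{n+1}). Then for all complex x, y, and for all z in the domain, Σ_{i=1}^{n+1} Π_{j≠i} (x z^{a_i − a_j} + y)/(z^{a_i − a_j} − 1) = (x^{n+1} − (−y)^{n+1})/(x + y). In particular this sum does not depend on z. -/
open Finset Polynomial

theorem deg_lemma' (n : ℕ) (x y : ℂ) (t : Fin (n+1) → ℂ) :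
    (((∏ j, (C x * X + C (y * t j))) - C (x ^ (n+1)) * ∏ j, (X - C (t j))) : ℂ[X]).degree
      < (n+1 : ℕ) := by
  rw [Polynomial.degree_lt_iff_coeff_zero]
  intro m hm
  have h1 : ∀ j ∈ (univ : Finset (Fin (n+1))), natDegree (C x * X + C (y * t j)) ≤ 1 := by
    intro j _; compute_degree
  have h2 : ∀ j ∈ (univ : Finset (Fin (n+1))), natDegree ((X : ℂ[X]) - C (t j)) ≤ 1 := by
    intro j _; compute_degree
  have p1 : natDegree (∏ j, (C x * X + C (y * t j))) ≤ n + 1 := by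
    refine le_trans (natDegree_prod_le _ _) ?_
    calc ∑ j : Fin (n+1), natDegree (C x * X + C (y * t j)) ≤ ∑ _j : Fin (n+1), 1 :=
          Finset.sum_le_sum h1
      _ = n + 1 := by simp
  have p2 : natDegree (∏ j, ((X:ℂ[X]) - C (t j))) ≤ n + 1 := by
    refine le_trans (natDegree_prod_le _ _) ?_
    calc ∑ j : Fin (n+1), natDegree ((X:ℂ[X]) - C (t j)) ≤ ∑ _j : Fin (n+1), 1 :=
          Finset.sum_le_sum h2
      _ = n + 1 := by simp
  rcases eq_or_lt_of_le hm with h | h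
  · have c1 : (∏ j, (C x * X + C (y * t j)) : ℂ[X]).coeff (n+1) = x ^ (n+1) := by
      have := Polynomial.coeff_prod_of_natDegree_le (s := (univ : Finset (Fin (n+1))))
        (fun j => C x * X + C (y * t j)) 1 h1
      simp only [card_univ, Fintype.card_fin, mul_one] at this
      rw [this]
      have h' : ∀ j : Fin (n+1), (C x * X + C (y * t j)).coeff 1 = x := by
        intro j; simp [coeff_add, coeff_C]
      simp [h']
    have c2 : (∏ j, ((X:ℂ[X]) - C (t j))).coeff (n+1) = 1 := by
      have := Polynomial.coeff_prod_of_natDegree_le (s := (univ : Finset (Fin (n+1))))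
        (fun j => (X:ℂ[X]) - C (t j)) 1 h2
      simp only [card_univ, Fintype.card_fin, mul_one] at this
      rw [this]
      have h' : ∀ j : Fin (n+1), ((X:ℂ[X]) - C (t j)).coeff 1 = 1 := by
        intro j; simp [coeff_sub, coeff_C]
      simp [h']
    rw [← h, coeff_sub, c1, coeff_C_mul, c2, mul_one, sub_self]
  · have d2 : natDegree (C (x^(n+1)) * ∏ j, ((X:ℂ[X]) - C (t j))) < m := by
      refine lt_of_le_of_lt (le_trans natDegree_mul_le ?_) h
      rw [natDegree_C, zero_add]; exact p2
    rw [coeff_sub, coeff_eq_zero_of_natDegree_lt (lt_of_le_of_lt p1 h),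
      coeff_eq_zero_of_natDegree_lt d2, sub_zero]

theorem core_lemma (n : ℕ) (t : Fin (n+1) → ℂ) (ht0 : ∀ i, t i ≠ 0)
    (hne : ∀ i j : Fin (n+1), i ≠ j → t i ≠ t j) (x y : ℂ) (hxy : x + y ≠ 0) :
    ∑ i, ∏ j ∈ Finset.univ.erase i, (x * t i + y * t j) / (t i - t j)
      = (x ^ (n+1) - (-y) ^ (n+1)) / (x + y) := by
  classical
  set f : ℂ[X] := (∏ j, (C x * X + C (y * t j))) - C (x ^ (n+1)) * ∏ j, (X - C (t j)) with hf
  have hinj : Set.InjOn t (univ : Finset (Fin (n+1))) := by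
    intro i _ j _ h
    by_contra hij
    exact hne i j hij h
  have hdeg : f.degree < (#(univ : Finset (Fin (n+1))) : ℕ) := by
    simp only [card_univ, Fintype.card_fin]
    exact deg_lemma' n x y t
  have hinterp := Lagrange.eq_interpolate (s := univ) (v := t) hinj hdeg
  have key := congrArg (eval 0) hinterp
  set P : ℂ := ∏ j, t j with hP
  have hPne : P ≠ 0 := Finset.prod_ne_zero_iff.mpr fun j _ => ht0 j
  -- left side of key
  have L0a : ∏ j : Fin (n+1), (y * t j) = y ^ (n+1) * P := by
    rw [Finset.prod_mul_distrib, Finset.prod_const, card_univ, Fintype.card_fin]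
  have L0b : ∏ j : Fin (n+1), ((0:ℂ) - t j) = (-1) ^ (n+1) * P := by
    rw [Finset.prod_congr rfl (fun j _ => (by ring : (0:ℂ) - t j = (-1) * t j)),
      Finset.prod_mul_distrib, Finset.prod_const, card_univ, Fintype.card_fin]
  have L0 : eval 0 f = y ^ (n+1) * P - x ^ (n+1) * ((-1) ^ (n+1) * P) := by
    simp only [hf, eval_sub, eval_mul, eval_prod, eval_add, eval_C, eval_X, eval_sub, mul_zero,
      zero_add]
    rw [L0a, L0b]
  -- right side of key
  have R0 : eval 0 (Lagrange.interpolate univ t fun i => eval (t i) f)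
      = ∑ i, (∏ j, (x * t i + y * t j)) *
          ∏ j ∈ univ.erase i, ((t i - t j)⁻¹ * (0 - t j)) := by
    rw [Lagrange.interpolate_apply, eval_finset_sum]
    refine Finset.sum_congr rfl fun i _ => ?_
    rw [eval_mul, eval_C]
    congr 1
    · have hz2 : ∏ j : Fin (n+1), (t i - t j) = 0 :=
        Finset.prod_eq_zero (Finset.mem_univ i) (sub_self _)
      simp only [hf, eval_sub, eval_mul, eval_prod, eval_add, eval_C, eval_X]
      rw [hz2, mul_zero, sub_zero]
    · rw [Lagrange.basis, eval_prod]
      refine Finset.prod_congr rfl fun j _ => ?_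
      simp [Lagrange.basisDivisor]
  rw [L0, R0] at key
  -- rewrite each summand
  have hterm : ∀ i : Fin (n+1), (∏ j, (x * t i + y * t j)) *
        ∏ j ∈ univ.erase i, ((t i - t j)⁻¹ * (0 - t j))
      = ((x + y) * ((-1) ^ n * P)) *
        ∏ j ∈ univ.erase i, ((x * t i + y * t j) / (t i - t j)) := by
    intro i
    have e1 : ∏ j, (x * t i + y * t j)
        = ((x + y) * t i) * ∏ j ∈ univ.erase i, (x * t i + y * t j) := by
      rw [← Finset.mul_prod_erase univ _ (Finset.mem_univ i)]
      ring_nf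
    have hcard : (univ.erase i).card = n := by
      rw [Finset.card_erase_of_mem (Finset.mem_univ i), card_univ]; simp
    have e2 : ∏ j ∈ univ.erase i, ((t i - t j)⁻¹ * (0 - t j))
        = (∏ j ∈ univ.erase i, (t i - t j)⁻¹) * ((-1) ^ n * ∏ j ∈ univ.erase i, t j) := by
      rw [Finset.prod_mul_distrib]
      congr 1
      calc ∏ j ∈ univ.erase i, (0 - t j) = ∏ j ∈ univ.erase i, ((-1) * t j) := by
            refine Finset.prod_congr rfl fun j _ => by ring
        _ = (-1) ^ n * ∏ j ∈ univ.erase i, t j := by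
            rw [Finset.prod_mul_distrib, Finset.prod_const, hcard]
    have e3 : t i * ∏ j ∈ univ.erase i, t j = P :=
      Finset.mul_prod_erase univ t (Finset.mem_univ i)
    have e4 : ∏ j ∈ univ.erase i, ((x * t i + y * t j) / (t i - t j))
        = (∏ j ∈ univ.erase i, (x * t i + y * t j)) * ∏ j ∈ univ.erase i, (t i - t j)⁻¹ := by
      rw [← Finset.prod_mul_distrib]
      refine Finset.prod_congr rfl fun j _ => div_eq_mul_inv _ _
    rw [e1, e2, e4, ← e3]
    ring
  rw [Finset.sum_congr rfl (fun i _ => hterm i), ← Finset.mul_sum] at key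
  set S : ℂ := ∑ i, ∏ j ∈ univ.erase i, ((x * t i + y * t j) / (t i - t j)) with hS
  have h4 : ((-1 : ℂ)) ^ n * (-1) ^ n = 1 := by
    rw [← pow_add, ← two_mul, pow_mul]
    norm_num
  have hcan : ((-1 : ℂ) ^ n * P) * ((x + y) * S)
      = ((-1 : ℂ) ^ n * P) * (x ^ (n+1) + (-1) ^ n * y ^ (n+1)) := by
    linear_combination -key - y ^ (n+1) * P * h4
  have hmulne : ((-1 : ℂ) ^ n * P) ≠ 0 :=
    mul_ne_zero (pow_ne_zero _ (by norm_num)) hPne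
  have hfin := mul_left_cancel₀ hmulne hcan
  rw [eq_div_iff hxy]
  linear_combination hfin

/-- Quasilinear sets of powers are rigid: the sum equals (x^{n+1} - (-y)^{n+1})/(x+y)
(interpreted as (n+1)x^n when x + y = 0), independently of z. -/
theorem stmt_4 (n : ℕ) (a : Fin (n + 1) → ℤ) (ha : Function.Injective a)
    (x y z : ℂ) (hz : z ≠ 0) (hzd : ∀ i j : Fin (n + 1), i ≠ j → z ^ (a i - a j) ≠ 1) :
    ∑ i, ∏ j ∈ Finset.univ.erase i, (x * z ^ (a i - a j) + y) / (z ^ (a i - a j) - 1)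
      = if x + y = 0 then (n + 1) * x ^ n
        else (x ^ (n + 1) - (-y) ^ (n + 1)) / (x + y) := by
  classical
  by_cases hxy : x + y = 0
  · rw [if_pos hxy]
    have hy : y = -x := by linear_combination hxy
    have hcard : ∀ i : Fin (n+1), ((univ : Finset (Fin (n+1))).erase i).card = n := by
      intro i; rw [Finset.card_erase_of_mem (Finset.mem_univ i), card_univ]; simp
    have hterm : ∀ i : Fin (n+1),
        ∏ j ∈ Finset.univ.erase i, (x * z ^ (a i - a j) + y) / (z ^ (a i - a j) - 1) = x ^ n := by
      intro i
      have : ∀ j ∈ (univ : Finset (Fin (n+1))).erase i,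
          (x * z ^ (a i - a j) + y) / (z ^ (a i - a j) - 1) = x := by
        intro j hj
        have hij : i ≠ j := fun h => (Finset.mem_erase.mp hj).1 h.symm
        have hw : z ^ (a i - a j) - 1 ≠ 0 := sub_ne_zero.mpr (hzd i j hij)
        rw [hy, div_eq_iff hw]
        ring
      rw [Finset.prod_congr rfl this, Finset.prod_const, hcard i]
    rw [Finset.sum_congr rfl fun i _ => hterm i, Finset.sum_const, card_univ,
      Fintype.card_fin, nsmul_eq_mul]
    push_cast
    ring
  · rw [if_neg hxy]
    set t : Fin (n+1) → ℂ := fun i => z ^ (a i) with ht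
    have ht0 : ∀ i, t i ≠ 0 := fun i => zpow_ne_zero _ hz
    have hne : ∀ i j : Fin (n+1), i ≠ j → t i ≠ t j := by
      intro i j hij h
      apply hzd i j hij
      have h' : z ^ a i = z ^ a j := h
      rw [zpow_sub₀ hz, h', div_self (zpow_ne_zero _ hz)]
    have hfac : ∀ i j : Fin (n+1), i ≠ j →
        (x * z ^ (a i - a j) + y) / (z ^ (a i - a j) - 1)
          = (x * t i + y * t j) / (t i - t j) := by
      intro i j hij
      have h1 : z ^ (a i - a j) = t i / t j := by rw [zpow_sub₀ hz]
      have h2 : t i / t j - 1 ≠ 0 := by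
        rw [← h1]; exact sub_ne_zero.mpr (hzd i j hij)
      have h3 : t i - t j ≠ 0 := sub_ne_zero.mpr (hne i j hij)
      rw [h1, div_eq_div_iff h2 h3]
      field_simp [ht0 j]
    have := core_lemma n t ht0 hne x y hxy
    rw [← this]
    refine Finset.sum_congr rfl fun i _ => Finset.prod_congr rfl fun j hj => ?_
    exact hfac i j (fun h => (Finset.mem_erase.mp hj).1 h.symm)
end

section
/- Let m = 2k and let b_1, …, b_m be positive integers with signs ε_i ∈ {1,-1}. If Σ_{i=1}^m ε_i (z^{b_i} + 1)/(z^{b_i} − 1) = 0 for all complex z in the domain, then the multiset of pairs {(b_i, ε_i)} can be partitioned into k pairs of the form {(a, 1), (a, −1)}; that is, there is a fixed-point-free involution σ on {1,…,m} with b_{σ(i)} = b_i and ε_{σ(i)} = −ε_i for all i. -/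
open Filter Topology

private theorem stmt5_lim1 (a : ℕ) (ha : 0 < a) :
    Tendsto (fun t : ℝ => (t^a+1)/(t^a-1)) atTop (𝓝 1) := by
  have h1 : Tendsto (fun t : ℝ => t ^ a) atTop atTop := tendsto_pow_atTop ha.ne'
  have h2 : Tendsto (fun x : ℝ => (x+1)/(x-1)) atTop (𝓝 1) := by
    have h3 : Tendsto (fun x : ℝ => 1 + 2/(x-1)) atTop (𝓝 (1+0)) :=
      tendsto_const_nhds.add
        (Tendsto.div_atTop tendsto_const_nhds (tendsto_atTop_add_const_right _ _ tendsto_id))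
    rw [add_zero] at h3
    refine h3.congr' ?_
    filter_upwards [eventually_gt_atTop 1] with x hx
    have : x - 1 ≠ 0 := by linarith
    field_simp
    ring
  exact h2.comp h1

private theorem stmt5_lim3' : Tendsto (fun x : ℝ => x/(x-1)) atTop (𝓝 1) := by
  have h3 : Tendsto (fun x : ℝ => 1 + 1/(x-1)) atTop (𝓝 (1+0)) :=
    tendsto_const_nhds.add
      (Tendsto.div_atTop tendsto_const_nhds (tendsto_atTop_add_const_right _ _ tendsto_id))
  rw [add_zero] at h3
  refine h3.congr' ?_
  filter_upwards [eventually_gt_atTop 1] with x hx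
  have : x - 1 ≠ 0 := by linarith
  field_simp
  ring

private theorem stmt5_lim3 (a : ℕ) (ha : 0 < a) :
    Tendsto (fun t : ℝ => t^a/(t^a-1)) atTop (𝓝 1) :=
  stmt5_lim3'.comp (tendsto_pow_atTop ha.ne')

private theorem stmt5_lim2 (a mn : ℕ) (h : mn < a) :
    Tendsto (fun t : ℝ => t^mn/(t^a-1)) atTop (𝓝 0) := by
  have h1 : Tendsto (fun t : ℝ => (t^(a-mn))⁻¹ * (t^a/(t^a-1))) atTop (𝓝 (0 * 1)) :=
    Tendsto.mul ((tendsto_pow_atTop (by omega)).inv_tendsto_atTop)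
      (stmt5_lim3'.comp (tendsto_pow_atTop (by omega)))
  rw [zero_mul] at h1
  refine h1.congr' ?_
  filter_upwards [eventually_gt_atTop 1] with t ht
  have ht0 : (0:ℝ) < t := by linarith
  have hsp : t^a = t^mn * t^(a-mn) := by rw [← pow_add]; congr 1; omega
  have hne : t^(a-mn) ≠ 0 := by positivity
  rw [hsp]
  field_simp

private theorem stmt5_key (S : Finset ℕ) (c : ℕ → ℝ) (hS : ∀ a ∈ S, 0 < a)
    (h : ∀ t : ℝ, 1 < t → ∑ a ∈ S, c a * ((t^a+1)/(t^a-1)) = 0) :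
    ∀ a ∈ S, c a = 0 := by
  induction S using Finset.strongInduction with
  | _ S ih =>
    rcases S.eq_empty_or_nonempty with rfl | hne
    · simp
    intro a ha
    set M := S.min' hne with hM
    have hMS : M ∈ S := S.min'_mem hne
    have hMpos : 0 < M := hS M hMS
    have stepA : ∑ a ∈ S, c a = 0 := by
      have hlim : Tendsto (fun t : ℝ => ∑ a ∈ S, c a * ((t^a+1)/(t^a-1))) atTop
          (𝓝 (∑ a ∈ S, c a)) := by
        have := tendsto_finset_sum S (fun a haS =>
          (tendsto_const_nhds.mul (stmt5_lim1 a (hS a haS)) :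
            Tendsto (fun t : ℝ => c a * ((t^a+1)/(t^a-1))) atTop (𝓝 (c a * 1))))
        simpa using this
      have hz : Tendsto (fun t : ℝ => ∑ a ∈ S, c a * ((t^a+1)/(t^a-1))) atTop (𝓝 0) := by
        refine tendsto_const_nhds.congr' ?_
        filter_upwards [eventually_gt_atTop 1] with t ht
        exact (h t ht).symm
      exact tendsto_nhds_unique hlim hz
    have hB : ∀ t : ℝ, 1 < t → ∑ a ∈ S, c a * (t^M/(t^a-1)) = 0 := by
      intro t ht
      have h1 : ∑ a ∈ S, c a * ((t^a+1)/(t^a-1)) - ∑ a ∈ S, c a = 0 := by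
        rw [h t ht, stepA]; ring
      rw [← Finset.sum_sub_distrib] at h1
      have h2 : ∀ a ∈ S, c a * ((t^a+1)/(t^a-1)) - c a = c a * (2/(t^a-1)) := by
        intro a haS
        have hgt : 1 < t^a := one_lt_pow₀ ht (hS a haS).ne'
        have : t^a - 1 ≠ 0 := by linarith
        field_simp
        ring
      rw [Finset.sum_congr rfl h2] at h1
      have h3 : (∑ a ∈ S, c a * (2/(t^a-1))) * (t^M/2) = 0 := by rw [h1]; ring
      rw [Finset.sum_mul] at h3
      rw [← h3]
      refine Finset.sum_congr rfl fun a haS => ?_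
      have hgt : 1 < t^a := one_lt_pow₀ ht (hS a haS).ne'
      have : t^a - 1 ≠ 0 := by linarith
      field_simp
    have hcM : c M = 0 := by
      have hlim : Tendsto (fun t : ℝ => ∑ a ∈ S, c a * (t^M/(t^a-1))) atTop (𝓝 (c M)) := by
        have h4 : ∀ a ∈ S, Tendsto (fun t : ℝ => c a * (t^M/(t^a-1))) atTop
            (𝓝 (if a = M then c M else 0)) := by
          intro a haS
          by_cases haM : a = M
          · rw [if_pos haM, haM]
            simpa using tendsto_const_nhds.mul (stmt5_lim3 M hMpos)
          · have hlt : M < a := lt_of_le_of_ne (S.min'_le a haS) (Ne.symm haM)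
            simp only [if_neg haM]
            simpa using tendsto_const_nhds.mul (stmt5_lim2 a M hlt)
        have := tendsto_finset_sum S h4
        rwa [Finset.sum_ite_eq' S M (fun _ => c M), if_pos hMS] at this
      have hz : Tendsto (fun t : ℝ => ∑ a ∈ S, c a * (t^M/(t^a-1))) atTop (𝓝 0) := by
        refine tendsto_const_nhds.congr' ?_
        filter_upwards [eventually_gt_atTop 1] with t ht
        exact (hB t ht).symm
      exact tendsto_nhds_unique hlim hz
    by_cases haM : a = M
    · rwa [haM]
    have hsub : S.erase M ⊂ S := Finset.erase_ssubset hMS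
    refine ih (S.erase M) hsub (fun x hx => hS x (Finset.mem_of_mem_erase hx)) ?_ a
      (Finset.mem_erase.mpr ⟨haM, ha⟩)
    intro t ht
    have := h t ht
    rw [← Finset.add_sum_erase S _ hMS, hcM, zero_mul, zero_add] at this
    exact this

/-- Classification for n = 1: if Σ ε_i (z^{b_i}+1)/(z^{b_i}-1) ≡ 0 then the weights
pair off via a fixed-point-free involution reversing signs. -/
theorem stmt_5 (k : ℕ) (m : ℕ) (hm : m = 2 * k) (b : Fin m → ℕ) (ε : Fin m → ℤ)
    (hb : ∀ i, 0 < b i) (hε : ∀ i, ε i = 1 ∨ ε i = -1)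
    (hzero : ∀ z : ℂ, z ≠ 0 → (∀ i, z ^ (b i) ≠ 1) →
      ∑ i, (ε i : ℂ) * ((z ^ (b i) + 1) / (z ^ (b i) - 1)) = 0) :
    ∃ σ : Equiv.Perm (Fin m), (∀ i, σ i ≠ i) ∧ (∀ i, σ (σ i) = i) ∧
      (∀ i, b (σ i) = b i) ∧ (∀ i, ε (σ i) = -ε i) := by
  classical
  -- Step 1: every fiber of b has signed sum zero
  have hc : ∀ a : ℕ, ∑ i ∈ Finset.univ.filter (fun i => b i = a), ε i = 0 := by
    set S : Finset ℕ := Finset.univ.image b with hSdef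
    set c : ℕ → ℝ := fun a => ∑ i ∈ Finset.univ.filter (fun i => b i = a), (ε i : ℝ) with hcdef
    have hreal : ∀ t : ℝ, 1 < t → ∑ a ∈ S, c a * ((t^a+1)/(t^a-1)) = 0 := by
      intro t ht
      have ht0 : (t:ℂ) ≠ 0 := by simp; linarith
      have htpow : ∀ i, (t:ℂ) ^ (b i) ≠ 1 := by
        intro i
        have : (1:ℝ) < t ^ (b i) := one_lt_pow₀ ht (hb i).ne'
        intro hcon
        have := congrArg Complex.re hcon
        simp [← Complex.ofReal_pow] at this
        linarith
      have hz := hzero t ht0 htpow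
      have hcast : ∑ i, (ε i : ℂ) * (((t:ℂ) ^ (b i) + 1) / ((t:ℂ) ^ (b i) - 1))
          = ((∑ i, (ε i : ℝ) * ((t ^ (b i) + 1) / (t ^ (b i) - 1)) : ℝ) : ℂ) := by
        push_cast
        rfl
      rw [hcast] at hz
      have hr : ∑ i, (ε i : ℝ) * ((t ^ (b i) + 1) / (t ^ (b i) - 1)) = 0 :=
        Complex.ofReal_eq_zero.mp hz
      rw [← hr]
      rw [← Finset.sum_fiberwise_of_maps_to (g := b)
        (fun i _ => Finset.mem_image_of_mem b (Finset.mem_univ i))]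
      refine Finset.sum_congr rfl fun a haS => ?_
      rw [hcdef, Finset.sum_mul]
      refine Finset.sum_congr rfl fun i hi => ?_
      rw [Finset.mem_filter] at hi
      rw [hi.2]
    have hSpos : ∀ a ∈ S, 0 < a := by
      intro a haS
      rw [hSdef] at haS
      obtain ⟨i, _, rfl⟩ := Finset.mem_image.mp haS
      exact hb i
    have hc0 := stmt5_key S c hSpos hreal
    intro a
    by_cases haS : a ∈ S
    · have h1 := hc0 a haS
      rw [hcdef] at h1
      simp only [] at h1
      exact_mod_cast h1
    · have : Finset.univ.filter (fun i => b i = a) = ∅ := by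
        rw [Finset.filter_eq_empty_iff]
        intro i _
        intro hcon
        exact haS (hcon ▸ Finset.mem_image_of_mem b (Finset.mem_univ i))
      simp [this]
  -- Step 2: build the involution
  set P : ℕ → Finset (Fin m) := fun a => Finset.univ.filter (fun i => b i = a ∧ ε i = 1) with hP
  set N : ℕ → Finset (Fin m) := fun a => Finset.univ.filter (fun i => b i = a ∧ ε i = -1) with hN
  have hcard : ∀ a, (P a).card = (N a).card := by
    intro a
    have hsplit : Finset.univ.filter (fun i => b i = a) = P a ∪ N a := by
      ext i
      simp only [hP, hN, Finset.mem_filter, Finset.mem_union, Finset.mem_univ, true_and]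
      rcases hε i with h | h <;> simp [h]
    have hdisj : Disjoint (P a) (N a) := by
      rw [Finset.disjoint_left]
      intro i hi hj
      simp only [hP, hN, Finset.mem_filter] at hi hj
      omega
    have hx := hc a
    rw [hsplit, Finset.sum_union hdisj] at hx
    have h1 : ∑ i ∈ P a, ε i = (P a).card := by
      rw [Finset.sum_congr rfl (fun i hi => by
        simp only [hP, Finset.mem_filter] at hi; exact hi.2.2)]
      simp
    have h2 : ∑ i ∈ N a, ε i = -(N a).card := by
      rw [Finset.sum_congr rfl (fun i hi => by
        simp only [hN, Finset.mem_filter] at hi; exact hi.2.2)]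
      simp
    rw [h1, h2] at hx
    exact_mod_cast by omega
  have e : ∀ a, {x // x ∈ P a} ≃ {x // x ∈ N a} := fun a => Finset.equivOfCardEq (hcard a)
  set fP : ℕ → Fin m → Fin m := fun a i =>
    if h : i ∈ P a then ((e a) ⟨i, h⟩ : Fin m) else i with hfP
  set fN : ℕ → Fin m → Fin m := fun a i =>
    if h : i ∈ N a then ((e a).symm ⟨i, h⟩ : Fin m) else i with hfN
  have hfP_mem : ∀ a i (h : i ∈ P a), fP a i ∈ N a := by
    intro a i h
    rw [hfP]; simp only [dif_pos h]
    exact ((e a) ⟨i, h⟩).2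
  have hfN_mem : ∀ a i (h : i ∈ N a), fN a i ∈ P a := by
    intro a i h
    rw [hfN]; simp only [dif_pos h]
    exact ((e a).symm ⟨i, h⟩).2
  have hNP : ∀ a i (h : i ∈ P a), fN a (fP a i) = i := by
    intro a i h
    have h2 := hfP_mem a i h
    rw [hfN]; simp only [dif_pos h2]
    have : (⟨fP a i, h2⟩ : {x // x ∈ N a}) = (e a) ⟨i, h⟩ := by
      apply Subtype.ext
      show fP a i = _
      rw [hfP]; simp only [dif_pos h]
    rw [this, Equiv.symm_apply_apply]
  have hPN : ∀ a i (h : i ∈ N a), fP a (fN a i) = i := by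
    intro a i h
    have h2 := hfN_mem a i h
    rw [hfP]; simp only [dif_pos h2]
    have : (⟨fN a i, h2⟩ : {x // x ∈ P a}) = (e a).symm ⟨i, h⟩ := by
      apply Subtype.ext
      show fN a i = _
      rw [hfN]; simp only [dif_pos h]
    rw [this, Equiv.apply_symm_apply]
  have hmemP : ∀ i, ε i = 1 → i ∈ P (b i) := by intro i h; simp [hP, h]
  have hmemN : ∀ i, ε i = -1 → i ∈ N (b i) := by intro i h; simp [hN, h]
  set f : Fin m → Fin m := fun i => if ε i = 1 then fP (b i) i else fN (b i) i with hf
  have hfb : ∀ i, b (f i) = b i ∧ ε (f i) = -ε i := by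
    intro i
    by_cases h : ε i = 1
    · have hmem := hfP_mem (b i) i (hmemP i h)
      simp only [hN, Finset.mem_filter] at hmem
      rw [hf]; simp only [if_pos h]
      exact ⟨hmem.2.1, by rw [hmem.2.2, h]⟩
    · have h' := (hε i).resolve_left h
      have hmem := hfN_mem (b i) i (hmemN i h')
      simp only [hP, Finset.mem_filter] at hmem
      rw [hf]; simp only [if_neg h]
      exact ⟨hmem.2.1, by rw [hmem.2.2, h']; ring⟩
  have hinv : ∀ i, f (f i) = i := by
    intro i
    obtain ⟨hb1, he1⟩ := hfb i
    by_cases h : ε i = 1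
    · have h2 : ε (f i) = -1 := by rw [he1, h]
      have h2' : ¬ (ε (f i) = 1) := by rw [h2]; decide
      have hfi : f i = fP (b i) i := by rw [hf]; simp only [if_pos h]
      nth_rewrite 1 [hf]
      beta_reduce
      rw [if_neg h2', hb1, hfi]
      exact hNP (b i) i (hmemP i h)
    · have h' := (hε i).resolve_left h
      have h2 : ε (f i) = 1 := by rw [he1, h']; ring
      have hfi : f i = fN (b i) i := by rw [hf]; simp only [if_neg h]
      nth_rewrite 1 [hf]
      beta_reduce
      rw [if_pos h2, hb1, hfi]
      exact hPN (b i) i (hmemN i h')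
  refine ⟨⟨f, f, hinv, hinv⟩, ?_, fun i => hinv i, fun i => (hfb i).1, fun i => (hfb i).2⟩
  intro i hcon
  have h3 := (hfb i).2
  simp only [Equiv.coe_fn_mk] at hcon
  rw [hcon] at h3
  rcases hε i with h | h <;> rw [h] at h3 <;> omega
end

section
/- Let b_1, …, b_m be positive integers with signs ε_i ∈ {1,-1}, and suppose Σ_{i=1}^m ε_i (z^{b_i} + 1)/(z^{b_i} − 1) is constant in z. Then m is even and the constant is 0. -/
lemma stmt_6_pow_ne_one (N : ℕ) (hN : 2 ≤ N) (k : ℕ) (hk : 0 < k) : ((N : ℂ)) ^ k ≠ 1 := by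
  intro h
  have h2 : ((N ^ k : ℕ) : ℂ) = ((1 : ℕ) : ℂ) := by push_cast; simpa using h
  have h3 : N ^ k = 1 := Nat.cast_injective h2
  have h4 : 2 ≤ N ^ k := le_trans hN (Nat.le_self_pow hk.ne' N)
  omega

/-- If Σ ε_i (z^{b_i}+1)/(z^{b_i}-1) is constant (b_i > 0), then m is even
and the constant is 0. -/
theorem stmt_6 (m : ℕ) (b : Fin m → ℕ) (ε : Fin m → ℤ) (c : ℂ)
    (hb : ∀ i, 0 < b i) (hε : ∀ i, ε i = 1 ∨ ε i = -1)
    (hconst : ∀ z : ℂ, z ≠ 0 → (∀ i, z ^ (b i) ≠ 1) →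
      ∑ i, (ε i : ℂ) * ((z ^ (b i) + 1) / (z ^ (b i) - 1)) = c) :
    Even m ∧ c = 0 := by
  -- key inversion identity
  have key : ∀ w : ℂ, w ≠ 0 → w ≠ 1 → (w⁻¹ + 1) / (w⁻¹ - 1) = -((w + 1) / (w - 1)) := by
    intro w hw hw1
    have h1 : w - 1 ≠ 0 := sub_ne_zero.mpr hw1
    have h2 : w⁻¹ - 1 ≠ 0 := sub_ne_zero.mpr (by simpa [inv_eq_one] using hw1)
    rw [← neg_div, div_eq_div_iff h2 h1]
    field_simp
    ring
  -- c = 0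
  have h2ne : ∀ i, (2 : ℂ) ^ (b i) ≠ 1 := fun i => stmt_6_pow_ne_one 2 le_rfl _ (hb i)
  have hc2 := hconst 2 two_ne_zero h2ne
  have hcinv := hconst 2⁻¹ (inv_ne_zero two_ne_zero) (by
    intro i
    rw [inv_pow]
    simpa [inv_eq_one] using h2ne i)
  have heq : ∑ i, (ε i : ℂ) * (((2:ℂ)⁻¹ ^ (b i) + 1) / ((2:ℂ)⁻¹ ^ (b i) - 1))
      = -∑ i, (ε i : ℂ) * (((2:ℂ) ^ (b i) + 1) / ((2:ℂ) ^ (b i) - 1)) := by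
    rw [← Finset.sum_neg_distrib]
    apply Finset.sum_congr rfl
    intro i _
    rw [inv_pow, key _ (pow_ne_zero _ two_ne_zero) (h2ne i)]
    ring
  have hc0 : c = 0 := by
    have h : c = -c := by
      calc c = ∑ i, (ε i : ℂ) * (((2:ℂ)⁻¹ ^ (b i) + 1) / ((2:ℂ)⁻¹ ^ (b i) - 1)) := hcinv.symm
        _ = -∑ i, (ε i : ℂ) * (((2:ℂ) ^ (b i) + 1) / ((2:ℂ) ^ (b i) - 1)) := heq
        _ = -c := by rw [hc2]
    exact add_self_eq_zero.mp (by linear_combination h)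
  refine ⟨?_, hc0⟩
  -- show ∑ ε = 0 by evaluating at a large integer
  set N : ℕ := 2 * m + 3 with hNdef
  have hN2 : 2 ≤ N := by omega
  have hz0 : (N : ℂ) ≠ 0 := Nat.cast_ne_zero.mpr (by omega)
  have hzpow : ∀ i, (N : ℂ) ^ (b i) ≠ 1 := fun i => stmt_6_pow_ne_one N hN2 _ (hb i)
  have hsum := hconst N hz0 hzpow
  rw [hc0] at hsum
  have hden : ∀ i, ((N : ℂ) ^ (b i) - 1) ≠ 0 := fun i => sub_ne_zero.mpr (hzpow i)
  have hsplit : ∀ i : Fin m, (ε i : ℂ) * (((N:ℂ) ^ (b i) + 1) / ((N:ℂ) ^ (b i) - 1))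
      = (ε i : ℂ) + (ε i : ℂ) * (2 / ((N:ℂ) ^ (b i) - 1)) := by
    intro i
    field_simp [hden i]
    ring
  have hS : ((∑ i, ε i : ℤ) : ℂ) = -∑ i, (ε i : ℂ) * (2 / ((N:ℂ) ^ (b i) - 1)) := by
    rw [Int.cast_sum]
    simp only [hsplit, Finset.sum_add_distrib] at hsum
    linear_combination hsum
  have hNpow : ∀ i, (2 * (m:ℝ) + 2) ≤ (N : ℝ) ^ (b i) - 1 := by
    intro i
    have h1 : (N : ℝ) ≤ (N : ℝ) ^ (b i) :=
      le_self_pow₀ (by exact_mod_cast hN2.trans' (by norm_num)) (hb i).ne'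
    have h2 : (2 * (m:ℝ) + 3) = (N : ℝ) := by rw [hNdef]; push_cast; ring
    linarith
  have habs : ∀ i : Fin m, ‖((ε i : ℂ) * (2 / ((N:ℂ) ^ (b i) - 1)))‖
      ≤ 2 / (2 * (m:ℝ) + 2) := by
    intro i
    have h1 : ‖((ε i : ℂ))‖ = 1 := by rcases hε i with h | h <;> simp [h]
    have h2 : (N:ℂ) ^ (b i) - 1 = ((((N:ℝ) ^ (b i) - 1 : ℝ)) : ℂ) := by push_cast; ring
    have h3 := hNpow i
    have hm0 : (0:ℝ) ≤ (m:ℝ) := Nat.cast_nonneg m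
    have hpos : (0:ℝ) < (N : ℝ) ^ (b i) - 1 := by linarith
    rw [norm_mul, h1, one_mul, norm_div, h2, Complex.norm_real, Real.norm_eq_abs,
      abs_of_pos hpos]
    have : ‖(2:ℂ)‖ = 2 := by norm_num
    rw [this]
    apply div_le_div_of_nonneg_left (by norm_num) (by linarith) h3
  have hbound : ‖((∑ i, ε i : ℤ) : ℂ)‖ < 1 := by
    rw [hS, norm_neg]
    calc ‖(∑ i, (ε i : ℂ) * (2 / ((N:ℂ) ^ (b i) - 1)))‖
        ≤ ∑ i, ‖((ε i : ℂ) * (2 / ((N:ℂ) ^ (b i) - 1)))‖ :=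
          norm_sum_le _ _
      _ ≤ ∑ _i : Fin m, 2 / (2 * (m:ℝ) + 2) := Finset.sum_le_sum (fun i _ => habs i)
      _ = m * (2 / (2 * (m:ℝ) + 2)) := by rw [Finset.sum_const]; simp [mul_comm]
      _ < 1 := by
          have hm0 : (0:ℝ) ≤ (m:ℝ) := Nat.cast_nonneg m
          rw [← mul_div_assoc, div_lt_one (by linarith)]
          linarith
  have hSzero : (∑ i, ε i) = 0 := by
    have h1 : |((∑ i, ε i : ℤ) : ℝ)| < 1 := by
      rwa [← Complex.norm_intCast]
    have h2 : |(∑ i, ε i : ℤ)| < 1 := by exact_mod_cast h1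
    rcases abs_lt.mp h2 with ⟨ha, hb'⟩
    omega
  -- parity
  have heven : Even (∑ i, (ε i - 1)) := by
    apply Finset.even_sum
    intro i _
    rcases hε i with h | h <;> simp [h]
  rw [Finset.sum_sub_distrib, hSzero] at heven
  have hnm : Even (-(m:ℤ)) := by simpa using heven
  have hmz : Even ((m:ℤ)) := by simpa using hnm.neg
  exact Int.even_coe_nat m |>.mp hmz
end

section
/- Let b_1, …, b_m be positive integers with signs ε_i ∈ {1,-1} and suppose Σ_{i=1}^m ε_i (z^{b_i} + 1)/(z^{b_i} − 1) = 0 identically, with b_m = max_i b_i. Then there exists an index l ≠ m with b_l = b_m and ε_l = −ε_m. -/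
open Finset Filter Topology

/-- If Σ ε_i (z^{b_i}+1)/(z^{b_i}-1) ≡ 0 and b_m is maximal, some other index
carries the same power with opposite sign. -/
theorem stmt_7 (m : ℕ) (b : Fin (m + 1) → ℕ) (ε : Fin (m + 1) → ℤ)
    (hb : ∀ i, 0 < b i) (hε : ∀ i, ε i = 1 ∨ ε i = -1)
    (hmax : ∀ i, b i ≤ b (Fin.last m))
    (hzero : ∀ z : ℂ, z ≠ 0 → (∀ i, z ^ (b i) ≠ 1) →
      ∑ i, (ε i : ℂ) * ((z ^ (b i) + 1) / (z ^ (b i) - 1)) = 0) :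
    ∃ l : Fin (m + 1), l ≠ Fin.last m ∧ b l = b (Fin.last m) ∧ ε l = -ε (Fin.last m) := by
  set M := Fin.last m with hM
  set B := b M with hBdef
  have hB : 0 < B := hb M
  set S : Finset (Fin (m+1)) := univ.filter (fun i => b i = B) with hS
  have hprim : IsPrimitiveRoot (Complex.exp (2 * Real.pi * Complex.I / B)) B :=
    Complex.isPrimitiveRoot_exp B hB.ne'
  set ζ : ℂ := Complex.exp (2 * Real.pi * Complex.I / B) with hζdef
  have hζB : ζ ^ B = 1 := hprim.pow_eq_one
  have habs : ‖ζ‖ = 1 :=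
    Complex.norm_eq_one_of_pow_eq_one hζB hB.ne'
  have hne : ∀ i, i ∉ S → ζ ^ (b i) ≠ 1 := by
    intro i hi
    simp only [hS, Finset.mem_filter, Finset.mem_univ, true_and] at hi
    exact hprim.pow_ne_one_of_pos_of_lt (hb i).ne' (lt_of_le_of_ne (hmax i) hi)
  set C : ℂ := ∑ i ∈ S, (ε i : ℂ) with hC
  set G : ℂ → ℂ := fun z => C * (z ^ B + 1) +
    ∑ i ∈ Sᶜ, (ε i : ℂ) * ((z ^ (b i) + 1) * (z ^ B - 1) / (z ^ (b i) - 1)) with hG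
  have hGA : ∀ z : ℂ, (∀ i, z ^ (b i) ≠ 1) →
      G z = (z ^ B - 1) * ∑ i, (ε i : ℂ) * ((z ^ (b i) + 1) / (z ^ (b i) - 1)) := by
    intro z hz
    simp only [hG]
    rw [Finset.mul_sum, ← Finset.sum_add_sum_compl S]
    congr 1
    · rw [hC, Finset.sum_mul]
      apply Finset.sum_congr rfl
      intro i hi
      simp only [hS, Finset.mem_filter, Finset.mem_univ, true_and] at hi
      rw [hi]
      have hzB : z ^ B ≠ 1 := hi ▸ hz i
      field_simp
    · apply Finset.sum_congr rfl
      intro i hi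
      have hzi : z ^ (b i) - 1 ≠ 0 := sub_ne_zero.mpr (hz i)
      field_simp
  -- the approximating sequence
  set zseq : ℕ → ℂ := fun n => ((1 + 1/(n+1) : ℝ) : ℂ) * ζ with hzseq
  have habsz : ∀ n : ℕ, ‖zseq n‖ = 1 + 1/(n+1 : ℝ) := by
    intro n
    have hpos : (0:ℝ) < 1 + 1/(n+1) := by positivity
    rw [hzseq]
    rw [norm_mul, habs, mul_one, Complex.norm_real, Real.norm_eq_abs, abs_of_pos hpos]
  have hgt : ∀ n, 1 < ‖zseq n‖ := by
    intro n
    rw [habsz]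
    have : (0:ℝ) < 1/(n+1) := by positivity
    linarith
  have hne1 : ∀ n i, zseq n ^ b i ≠ 1 := by
    intro n i h
    have h1 := congrArg (‖·‖) h
    rw [norm_pow, norm_one] at h1
    have h2 : 1 < ‖zseq n‖ ^ b i := one_lt_pow₀ (hgt n) (hb i).ne'
    linarith
  have hne0 : ∀ n, zseq n ≠ 0 := by
    intro n h
    have := hgt n
    rw [h, norm_zero] at this
    linarith
  have hGz : ∀ n, G (zseq n) = 0 := by
    intro n
    rw [hGA _ (hne1 n), hzero _ (hne0 n) (hne1 n), mul_zero]
  have htz : Tendsto zseq atTop (𝓝 ζ) := by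
    have h0 : Tendsto (fun n:ℕ => (1/(n+1):ℝ)) atTop (𝓝 0) :=
      tendsto_one_div_add_atTop_nhds_zero_nat
    have h1 : Tendsto (fun n:ℕ => (1 + 1/(n+1):ℝ)) atTop (𝓝 1) := by
      simpa using tendsto_const_nhds.add h0
    have h2 : Tendsto (fun n:ℕ => ((1 + 1/(n+1):ℝ):ℂ)) atTop (𝓝 1) := by
      have := (Complex.continuous_ofReal.tendsto 1).comp h1
      simpa [Function.comp_def] using this
    simpa [hzseq] using h2.mul (tendsto_const_nhds (x := ζ))
  have hcont : ContinuousAt G ζ := by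
    rw [hG]
    apply ContinuousAt.add
    · fun_prop
    · exact tendsto_finset_sum _ fun i hi =>
        continuousAt_const.mul (ContinuousAt.div (by fun_prop) (by fun_prop)
          (sub_ne_zero.mpr (hne i (Finset.mem_compl.mp hi))))
  have hGζ : G ζ = 0 := by
    have ht1 : Tendsto (fun n => G (zseq n)) atTop (𝓝 (G ζ)) := hcont.tendsto.comp htz
    have ht2 : Tendsto (fun n => G (zseq n)) atTop (𝓝 0) := by
      simpa [hGz] using (tendsto_const_nhds : Tendsto (fun _ : ℕ => (0:ℂ)) atTop (𝓝 0))
    exact tendsto_nhds_unique ht1 ht2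
  have hC0 : C = 0 := by
    have h2 : C * (ζ ^ B + 1) +
        ∑ i ∈ Sᶜ, (ε i : ℂ) * ((ζ ^ (b i) + 1) * (ζ ^ B - 1) / (ζ ^ (b i) - 1)) = 0 := by
      simpa [hG] using hGζ
    have hs : ∑ i ∈ Sᶜ, (ε i : ℂ) * ((ζ ^ (b i) + 1) * (ζ ^ B - 1) / (ζ ^ (b i) - 1)) = 0 := by
      apply Finset.sum_eq_zero
      intro i _
      rw [hζB, sub_self, mul_zero, zero_div, mul_zero]
    rw [hs, add_zero, hζB] at h2
    have h3 : C * 2 = 0 := by rw [← h2]; ring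
    have := mul_eq_zero.mp h3
    simpa using this
  have hCZ : ∑ i ∈ S, ε i = 0 := by
    have : ((∑ i ∈ S, ε i : ℤ) : ℂ) = 0 := by push_cast; exact hC0
    exact_mod_cast this
  have hMS : M ∈ S := by simp [hS, hBdef]
  by_contra hcon
  push_neg at hcon
  have hall : ∀ l ∈ S, ε l = ε M := by
    intro l hl
    simp only [hS, Finset.mem_filter, Finset.mem_univ, true_and] at hl
    by_cases h : l = M
    · rw [h]
    · have hne' := hcon l h hl
      rcases hε l with h1 | h1 <;> rcases hε M with h2 | h2 <;> omega
  have hsum : ∑ i ∈ S, ε i = S.card * ε M := by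
    rw [Finset.sum_congr rfl hall, Finset.sum_const, nsmul_eq_mul]
  have hcard : 0 < S.card := Finset.card_pos.mpr ⟨M, hMS⟩
  rw [hCZ] at hsum
  have hεM : ε M ≠ 0 := by rcases hε M with h | h <;> simp [h]
  rcases mul_eq_zero.mp hsum.symm with h | h
  · have hS0 : S.card = 0 := by exact_mod_cast h
    omega
  · exact hεM h
end

section
/- Let a_1, a_2, b_1, b_2, c_1, c_2 be positive integers satisfying, for all complex z in the common domain, the identity (z^{a_1}+1)(z^{a_2}+1)/((z^{a_1}−1)(z^{a_2}−1)) + (z^{b_1}+1)(z^{b_2}+1)/((z^{b_1}−1)(z^{b_2}−1)) = (z^{c_1}+1)(z^{c_2}+1)/((z^{c_1}−1)(z^{c_2}−1)) + 1. Then, after possibly swapping within the pairs, a_2 = b_2 = a_1 + b_1 and {c_1, c_2} = {a_1, b_1} (so the set of weights is quasilinear). -/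
set_option maxHeartbeats 1000000

open Polynomial

/-- factor `X^i + e * X^j` encoded as `(i, j, e)` -/
noncomputable def facQL (t : ℕ × ℕ × ℤ) : Polynomial ℂ :=
  X ^ t.1 + Polynomial.C (t.2.2 : ℂ) * X ^ t.2.1

noncomputable def ppQL (L : List (ℕ × ℕ × ℤ)) : Polynomial ℂ := (L.map facQL).prod

def cfQL : List (ℕ × ℕ × ℤ) → ℕ → ℤ
  | [], n => if n = 0 then 1 else 0
  | t :: L, n =>
      (if t.1 ≤ n then cfQL L (n - t.1) else 0)
      + t.2.2 * (if t.2.1 ≤ n then cfQL L (n - t.2.1) else 0)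

theorem cfQL_spec (L : List (ℕ × ℕ × ℤ)) (n : ℕ) :
    (ppQL L).coeff n = (cfQL L n : ℂ) := by
  induction L generalizing n with
  | nil => by_cases h : n = 0 <;> simp [ppQL, cfQL, Polynomial.coeff_one, h]
  | cons t L ih =>
      rw [ppQL, List.map_cons, List.prod_cons]
      show ((X ^ t.1 + Polynomial.C (t.2.2 : ℂ) * X ^ t.2.1) * ppQL L).coeff n = _
      rw [add_mul, Polynomial.coeff_add, cfQL]
      rw [show (X ^ t.1 * ppQL L) = ppQL L * X ^ t.1 by ring,
        Polynomial.coeff_mul_X_pow',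
        mul_assoc, show (X ^ t.2.1 * ppQL L) = ppQL L * X ^ t.2.1 by ring,
        Polynomial.coeff_C_mul, Polynomial.coeff_mul_X_pow']
      push_cast
      split <;> split <;> simp [ih]

lemma coeffEqQL (L1 L2 L3 : List (ℕ × ℕ × ℤ)) (h : ppQL L1 + ppQL L2 = ppQL L3) (n : ℕ) :
    cfQL L1 n + cfQL L2 n = cfQL L3 n := by
  have h2 := congrArg (fun p => Polynomial.coeff p n) h
  simp only [Polynomial.coeff_add, cfQL_spec] at h2
  exact_mod_cast h2

lemma coeffZeroQL (L : List (ℕ × ℕ × ℤ)) (h : ppQL L = 0) (n : ℕ) : cfQL L n = 0 := by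
  have h2 := congrArg (fun p => Polynomial.coeff p n) h
  simp only [Polynomial.coeff_zero, cfQL_spec] at h2
  exact_mod_cast h2

lemma XpowSubOneNeZeroQL (k : ℕ) (hk : 0 < k) : ((X : ℂ[X]) ^ k - 1) ≠ 0 := by
  simpa using Polynomial.X_pow_sub_C_ne_zero hk (1 : ℂ)

lemma finpowQL (k : ℕ) (hk : 0 < k) : Set.Finite {z : ℂ | z ^ k = 1} := by
  have h : {z : ℂ | z ^ k = 1} = {z : ℂ | IsRoot (X ^ k - C 1) z} := by
    ext z; simp [IsRoot, sub_eq_zero]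
  rw [h]
  exact Polynomial.finite_setOf_isRoot (X_pow_sub_C_ne_zero hk 1)

lemma getRQL (a A b B c C : ℕ) (ha : 0 < a) (hb : 0 < b) (hc : 0 < c)
    (hA : 0 < A) (hB : 0 < B) (hC : 0 < C)
    (heq : ∀ z : ℂ, z ≠ 0 → z ^ a ≠ 1 → z ^ A ≠ 1 → z ^ b ≠ 1 → z ^ B ≠ 1 →
      z ^ c ≠ 1 → z ^ C ≠ 1 →
      (z ^ a + 1) * (z ^ A + 1) / ((z ^ a - 1) * (z ^ A - 1))
        + (z ^ b + 1) * (z ^ B + 1) / ((z ^ b - 1) * (z ^ B - 1))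
      = (z ^ c + 1) * (z ^ C + 1) / ((z ^ c - 1) * (z ^ C - 1)) + 1) :
    ((X:ℂ[X]) ^ c - 1) * ((X ^ C - 1) *
      ((X ^ A + X ^ a) * ((X ^ b - 1) * (X ^ B - 1)) +
       (X ^ B + X ^ b) * ((X ^ a - 1) * (X ^ A - 1))))
    = (X ^ C + X ^ c) * ((X ^ a - 1) * ((X ^ A - 1) * ((X ^ b - 1) * (X ^ B - 1)))) := by
  set P : ℂ[X] := ((X:ℂ[X]) ^ c - 1) * ((X ^ C - 1) *
      ((X ^ A + X ^ a) * ((X ^ b - 1) * (X ^ B - 1)) +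
       (X ^ B + X ^ b) * ((X ^ a - 1) * (X ^ A - 1))))
    - (X ^ C + X ^ c) * ((X ^ a - 1) * ((X ^ A - 1) * ((X ^ b - 1) * (X ^ B - 1)))) with hP
  have hz : P = 0 := by
    apply Polynomial.eq_zero_of_infinite_isRoot
    have hsub : {z : ℂ | z ≠ 0 ∧ z ^ a ≠ 1 ∧ z ^ A ≠ 1 ∧ z ^ b ≠ 1 ∧ z ^ B ≠ 1 ∧
        z ^ c ≠ 1 ∧ z ^ C ≠ 1} ⊆ {x | P.IsRoot x} := by
      rintro z ⟨h0, h1, h2, h3, h4, h5, h6⟩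
      have e1 : z ^ a - 1 ≠ 0 := sub_ne_zero.mpr h1
      have e2 : z ^ A - 1 ≠ 0 := sub_ne_zero.mpr h2
      have e3 : z ^ b - 1 ≠ 0 := sub_ne_zero.mpr h3
      have e4 : z ^ B - 1 ≠ 0 := sub_ne_zero.mpr h4
      have e5 : z ^ c - 1 ≠ 0 := sub_ne_zero.mpr h5
      have e6 : z ^ C - 1 ≠ 0 := sub_ne_zero.mpr h6
      have h := heq z h0 h1 h2 h3 h4 h5 h6
      field_simp at h
      show P.eval z = 0
      rw [hP]
      simp only [eval_sub, eval_mul, eval_add, eval_pow, eval_X, eval_one]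
      linear_combination h / 2
    apply Set.Infinite.mono hsub
    have hfin : Set.Finite ({z : ℂ | z ≠ 0 ∧ z ^ a ≠ 1 ∧ z ^ A ≠ 1 ∧ z ^ b ≠ 1 ∧ z ^ B ≠ 1 ∧
        z ^ c ≠ 1 ∧ z ^ C ≠ 1}ᶜ) := by
      apply Set.Finite.subset (Set.Finite.union (Set.finite_singleton (0:ℂ))
        ((((((finpowQL a ha).union (finpowQL A hA)).union (finpowQL b hb)).union
          (finpowQL B hB)).union (finpowQL c hc)).union (finpowQL C hC)))
      intro z hz
      simp only [Set.mem_compl_iff, Set.mem_setOf_eq, not_and_or, not_not] at hz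
      simp only [Set.mem_union, Set.mem_singleton_iff, Set.mem_setOf_eq]
      tauto
    simpa using hfin.infinite_compl
  exact sub_eq_zero.mp (hP.symm.trans hz)

lemma mainQL (a b A B c C : ℕ) (ha : 0 < a) (hb : 0 < b) (hc : 0 < c)
    (haA : a ≤ A) (hbB : b ≤ B) (hcC : c ≤ C) (hab : a ≤ b)
    (hR : ((X:ℂ[X]) ^ c - 1) * ((X ^ C - 1) *
      ((X ^ A + X ^ a) * ((X ^ b - 1) * (X ^ B - 1)) +
       (X ^ B + X ^ b) * ((X ^ a - 1) * (X ^ A - 1))))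
    = (X ^ C + X ^ c) * ((X ^ a - 1) * ((X ^ A - 1) * ((X ^ b - 1) * (X ^ B - 1))))) :
    A = B ∧ A = a + b ∧ c = a ∧ C = b := by
  -- pp form of hR
  have hpp : ppQL [(c,0,-1),(C,0,-1),(A,a,1),(b,0,-1),(B,0,-1)]
      + ppQL [(c,0,-1),(C,0,-1),(B,b,1),(a,0,-1),(A,0,-1)]
      = ppQL [(C,c,1),(a,0,-1),(A,0,-1),(b,0,-1),(B,0,-1)] := by
    simp only [ppQL, facQL, List.map_cons, List.map_nil, List.prod_cons, List.prod_nil,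
      Int.cast_one, Int.cast_neg, map_one, map_neg]
    linear_combination hR
  have hcoe := coeffEqQL _ _ _ hpp
  -- Step 1: c = a
  have hca : c = a := by
    rcases lt_trichotomy c a with h | h | h
    · exfalso
      have hh := hcoe c
      simp only [cfQL,
        (show c - C = 0 by omega),
        (show ¬ (A ≤ c) by omega), (show ¬ (a ≤ 0) by omega), (show ¬ (b ≤ 0) by omega),
        (show ¬ (B ≤ 0) by omega), (show ¬ (A ≤ 0) by omega), (show ¬ (C ≤ 0) by omega),
        (show ¬ (c ≤ 0) by omega), (show ¬ (b ≤ c) by omega), (show ¬ (B ≤ c) by omega),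
        (show ¬ (a ≤ c) by omega),
        le_refl, Nat.zero_le, Nat.sub_self, Nat.sub_zero, Nat.zero_sub, Nat.le_zero,
        if_true, if_false, ite_true, ite_false] at hh
      split_ifs at hh <;> omega
    · exact h
    · exfalso
      have hh := hcoe a
      simp only [cfQL,
        (show a - c = 0 by omega), (show a - C = 0 by omega),
        (show a - b = 0 by omega), (show a - A = 0 by omega), (show a - B = 0 by omega),
        (show ¬ (c ≤ a) by omega), (show ¬ (C ≤ a) by omega),
        (show ¬ (a ≤ 0) by omega), (show ¬ (b ≤ 0) by omega),
        (show ¬ (B ≤ 0) by omega), (show ¬ (A ≤ 0) by omega), (show ¬ (C ≤ 0) by omega),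
        (show ¬ (c ≤ 0) by omega),
        le_refl, Nat.zero_le, Nat.sub_self, Nat.sub_zero, Nat.zero_sub, Nat.le_zero,
        if_true, if_false, ite_true, ite_false] at hh
      split_ifs at hh <;> omega
  subst hca
  -- cancel (X^c - 1) to get the reduced identity hSS
  have hSS : ((X:ℂ[X]) ^ C - 1) *
      ((X ^ A + X ^ c) * ((X ^ b - 1) * (X ^ B - 1)) +
       (X ^ B + X ^ b) * ((X ^ c - 1) * (X ^ A - 1)))
      = (X ^ C + X ^ c) * ((X ^ A - 1) * ((X ^ b - 1) * (X ^ B - 1))) := by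
    apply mul_left_cancel₀ (XpowSubOneNeZeroQL c hc)
    linear_combination hR
  have hppSS : ppQL [(C,0,-1),(A,c,1),(b,0,-1),(B,0,-1)]
      + ppQL [(C,0,-1),(B,b,1),(c,0,-1),(A,0,-1)]
      = ppQL [(C,c,1),(A,0,-1),(b,0,-1),(B,0,-1)] := by
    simp only [ppQL, facQL, List.map_cons, List.map_nil, List.prod_cons, List.prod_nil,
      Int.cast_one, Int.cast_neg, map_one, map_neg]
    linear_combination hSS
  have hcoeSS := coeffEqQL _ _ _ hppSS
  -- I3: ¬ (C < b ∧ C < A)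
  have hI3 : b ≤ C ∨ A ≤ C := by
    by_contra hcon
    push_neg at hcon
    obtain ⟨h1, h2⟩ := hcon
    have hh := hcoeSS C
    simp only [cfQL,
      (show ¬ (A ≤ C) by omega), (show ¬ (b ≤ C) by omega), (show ¬ (B ≤ C) by omega),
      (show ¬ (b ≤ C - c) by omega), (show ¬ (B ≤ C - c) by omega),
      (show ¬ (A ≤ C - c) by omega), (show c ≤ C by omega),
      (show ¬ (c ≤ 0) by omega), (show ¬ (A ≤ 0) by omega), (show ¬ (b ≤ 0) by omega),
      (show ¬ (B ≤ 0) by omega), (show ¬ (C ≤ 0) by omega),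
      le_refl, Nat.zero_le, Nat.sub_self, Nat.sub_zero, Nat.zero_sub, Nat.le_zero,
      if_true, if_false, ite_true, ite_false] at hh
    split_ifs at hh <;> omega
  -- I4: b ≤ A
  have hbA : b ≤ A := by
    by_contra hcon
    push_neg at hcon
    -- first derive C = A from the coefficient at A
    have hCA : C = A := by
      have hh := hcoeSS A
      simp only [cfQL,
        (show A - B = 0 by omega),
        (show ¬ (A ≤ A - C) by omega), (show ¬ (b ≤ A - C - c) by omega),
        (show ¬ (B ≤ A - C - c) by omega), (show ¬ (b ≤ A) by omega),
        (show ¬ (B ≤ A) by omega), (show ¬ (b ≤ A - c) by omega),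
        (show ¬ (B ≤ A - c) by omega), (show ¬ (A ≤ A - c) by omega),
        (show ¬ (b ≤ A - C) by omega), (show ¬ (B ≤ A - C) by omega),
        (show c ≤ A by omega),
        (show ¬ (c ≤ 0) by omega), (show ¬ (A ≤ 0) by omega), (show ¬ (b ≤ 0) by omega),
        (show ¬ (B ≤ 0) by omega), (show ¬ (C ≤ 0) by omega),
        le_refl, Nat.zero_le, Nat.sub_self, Nat.sub_zero, Nat.zero_sub, Nat.le_zero,
        if_true, if_false, ite_true, ite_false] at hh
      rcases hI3 with h' | h' <;> (split_ifs at hh <;> omega)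
    rw [hCA] at hSS
    -- cancel (X^A - 1) and get contradiction
    have hz : ((X:ℂ[X]) ^ B + X ^ b) * ((X ^ c - 1) * (X ^ A - 1)) = 0 := by
      have hcan : ((X:ℂ[X]) ^ A - 1) *
          ((X ^ A + X ^ c) * ((X ^ b - 1) * (X ^ B - 1)) +
           (X ^ B + X ^ b) * ((X ^ c - 1) * (X ^ A - 1)))
          = ((X:ℂ[X]) ^ A - 1) * ((X ^ A + X ^ c) * ((X ^ b - 1) * (X ^ B - 1))) := by
        linear_combination hSS
      have hcan2 := mul_left_cancel₀ (XpowSubOneNeZeroQL A (by omega)) hcan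
      linear_combination hcan2
    have hzz : ppQL [(B,b,1),(c,0,-1),(A,0,-1)] = 0 := by
      simp only [ppQL, facQL, List.map_cons, List.map_nil, List.prod_cons, List.prod_nil,
        Int.cast_one, Int.cast_neg, map_one, map_neg]
      linear_combination hz
    have hh := coeffZeroQL _ hzz b
    simp only [cfQL,
      (show b - B = 0 by omega),
      (show ¬ (c ≤ 0) by omega), (show ¬ (A ≤ 0) by omega),
      le_refl, Nat.zero_le, Nat.sub_self, Nat.sub_zero, Nat.zero_sub, Nat.le_zero,
      if_true, if_false, ite_true, ite_false] at hh
    split_ifs at hh <;> omega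
  have hbC : b ≤ C := by rcases hI3 with h | h <;> omega
  -- I5: C = b ∧ b < A ∧ b < B
  have hI5 : C = b ∧ b < A ∧ b < B := by
    have hh := hcoeSS b
    simp only [cfQL,
      (show b - C = 0 by omega), (show b - B = 0 by omega), (show b - A = 0 by omega),
      (show ¬ (b ≤ b - c) by omega),
      (show ¬ (B ≤ b - c) by omega), (show ¬ (A ≤ b - c) by omega),
      (show c ≤ b by omega),
      (show ¬ (c ≤ 0) by omega), (show ¬ (A ≤ 0) by omega), (show ¬ (b ≤ 0) by omega),
      (show ¬ (B ≤ 0) by omega), (show ¬ (C ≤ 0) by omega),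
      le_refl, Nat.zero_le, Nat.sub_self, Nat.sub_zero, Nat.zero_sub, Nat.le_zero,
      if_true, if_false, ite_true, ite_false] at hh
    split_ifs at hh <;> omega
  obtain ⟨hCb, hbA', hbB'⟩ := hI5
  rw [hCb] at hSS
  -- cancel (X^C - 1) = (X^b - 1) to get star identity
  have hstar : ((X:ℂ[X]) ^ A + X ^ c) * ((X ^ b - 1) * (X ^ B - 1)) +
       (X ^ B + X ^ b) * ((X ^ c - 1) * (X ^ A - 1))
      = (X ^ b + X ^ c) * ((X ^ A - 1) * (X ^ B - 1)) := by
    apply mul_left_cancel₀ (XpowSubOneNeZeroQL b hb)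
    linear_combination hSS
  have hppst : ppQL [(A,c,1),(b,0,-1),(B,0,-1)]
      + ppQL [(B,b,1),(c,0,-1),(A,0,-1)]
      = ppQL [(b,c,1),(A,0,-1),(B,0,-1)] := by
    simp only [ppQL, facQL, List.map_cons, List.map_nil, List.prod_cons, List.prod_nil,
      Int.cast_one, Int.cast_neg, map_one, map_neg]
    linear_combination hstar
  have hcoest := coeffEqQL _ _ _ hppst
  -- I6: A = c + b ∧ B = c + b
  have hI6 : A = c + b ∧ B = c + b := by
    have hh := hcoest (c + b)
    simp only [cfQL,
      (show c + b - c = b by omega), (show c + b - b = c by omega),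
      (show ¬ (b ≤ c + b - A) by omega), (show ¬ (B ≤ c + b - A) by omega),
      (show ¬ (c ≤ c + b - B) by omega), (show ¬ (A ≤ c + b - B) by omega),
      (show ¬ (B ≤ b) by omega), (show ¬ (A ≤ c) by omega), (show ¬ (A ≤ b) by omega),
      (show ¬ (B ≤ c) by omega), (show ¬ (b ≤ c + b - A) by omega),
      (show c ≤ c + b by omega), (show b ≤ c + b by omega),
      (show ¬ (c ≤ 0) by omega), (show ¬ (A ≤ 0) by omega), (show ¬ (b ≤ 0) by omega),
      (show ¬ (B ≤ 0) by omega), hb.ne', hc.ne', ha.ne',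
      le_refl, Nat.zero_le, Nat.sub_self, Nat.sub_zero, Nat.zero_sub, Nat.le_zero,
      if_true, if_false, ite_true, ite_false] at hh
    split_ifs at hh <;> omega
  exact ⟨by omega, by omega, rfl, by omega⟩

/-- Theorem 2.3: L-rigid sets with m = 3, n = 2 are quasilinear. -/
theorem stmt_8 (a₁ a₂ b₁ b₂ c₁ c₂ : ℕ)
    (ha : 0 < a₁) (hb : 0 < b₁) (hc : 0 < c₁)
    (ha' : a₁ ≤ a₂) (hb' : b₁ ≤ b₂) (hc' : c₁ ≤ c₂)
    (heq : ∀ z : ℂ, z ≠ 0 → z ^ a₁ ≠ 1 → z ^ a₂ ≠ 1 → z ^ b₁ ≠ 1 → z ^ b₂ ≠ 1 →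
      z ^ c₁ ≠ 1 → z ^ c₂ ≠ 1 →
      (z ^ a₁ + 1) * (z ^ a₂ + 1) / ((z ^ a₁ - 1) * (z ^ a₂ - 1))
        + (z ^ b₁ + 1) * (z ^ b₂ + 1) / ((z ^ b₁ - 1) * (z ^ b₂ - 1))
      = (z ^ c₁ + 1) * (z ^ c₂ + 1) / ((z ^ c₁ - 1) * (z ^ c₂ - 1)) + 1) :
    a₂ = b₂ ∧ a₂ = a₁ + b₁ ∧ ((c₁ = a₁ ∧ c₂ = b₁) ∨ (c₁ = b₁ ∧ c₂ = a₁)) := by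
  rcases le_total a₁ b₁ with hab | hba
  · have hR := getRQL a₁ a₂ b₁ b₂ c₁ c₂ ha hb hc (by omega) (by omega) (by omega) heq
    obtain ⟨h1, h2, h3, h4⟩ := mainQL a₁ b₁ a₂ b₂ c₁ c₂ ha hb hc ha' hb' hc' hab hR
    exact ⟨h1, by omega, Or.inl ⟨h3, h4⟩⟩
  · have heq' : ∀ z : ℂ, z ≠ 0 → z ^ b₁ ≠ 1 → z ^ b₂ ≠ 1 → z ^ a₁ ≠ 1 → z ^ a₂ ≠ 1 →
        z ^ c₁ ≠ 1 → z ^ c₂ ≠ 1 →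
        (z ^ b₁ + 1) * (z ^ b₂ + 1) / ((z ^ b₁ - 1) * (z ^ b₂ - 1))
          + (z ^ a₁ + 1) * (z ^ a₂ + 1) / ((z ^ a₁ - 1) * (z ^ a₂ - 1))
        = (z ^ c₁ + 1) * (z ^ c₂ + 1) / ((z ^ c₁ - 1) * (z ^ c₂ - 1)) + 1 := by
      intro z h0 h3 h4 h1 h2 h5 h6
      have := heq z h0 h1 h2 h3 h4 h5 h6
      linear_combination this
    have hR := getRQL b₁ b₂ a₁ a₂ c₁ c₂ hb ha hc (by omega) (by omega) (by omega) heq'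
    obtain ⟨h1, h2, h3, h4⟩ := mainQL b₁ a₁ b₂ a₂ c₁ c₂ hb ha hc hb' ha' hc' hba hR
    exact ⟨h1.symm, by omega, Or.inr ⟨h3, h4⟩⟩
end

section
/- Under the hypotheses of the m=3, n=2 rigidity equation — positive integers a_1 ≤ a_2, b_1 ≤ b_2, c_1 ≤ c_2 with a_2 ≤ b_2 satisfying (z^{a_1}+1)(z^{a_2}+1)/((z^{a_1}−1)(z^{a_2}−1)) + (z^{b_1}+1)(z^{b_2}+1)/((z^{b_1}−1)(z^{b_2}−1)) = (z^{c_1}+1)(z^{c_2}+1)/((z^{c_1}−1)(z^{c_2}−1)) + 1 identically — one has c_2 < b_2. -/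
def iot (p e : ℕ) : ℕ := if p ∣ e then 1 else 0

def Nrep (p q e : ℕ) : ℕ :=
  ((Finset.HasAntidiagonal.antidiagonal e).filter (fun ij => p ∣ ij.1 ∧ q ∣ ij.2)).card

lemma iot_le (p e : ℕ) : iot p e ≤ 1 := by unfold iot; split <;> omega

lemma iot_self (p : ℕ) : iot p p = 1 := by simp [iot]

lemma iot_eq_zero_of_lt (he : 0 < e) (h : e < p) : iot p e = 0 := by
  unfold iot
  rw [if_neg]
  intro hd
  exact absurd (Nat.le_of_dvd he hd) (not_le.mpr h)

lemma Nrep_ge (he : 0 < e) : iot p e + iot q e ≤ Nrep p q e := by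
  unfold iot Nrep
  by_cases hp : p ∣ e <;> by_cases hq : q ∣ e <;> simp only [if_pos, if_neg, hp, hq,
    if_true, if_false]
  · have hsub : ({(e, 0), (0, e)} : Finset (ℕ × ℕ)) ⊆
        (Finset.HasAntidiagonal.antidiagonal e).filter (fun ij => p ∣ ij.1 ∧ q ∣ ij.2) := by
      intro x hx
      simp only [Finset.mem_insert, Finset.mem_singleton] at hx
      rcases hx with rfl | rfl <;>
        simp [Finset.HasAntidiagonal.mem_antidiagonal, hp, hq]
    have hcard : ({(e, 0), (0, e)} : Finset (ℕ × ℕ)).card = 2 := by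
      rw [Finset.card_pair]
      simp only [ne_eq, Prod.mk.injEq]
      omega
    calc 1 + 1 = 2 := rfl
      _ = _ := hcard.symm
      _ ≤ _ := Finset.card_le_card hsub
  · have : (e, 0) ∈ (Finset.HasAntidiagonal.antidiagonal e).filter (fun ij => p ∣ ij.1 ∧ q ∣ ij.2) := by
      simp [Finset.HasAntidiagonal.mem_antidiagonal, hp]
    calc 1 + 0 = 1 := rfl
      _ ≤ _ := Finset.card_pos.mpr ⟨_, this⟩
  · have : (0, e) ∈ (Finset.HasAntidiagonal.antidiagonal e).filter (fun ij => p ∣ ij.1 ∧ q ∣ ij.2) := by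
      simp [Finset.HasAntidiagonal.mem_antidiagonal, hq]
    calc 0 + 1 = 1 := rfl
      _ ≤ _ := Finset.card_pos.mpr ⟨_, this⟩
  · omega

lemma Nrep_eq_of_lt (hq : 0 < q) (he : e < q) : Nrep p q e = iot p e := by
  unfold Nrep iot
  have hset : (Finset.HasAntidiagonal.antidiagonal e).filter (fun ij => p ∣ ij.1 ∧ q ∣ ij.2) =
      if p ∣ e then {(e, 0)} else ∅ := by
    ext ⟨i, j⟩
    simp only [Finset.mem_filter, Finset.HasAntidiagonal.mem_antidiagonal]
    constructor
    · rintro ⟨hij, hpi, hqj⟩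
      have hj : j = 0 := by
        by_contra hj0
        have := Nat.le_of_dvd (Nat.pos_of_ne_zero hj0) hqj
        omega
      subst hj
      simp only [add_zero] at hij
      subst hij
      rw [if_pos hpi]
      simp
    · intro hmem
      by_cases hp : p ∣ e
      · rw [if_pos hp] at hmem
        simp only [Finset.mem_singleton, Prod.mk.injEq] at hmem
        obtain ⟨rfl, rfl⟩ := hmem
        exact ⟨by omega, hp, dvd_zero q⟩
      · rw [if_neg hp] at hmem; exact absurd hmem (Finset.notMem_empty _)
  rw [hset]
  split <;> simp

lemma Nrep_at_q (hp : 0 < p) (hpq : p ≤ q) : Nrep p q q = 1 + iot p q := by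
  unfold Nrep iot
  have hq : 0 < q := lt_of_lt_of_le hp hpq
  have hset : (Finset.HasAntidiagonal.antidiagonal q).filter (fun ij => p ∣ ij.1 ∧ q ∣ ij.2) =
      if p ∣ q then {(0, q), (q, 0)} else {(0, q)} := by
    ext ⟨i, j⟩
    simp only [Finset.mem_filter, Finset.HasAntidiagonal.mem_antidiagonal]
    constructor
    · rintro ⟨hij, hpi, hqj⟩
      have hj : j = 0 ∨ j = q := by
        rcases Nat.eq_zero_or_pos j with h0 | hpos
        · left; exact h0
        · right; have := Nat.le_of_dvd hpos hqj; omega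
      rcases hj with rfl | rfl
      · have hi : i = q := by omega
        subst hi
        rw [if_pos hpi]; simp
      · have hi : i = 0 := by omega
        subst hi
        split <;> simp
    · intro hmem
      by_cases hpd : p ∣ q
      · rw [if_pos hpd] at hmem
        simp only [Finset.mem_insert, Finset.mem_singleton, Prod.mk.injEq] at hmem
        rcases hmem with ⟨h1, h2⟩ | ⟨h1, h2⟩ <;>
          · refine ⟨by omega, ?_, ?_⟩ <;> simp [h1, h2, hpd]
      · rw [if_neg hpd] at hmem
        simp only [Finset.mem_singleton, Prod.mk.injEq] at hmem
        obtain ⟨h1, h2⟩ := hmem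
        refine ⟨by omega, ?_, ?_⟩ <;> simp [h1, h2]
  rw [hset]
  by_cases hpd : p ∣ q
  · rw [if_pos hpd, if_pos hpd, Finset.card_pair (by simp only [ne_eq, Prod.mk.injEq]; omega)]
  · rw [if_neg hpd, if_neg hpd]; simp

lemma Nrep_pos_imp (hp : 0 < p) (hpq : p ≤ q) (he : 0 < e) (h : 0 < Nrep p q e) : p ≤ e := by
  unfold Nrep at h
  rw [Finset.card_pos] at h
  obtain ⟨⟨i, j⟩, hmem⟩ := h
  simp only [Finset.mem_filter, Finset.HasAntidiagonal.mem_antidiagonal] at hmem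
  obtain ⟨hij, hpi, hqj⟩ := hmem
  rcases Nat.eq_zero_or_pos j with rfl | hj
  · have hi : i = e := by omega
    subst hi
    exact Nat.le_of_dvd he hpi
  · have := Nat.le_of_dvd hj hqj
    omega

noncomputable def SS (p : ℕ) : PowerSeries ℂ := PowerSeries.mk fun n => if p ∣ n then 1 else 0

lemma coeff_X_pow_mul_of_lt {f : PowerSeries ℂ} {n p : ℕ} (h : n < p) :
    PowerSeries.coeff (R := ℂ) n ((PowerSeries.X : PowerSeries ℂ) ^ p * f) = 0 := by
  rw [PowerSeries.coeff_mul]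
  apply Finset.sum_eq_zero
  intro ij hij
  rw [Finset.HasAntidiagonal.mem_antidiagonal] at hij
  rw [PowerSeries.coeff_X_pow, if_neg (by omega), zero_mul]

lemma one_sub_mul_SS {p : ℕ} (hp : 0 < p) : (1 - (PowerSeries.X : PowerSeries ℂ) ^ p) * SS p = 1 := by
  ext n
  rw [sub_mul, one_mul, map_sub]
  rcases le_or_gt p n with h | h
  · obtain ⟨d, rfl⟩ := Nat.exists_eq_add_of_le h
    rw [add_comm p d, PowerSeries.coeff_X_pow_mul]
    simp only [SS, PowerSeries.coeff_mk, PowerSeries.coeff_one]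
    rw [if_neg (show ¬(d + p = 0) by omega)]
    simp only [Nat.dvd_add_self_right, sub_self]
  · rw [coeff_X_pow_mul_of_lt h, sub_zero]
    simp only [SS, PowerSeries.coeff_mk, PowerSeries.coeff_one]
    rcases Nat.eq_zero_or_pos n with rfl | hn
    · simp
    · rw [if_neg (show ¬ p ∣ n from fun hd => by have := Nat.le_of_dvd hn hd; omega),
        if_neg (show ¬ n = 0 by omega)]

lemma coeff_SS (p e : ℕ) : PowerSeries.coeff (R := ℂ) e (SS p) = (iot p e : ℂ) := by
  simp only [SS, PowerSeries.coeff_mk, iot]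
  split <;> simp

lemma coeff_SS_mul (p q e : ℕ) :
    PowerSeries.coeff (R := ℂ) e (SS p * SS q) = (Nrep p q e : ℂ) := by
  rw [PowerSeries.coeff_mul, Nrep, Finset.card_filter]
  push_cast
  apply Finset.sum_congr rfl
  intro ij _
  simp only [SS, PowerSeries.coeff_mk]
  by_cases h1 : p ∣ ij.1 <;> by_cases h2 : q ∣ ij.2 <;> simp [h1, h2]

set_option maxHeartbeats 1000000 in
lemma aux_main (a₁ a₂ b₁ b₂ c₁ c₂ : ℕ) (S : ℕ → PowerSeries ℂ)
  (hPS :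
  ((1 : PowerSeries ℂ) + PowerSeries.X ^ a₁) * (1 + PowerSeries.X ^ a₂) * ((1 - PowerSeries.X ^ b₁) * (1 - PowerSeries.X ^ b₂)) *
        ((1 - PowerSeries.X ^ c₁) * (1 - PowerSeries.X ^ c₂)) +
      (1 + PowerSeries.X ^ b₁) * (1 + PowerSeries.X ^ b₂) * ((1 - PowerSeries.X ^ a₁) * (1 - PowerSeries.X ^ a₂)) *
        ((1 - PowerSeries.X ^ c₁) * (1 - PowerSeries.X ^ c₂)) =
    (1 + PowerSeries.X ^ c₁) * (1 + PowerSeries.X ^ c₂) * ((1 - PowerSeries.X ^ a₁) * (1 - PowerSeries.X ^ a₂)) *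
        ((1 - PowerSeries.X ^ b₁) * (1 - PowerSeries.X ^ b₂)) +
      (1 - PowerSeries.X ^ a₁) * (1 - PowerSeries.X ^ a₂) * ((1 - PowerSeries.X ^ b₁) * (1 - PowerSeries.X ^ b₂)) *
        ((1 - PowerSeries.X ^ c₁) * (1 - PowerSeries.X ^ c₂)))
  (h1a₁ : (1 - PowerSeries.X ^ a₁) * S a₁ = 1)
  (h1a₂ : (1 - PowerSeries.X ^ a₂) * S a₂ = 1)
  (h1b₁ : (1 - PowerSeries.X ^ b₁) * S b₁ = 1)
  (h1b₂ : (1 - PowerSeries.X ^ b₂) * S b₂ = 1)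
  (h1c₁ : (1 - PowerSeries.X ^ c₁) * S c₁ = 1)
  (h1c₂ : (1 - PowerSeries.X ^ c₂) * S c₂ = 1)
  (hpa₁ : (1 + PowerSeries.X ^ a₁) * S a₁ = 2 * S a₁ - 1)
  (hpa₂ : (1 + PowerSeries.X ^ a₂) * S a₂ = 2 * S a₂ - 1)
  (hpb₁ : (1 + PowerSeries.X ^ b₁) * S b₁ = 2 * S b₁ - 1)
  (hpb₂ : (1 + PowerSeries.X ^ b₂) * S b₂ = 2 * S b₂ - 1)
  (hpc₁ : (1 + PowerSeries.X ^ c₁) * S c₁ = 2 * S c₁ - 1)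
  (hpc₂ : (1 + PowerSeries.X ^ c₂) * S c₂ = 2 * S c₂ - 1) :
    (2 * S a₁ - 1) * (2 * S a₂ - 1) + (2 * S b₁ - 1) * (2 * S b₂ - 1)
      = (2 * S c₁ - 1) * (2 * S c₂ - 1) + 1 := by
  have e1 : ((1 + (PowerSeries.X : PowerSeries ℂ) ^ a₁) * (1 + PowerSeries.X ^ a₂) * ((1 - PowerSeries.X ^ b₁) * (1 - PowerSeries.X ^ b₂)) *
        ((1 - PowerSeries.X ^ c₁) * (1 - PowerSeries.X ^ c₂))) * (S a₁ * S a₂ * S b₁ * S b₂ * S c₁ * S c₂)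
      = (2 * S a₁ - 1) * (2 * S a₂ - 1) := by
    rw [show ((1 + (PowerSeries.X : PowerSeries ℂ) ^ a₁) * (1 + PowerSeries.X ^ a₂) * ((1 - PowerSeries.X ^ b₁) * (1 - PowerSeries.X ^ b₂)) *
        ((1 - PowerSeries.X ^ c₁) * (1 - PowerSeries.X ^ c₂))) * (S a₁ * S a₂ * S b₁ * S b₂ * S c₁ * S c₂)
      = ((1 + PowerSeries.X ^ a₁) * S a₁) * ((1 + PowerSeries.X ^ a₂) * S a₂) * (((1 - PowerSeries.X ^ b₁) * S b₁) *
        ((1 - PowerSeries.X ^ b₂) * S b₂)) * (((1 - PowerSeries.X ^ c₁) * S c₁) * ((1 - PowerSeries.X ^ c₂) * S c₂)) from by ring,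
      hpa₁, hpa₂, h1b₁, h1b₂, h1c₁, h1c₂]
    ring
  have e2 : ((1 + (PowerSeries.X : PowerSeries ℂ) ^ b₁) * (1 + PowerSeries.X ^ b₂) * ((1 - PowerSeries.X ^ a₁) * (1 - PowerSeries.X ^ a₂)) *
        ((1 - PowerSeries.X ^ c₁) * (1 - PowerSeries.X ^ c₂))) * (S a₁ * S a₂ * S b₁ * S b₂ * S c₁ * S c₂)
      = (2 * S b₁ - 1) * (2 * S b₂ - 1) := by
    rw [show ((1 + (PowerSeries.X : PowerSeries ℂ) ^ b₁) * (1 + PowerSeries.X ^ b₂) * ((1 - PowerSeries.X ^ a₁) * (1 - PowerSeries.X ^ a₂)) *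
        ((1 - PowerSeries.X ^ c₁) * (1 - PowerSeries.X ^ c₂))) * (S a₁ * S a₂ * S b₁ * S b₂ * S c₁ * S c₂)
      = ((1 + PowerSeries.X ^ b₁) * S b₁) * ((1 + PowerSeries.X ^ b₂) * S b₂) * (((1 - PowerSeries.X ^ a₁) * S a₁) *
        ((1 - PowerSeries.X ^ a₂) * S a₂)) * (((1 - PowerSeries.X ^ c₁) * S c₁) * ((1 - PowerSeries.X ^ c₂) * S c₂)) from by ring,
      hpb₁, hpb₂, h1a₁, h1a₂, h1c₁, h1c₂]
    ring
  have e3 : ((1 + (PowerSeries.X : PowerSeries ℂ) ^ c₁) * (1 + PowerSeries.X ^ c₂) * ((1 - PowerSeries.X ^ a₁) * (1 - PowerSeries.X ^ a₂)) *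
        ((1 - PowerSeries.X ^ b₁) * (1 - PowerSeries.X ^ b₂))) * (S a₁ * S a₂ * S b₁ * S b₂ * S c₁ * S c₂)
      = (2 * S c₁ - 1) * (2 * S c₂ - 1) := by
    rw [show ((1 + (PowerSeries.X : PowerSeries ℂ) ^ c₁) * (1 + PowerSeries.X ^ c₂) * ((1 - PowerSeries.X ^ a₁) * (1 - PowerSeries.X ^ a₂)) *
        ((1 - PowerSeries.X ^ b₁) * (1 - PowerSeries.X ^ b₂))) * (S a₁ * S a₂ * S b₁ * S b₂ * S c₁ * S c₂)
      = ((1 + PowerSeries.X ^ c₁) * S c₁) * ((1 + PowerSeries.X ^ c₂) * S c₂) * (((1 - PowerSeries.X ^ a₁) * S a₁) *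
        ((1 - PowerSeries.X ^ a₂) * S a₂)) * (((1 - PowerSeries.X ^ b₁) * S b₁) * ((1 - PowerSeries.X ^ b₂) * S b₂)) from by ring,
      hpc₁, hpc₂, h1a₁, h1a₂, h1b₁, h1b₂]
    ring
  have e4 : ((1 - (PowerSeries.X : PowerSeries ℂ) ^ a₁) * (1 - PowerSeries.X ^ a₂) * ((1 - PowerSeries.X ^ b₁) * (1 - PowerSeries.X ^ b₂)) *
        ((1 - PowerSeries.X ^ c₁) * (1 - PowerSeries.X ^ c₂))) * (S a₁ * S a₂ * S b₁ * S b₂ * S c₁ * S c₂)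
      = 1 := by
    rw [show ((1 - (PowerSeries.X : PowerSeries ℂ) ^ a₁) * (1 - PowerSeries.X ^ a₂) * ((1 - PowerSeries.X ^ b₁) * (1 - PowerSeries.X ^ b₂)) *
        ((1 - PowerSeries.X ^ c₁) * (1 - PowerSeries.X ^ c₂))) * (S a₁ * S a₂ * S b₁ * S b₂ * S c₁ * S c₂)
      = ((1 - PowerSeries.X ^ a₁) * S a₁) * ((1 - PowerSeries.X ^ a₂) * S a₂) * (((1 - PowerSeries.X ^ b₁) * S b₁) *
        ((1 - PowerSeries.X ^ b₂) * S b₂)) * (((1 - PowerSeries.X ^ c₁) * S c₁) * ((1 - PowerSeries.X ^ c₂) * S c₂)) from by ring,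
      h1a₁, h1a₂, h1b₁, h1b₂, h1c₁, h1c₂]
    ring
  have hmul := congrArg (fun f => f * (S a₁ * S a₂ * S b₁ * S b₂ * S c₁ * S c₂)) hPS
  conv_lhs at hmul => rw [add_mul]
  conv_rhs at hmul => rw [add_mul]
  rw [e1, e2, e3, e4] at hmul
  exact hmul

set_option maxHeartbeats 1000000

/-- First step of Theorem 2.3: under the m = 3, n = 2 rigidity equation with
a₂ ≤ b₂, one has c₂ < b₂. -/
theorem stmt_9 (a₁ a₂ b₁ b₂ c₁ c₂ : ℕ)
    (ha : 0 < a₁) (hb : 0 < b₁) (hc : 0 < c₁)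
    (ha' : a₁ ≤ a₂) (hb' : b₁ ≤ b₂) (hc' : c₁ ≤ c₂) (hab : a₂ ≤ b₂)
    (heq : ∀ z : ℂ, z ≠ 0 → z ^ a₁ ≠ 1 → z ^ a₂ ≠ 1 → z ^ b₁ ≠ 1 → z ^ b₂ ≠ 1 →
      z ^ c₁ ≠ 1 → z ^ c₂ ≠ 1 →
      (z ^ a₁ + 1) * (z ^ a₂ + 1) / ((z ^ a₁ - 1) * (z ^ a₂ - 1))
        + (z ^ b₁ + 1) * (z ^ b₂ + 1) / ((z ^ b₁ - 1) * (z ^ b₂ - 1))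
      = (z ^ c₁ + 1) * (z ^ c₂ + 1) / ((z ^ c₁ - 1) * (z ^ c₂ - 1)) + 1) :
    c₂ < b₂ := by
  have ha₂ : 0 < a₂ := lt_of_lt_of_le ha ha'
  have hb₂ : 0 < b₂ := lt_of_lt_of_le hb hb'
  have hc₂ : 0 < c₂ := lt_of_lt_of_le hc hc'
  -- Step 1: the polynomial identity
  have hQ : ((1 + Polynomial.X ^ a₁) * (1 + Polynomial.X ^ a₂) * ((1 - Polynomial.X ^ b₁) * (1 - Polynomial.X ^ b₂)) *
        ((1 - Polynomial.X ^ c₁) * (1 - Polynomial.X ^ c₂)) : Polynomial ℂ)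
      + (1 + Polynomial.X ^ b₁) * (1 + Polynomial.X ^ b₂) * ((1 - Polynomial.X ^ a₁) * (1 - Polynomial.X ^ a₂)) *
        ((1 - Polynomial.X ^ c₁) * (1 - Polynomial.X ^ c₂))
      = (1 + Polynomial.X ^ c₁) * (1 + Polynomial.X ^ c₂) * ((1 - Polynomial.X ^ a₁) * (1 - Polynomial.X ^ a₂)) *
        ((1 - Polynomial.X ^ b₁) * (1 - Polynomial.X ^ b₂))
      + (1 - Polynomial.X ^ a₁) * (1 - Polynomial.X ^ a₂) * ((1 - Polynomial.X ^ b₁) * (1 - Polynomial.X ^ b₂)) *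
        ((1 - Polynomial.X ^ c₁) * (1 - Polynomial.X ^ c₂)) := by
    apply Polynomial.eq_of_infinite_eval_eq
    have hinf : ((fun r : ℝ => (r : ℂ)) '' Set.Ioo 0 1).Infinite :=
      (Set.Ioo_infinite (by norm_num : (0:ℝ) < 1)).image (Complex.ofReal_injective.injOn)
    apply hinf.mono
    rintro x ⟨r, ⟨hr0, hr1⟩, rfl⟩
    have hne : ∀ k : ℕ, 0 < k → ((r : ℂ)) ^ k ≠ 1 := by
      intro k hk hcon
      rw [show ((r : ℂ)) ^ k = ((r ^ k : ℝ) : ℂ) by push_cast; ring,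
        Complex.ofReal_eq_one] at hcon
      nlinarith [pow_lt_one₀ (le_of_lt hr0) hr1 hk.ne']
    have hr0' : ((r : ℂ)) ≠ 0 := by
      simp only [ne_eq, Complex.ofReal_eq_zero]; exact ne_of_gt hr0
    have h := heq (r : ℂ) hr0' (hne a₁ ha) (hne a₂ ha₂) (hne b₁ hb) (hne b₂ hb₂)
      (hne c₁ hc) (hne c₂ hc₂)
    have da₁ : ((r:ℂ)) ^ a₁ - 1 ≠ 0 := sub_ne_zero.mpr (hne a₁ ha)
    have da₂ : ((r:ℂ)) ^ a₂ - 1 ≠ 0 := sub_ne_zero.mpr (hne a₂ ha₂)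
    have db₁ : ((r:ℂ)) ^ b₁ - 1 ≠ 0 := sub_ne_zero.mpr (hne b₁ hb)
    have db₂ : ((r:ℂ)) ^ b₂ - 1 ≠ 0 := sub_ne_zero.mpr (hne b₂ hb₂)
    have dc₁ : ((r:ℂ)) ^ c₁ - 1 ≠ 0 := sub_ne_zero.mpr (hne c₁ hc)
    have dc₂ : ((r:ℂ)) ^ c₂ - 1 ≠ 0 := sub_ne_zero.mpr (hne c₂ hc₂)
    field_simp at h
    simp only [Set.mem_setOf_eq, Polynomial.eval_add, Polynomial.eval_mul,
      Polynomial.eval_sub, Polynomial.eval_one, Polynomial.eval_pow, Polynomial.eval_X]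
    linear_combination h
  -- Step 2: transfer to power series
  have hPS := congrArg ((Polynomial.coeToPowerSeries.ringHom :
    Polynomial ℂ →+* PowerSeries ℂ)) hQ
  simp only [map_add, map_mul, map_sub, map_one, map_pow,
    Polynomial.coeToPowerSeries.ringHom_apply, Polynomial.coe_X] at hPS
  have h1a₁ := one_sub_mul_SS ha
  have h1a₂ := one_sub_mul_SS ha₂
  have h1b₁ := one_sub_mul_SS hb
  have h1b₂ := one_sub_mul_SS hb₂
  have h1c₁ := one_sub_mul_SS hc
  have h1c₂ := one_sub_mul_SS hc₂
  have hpa₁ : (1 + (PowerSeries.X : PowerSeries ℂ) ^ a₁) * SS a₁ = 2 * SS a₁ - 1 := by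
    linear_combination - h1a₁
  have hpa₂ : (1 + (PowerSeries.X : PowerSeries ℂ) ^ a₂) * SS a₂ = 2 * SS a₂ - 1 := by
    linear_combination - h1a₂
  have hpb₁ : (1 + (PowerSeries.X : PowerSeries ℂ) ^ b₁) * SS b₁ = 2 * SS b₁ - 1 := by
    linear_combination - h1b₁
  have hpb₂ : (1 + (PowerSeries.X : PowerSeries ℂ) ^ b₂) * SS b₂ = 2 * SS b₂ - 1 := by
    linear_combination - h1b₂
  have hpc₁ : (1 + (PowerSeries.X : PowerSeries ℂ) ^ c₁) * SS c₁ = 2 * SS c₁ - 1 := by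
    linear_combination - h1c₁
  have hpc₂ : (1 + (PowerSeries.X : PowerSeries ℂ) ^ c₂) * SS c₂ = 2 * SS c₂ - 1 := by
    linear_combination - h1c₂
  have main : (2 * SS a₁ - 1) * (2 * SS a₂ - 1) + (2 * SS b₁ - 1) * (2 * SS b₂ - 1)
      = (2 * SS c₁ - 1) * (2 * SS c₂ - 1) + 1 :=
    aux_main a₁ a₂ b₁ b₂ c₁ c₂ SS hPS h1a₁ h1a₂ h1b₁ h1b₂ h1c₁ h1c₂
      hpa₁ hpa₂ hpb₁ hpb₂ hpc₁ hpc₂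
  have dia : (4:ℂ) • (SS a₁ * SS a₂) + (4:ℂ) • (SS b₁ * SS b₂) + (2:ℂ) • SS c₁ + (2:ℂ) • SS c₂
      = (4:ℂ) • (SS c₁ * SS c₂) + (2:ℂ) • SS a₁ + (2:ℂ) • SS a₂ + (2:ℂ) • SS b₁
        + (2:ℂ) • SS b₂ := by
    simp only [PowerSeries.smul_eq_C_mul, map_ofNat]
    linear_combination main
  have Φ : ∀ e : ℕ, 4 * Nrep a₁ a₂ e + 4 * Nrep b₁ b₂ e + 2 * iot c₁ e + 2 * iot c₂ e
      = 4 * Nrep c₁ c₂ e + 2 * iot a₁ e + 2 * iot a₂ e + 2 * iot b₁ e + 2 * iot b₂ e := by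
    intro e
    have h := congrArg (PowerSeries.coeff (R := ℂ) e) dia
    simp only [map_add, map_smul, coeff_SS, coeff_SS_mul, smul_eq_mul] at h
    exact_mod_cast h
  -- Step 3: the arithmetic endgame
  by_contra hcon
  push_neg at hcon
  -- hcon : b₂ ≤ c₂
  -- Step 3a : c₁ = min a₁ b₁
  have hm : 0 < min a₁ b₁ := lt_min ha hb
  have hminc : c₁ ≤ min a₁ b₁ := by
    have h := Φ (min a₁ b₁)
    have l1 : iot a₁ (min a₁ b₁) + iot a₂ (min a₁ b₁) ≤ Nrep a₁ a₂ (min a₁ b₁) := Nrep_ge hm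
    have l2 : iot b₁ (min a₁ b₁) + iot b₂ (min a₁ b₁) ≤ Nrep b₁ b₂ (min a₁ b₁) := Nrep_ge hm
    have hone : iot a₁ (min a₁ b₁) = 1 ∨ iot b₁ (min a₁ b₁) = 1 := by
      rcases min_choice a₁ b₁ with hh | hh
      · left; rw [hh]; exact iot_self _
      · right; rw [hh]; exact iot_self _
    have hpos : 0 < Nrep c₁ c₂ (min a₁ b₁) := by omega
    exact Nrep_pos_imp hc hc' hm hpos
  have hcmin : min a₁ b₁ ≤ c₁ := by
    have h := Φ c₁
    have l1 : iot a₁ c₁ + iot a₂ c₁ ≤ Nrep a₁ a₂ c₁ := Nrep_ge hc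
    have l2 : iot b₁ c₁ + iot b₂ c₁ ≤ Nrep b₁ b₂ c₁ := Nrep_ge hc
    have hic : iot c₁ c₁ = 1 := iot_self _
    have hNc : 4 * Nrep c₁ c₂ c₁ = 4 + 4 * iot c₂ c₁ := by
      rcases lt_or_eq_of_le hc' with hlt | heqc
      · have h1 := Nrep_eq_of_lt (p := c₁) hc₂ hlt
        have h2 := iot_eq_zero_of_lt hc hlt
        omega
      · subst heqc
        have h1 := Nrep_at_q hc (le_refl c₁)
        omega
    have hpos : 0 < Nrep a₁ a₂ c₁ ∨ 0 < Nrep b₁ b₂ c₁ := by omega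
    rcases hpos with hp1 | hp1
    · exact le_trans (min_le_left _ _) (Nrep_pos_imp ha ha' hc hp1)
    · exact le_trans (min_le_right _ _) (Nrep_pos_imp hb hb' hc hp1)
  have hc1min : c₁ = min a₁ b₁ := le_antisymm hminc hcmin
  -- Step 3b : case analysis
  rcases lt_or_eq_of_le hcon with hlt | heq2
  · -- b₂ < c₂
    have h := Φ b₂
    have hNb : Nrep b₁ b₂ b₂ = 1 + iot b₁ b₂ := Nrep_at_q hb hb'
    have hNc : Nrep c₁ c₂ b₂ = iot c₁ b₂ := Nrep_eq_of_lt hc₂ hlt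
    have hic2 : iot c₂ b₂ = 0 := iot_eq_zero_of_lt hb₂ hlt
    have hib2 : iot b₂ b₂ = 1 := iot_self _
    have l1 : iot a₁ b₂ + iot a₂ b₂ ≤ Nrep a₁ a₂ b₂ := Nrep_ge hb₂
    rcases min_cases a₁ b₁ with ⟨hmeq, _⟩ | ⟨hmeq, _⟩ <;>
      rw [hmeq] at hc1min
    · subst hc1min
      have := iot_le b₁ b₂
      omega
    · subst hc1min
      have := iot_le c₁ b₂
      omega
  · -- b₂ = c₂
    subst heq2
    rcases min_cases a₁ b₁ with ⟨hmeq, hle⟩ | ⟨hmeq, hlt'⟩ <;> rw [hmeq] at hc1min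
    · -- c₁ = a₁
      subst hc1min
      rcases lt_or_eq_of_le hb' with hblt | hbeq
      · -- b₁ < b₂ : use Φ b₁
        have h := Φ b₁
        have hNb : Nrep b₁ b₂ b₁ = iot b₁ b₁ := Nrep_eq_of_lt hb₂ hblt
        have hNc : Nrep c₁ b₂ b₁ = iot c₁ b₁ := Nrep_eq_of_lt hb₂ hblt
        have hib : iot b₁ b₁ = 1 := iot_self _
        have hib2 : iot b₂ b₁ = 0 := iot_eq_zero_of_lt hb hblt
        have l1 : iot c₁ b₁ + iot a₂ b₁ ≤ Nrep c₁ a₂ b₁ := Nrep_ge hb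
        have := iot_le c₁ b₁
        have := iot_le a₂ b₁
        omega
      · -- b₁ = b₂
        subst hbeq
        have h := Φ b₁
        have hNb : Nrep b₁ b₁ b₁ = 1 + iot b₁ b₁ := Nrep_at_q hb (le_refl _)
        have hNc : Nrep c₁ b₁ b₁ = 1 + iot c₁ b₁ := Nrep_at_q hc hle
        have hib : iot b₁ b₁ = 1 := iot_self _
        have l1 : iot c₁ b₁ + iot a₂ b₁ ≤ Nrep c₁ a₂ b₁ := Nrep_ge hb
        have := iot_le c₁ b₁
        have := iot_le a₂ b₁
        omega
    · -- c₁ = b₁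
      subst hc1min
      have h := Φ a₁
      have hia : iot a₁ a₁ = 1 := iot_self _
      have hNa : 4 * Nrep a₁ a₂ a₁ = 4 + 4 * iot a₂ a₁ := by
        rcases lt_or_eq_of_le ha' with halt | haeq
        · have h1 := Nrep_eq_of_lt (p := a₁) ha₂ halt
          have h2 := iot_eq_zero_of_lt ha halt
          omega
        · subst haeq
          have h1 := Nrep_at_q ha (le_refl a₁)
          omega
      have := iot_le a₂ a₁
      omega
end

section
/- Under the hypotheses of the m=3, n=2 rigidity equation with a_2 ≤ b_2 (notation as before), one has a_2 = b_2, i.e., the maximum power b_2 occurs in at least two rows. -/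
open Polynomial Filter Set Topology

noncomputable def Pp (a₁ a₂ b₁ b₂ c₁ c₂ : ℕ) : Polynomial ℂ :=
  (X ^ a₁ + 1) * (X ^ a₂ + 1) * (X ^ b₁ - 1) * (X ^ b₂ - 1) * (X ^ c₁ - 1) * (X ^ c₂ - 1)
  + (X ^ b₁ + 1) * (X ^ b₂ + 1) * (X ^ a₁ - 1) * (X ^ a₂ - 1) * (X ^ c₁ - 1) * (X ^ c₂ - 1)
  - ((X ^ c₁ + 1) * (X ^ c₂ + 1) + (X ^ c₁ - 1) * (X ^ c₂ - 1))
      * (X ^ a₁ - 1) * (X ^ a₂ - 1) * (X ^ b₁ - 1) * (X ^ b₂ - 1)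

lemma funP {a₁ a₂ b₁ b₂ c₁ c₂ : ℕ} (hP0 : Pp a₁ a₂ b₁ b₂ c₁ c₂ = 0) (z : ℂ) :
    (z ^ a₁ + 1) * (z ^ a₂ + 1) * (z ^ b₁ - 1) * (z ^ b₂ - 1) * (z ^ c₁ - 1) * (z ^ c₂ - 1)
    + (z ^ b₁ + 1) * (z ^ b₂ + 1) * (z ^ a₁ - 1) * (z ^ a₂ - 1) * (z ^ c₁ - 1) * (z ^ c₂ - 1)
    - ((z ^ c₁ + 1) * (z ^ c₂ + 1) + (z ^ c₁ - 1) * (z ^ c₂ - 1))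
        * (z ^ a₁ - 1) * (z ^ a₂ - 1) * (z ^ b₁ - 1) * (z ^ b₂ - 1) = 0 := by
  have := congrArg (eval z) hP0
  simp only [Pp, eval_add, eval_sub, eval_mul, eval_pow, eval_X, eval_one, eval_zero] at this
  linear_combination this

lemma nat_dvd_eq {d x : ℕ} (h : d ∣ x) (h0 : 0 < x) (h2 : x < 2 * d) : x = d := by
  rcases h with ⟨k, rfl⟩
  rcases k with _ | _ | k
  · omega
  · omega
  · exfalso; nlinarith

lemma nat_two_mul {b₁ b₂ : ℕ} (h1 : 0 < b₁) (hle : b₁ ≤ b₂) (hdvd : b₂ ∣ 2 * b₁)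
    (hnd : ¬ b₂ ∣ b₁) : b₂ = 2 * b₁ := by
  rcases hdvd with ⟨k, hk⟩
  rcases k with _ | _ | k
  · omega
  · omega
  · exfalso
    have : b₂ ∣ b₁ := by
      have hb : b₁ = b₂ := by nlinarith
      rw [hb]
    exact hnd this

lemma prim_neg_one {ζ : ℂ} {n k : ℕ} (hprim : IsPrimitiveRoot ζ n) (h : ζ ^ k = -1) :
    n ∣ 2 * k ∧ ¬ n ∣ k := by
  constructor
  · rw [← hprim.pow_eq_one_iff_dvd, two_mul, pow_add, h]; ring
  · rw [← hprim.pow_eq_one_iff_dvd, h]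
    intro hc; norm_num at hc

lemma Xpow_sub_one_ne (k : ℕ) (hk : 0 < k) : (X ^ k - 1 : Polynomial ℂ) ≠ 0 := by
  have := Polynomial.X_pow_sub_C_ne_zero hk (1 : ℂ)
  simpa using this

lemma Xpow_add_one_ne (k : ℕ) (hk : 0 < k) : (X ^ k + 1 : Polynomial ℂ) ≠ 0 := by
  have := Polynomial.X_pow_sub_C_ne_zero hk (-1 : ℂ)
  simpa [sub_neg_eq_add] using this

lemma pow_eq_finite' (k : ℕ) (hk : 0 < k) (w : ℂ) : {z : ℂ | z ^ k = w}.Finite := by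
  apply Set.Finite.subset (Polynomial.nthRoots k w).toFinset.finite_toSet
  intro z hz
  simp only [Finset.coe_sort_coe, Finset.mem_coe, Multiset.mem_toFinset]
  rw [Polynomial.mem_nthRoots hk]
  exact hz

lemma eval_Pp (a₁ a₂ b₁ b₂ c₁ c₂ : ℕ) (z : ℂ) :
    (Pp a₁ a₂ b₁ b₂ c₁ c₂).eval z =
    (z ^ a₁ + 1) * (z ^ a₂ + 1) * (z ^ b₁ - 1) * (z ^ b₂ - 1) * (z ^ c₁ - 1) * (z ^ c₂ - 1)
    + (z ^ b₁ + 1) * (z ^ b₂ + 1) * (z ^ a₁ - 1) * (z ^ a₂ - 1) * (z ^ c₁ - 1) * (z ^ c₂ - 1)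
    - ((z ^ c₁ + 1) * (z ^ c₂ + 1) + (z ^ c₁ - 1) * (z ^ c₂ - 1))
        * (z ^ a₁ - 1) * (z ^ a₂ - 1) * (z ^ b₁ - 1) * (z ^ b₂ - 1) := by
  simp [Pp]

lemma polyP (a₁ a₂ b₁ b₂ c₁ c₂ : ℕ)
    (ha₁ : 0 < a₁) (ha₂ : 0 < a₂) (hb₁ : 0 < b₁) (hb₂ : 0 < b₂) (hc₁ : 0 < c₁) (hc₂ : 0 < c₂)
    (heq : ∀ z : ℂ, z ≠ 0 → z ^ a₁ ≠ 1 → z ^ a₂ ≠ 1 → z ^ b₁ ≠ 1 → z ^ b₂ ≠ 1 →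
      z ^ c₁ ≠ 1 → z ^ c₂ ≠ 1 →
      (z ^ a₁ + 1) * (z ^ a₂ + 1) / ((z ^ a₁ - 1) * (z ^ a₂ - 1))
        + (z ^ b₁ + 1) * (z ^ b₂ + 1) / ((z ^ b₁ - 1) * (z ^ b₂ - 1))
      = (z ^ c₁ + 1) * (z ^ c₂ + 1) / ((z ^ c₁ - 1) * (z ^ c₂ - 1)) + 1) :
    Pp a₁ a₂ b₁ b₂ c₁ c₂ = 0 := by
  apply Polynomial.eq_zero_of_infinite_isRoot
  have hbad : ({(0 : ℂ)} ∪ ({z : ℂ | z ^ a₁ = 1} ∪ {z | z ^ a₂ = 1} ∪ {z | z ^ b₁ = 1}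
      ∪ {z | z ^ b₂ = 1} ∪ {z | z ^ c₁ = 1} ∪ {z | z ^ c₂ = 1})).Finite := by
    have f1 := pow_eq_finite' a₁ ha₁ 1
    have f2 := pow_eq_finite' a₂ ha₂ 1
    have f3 := pow_eq_finite' b₁ hb₁ 1
    have f4 := pow_eq_finite' b₂ hb₂ 1
    have f5 := pow_eq_finite' c₁ hc₁ 1
    have f6 := pow_eq_finite' c₂ hc₂ 1
    exact (Set.finite_singleton _).union (((((f1.union f2).union f3).union f4).union f5).union f6)
  apply Set.Infinite.mono (t := {x | (Pp a₁ a₂ b₁ b₂ c₁ c₂).IsRoot x})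
    (s := ({(0 : ℂ)} ∪ ({z : ℂ | z ^ a₁ = 1} ∪ {z | z ^ a₂ = 1} ∪ {z | z ^ b₁ = 1}
      ∪ {z | z ^ b₂ = 1} ∪ {z | z ^ c₁ = 1} ∪ {z | z ^ c₂ = 1}))ᶜ) ?_ hbad.infinite_compl
  intro z hz
  simp only [Set.mem_compl_iff, Set.mem_union, Set.mem_singleton_iff,
    Set.mem_setOf_eq, not_or] at hz
  obtain ⟨h0, ⟨⟨⟨⟨⟨h1, h2⟩, h3⟩, h4⟩, h5⟩, h6⟩⟩ := hz
  have h := heq z h0 h1 h2 h3 h4 h5 h6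
  have d1 : (z ^ a₁ - 1) * (z ^ a₂ - 1) ≠ 0 :=
    mul_ne_zero (sub_ne_zero.mpr h1) (sub_ne_zero.mpr h2)
  have d2 : (z ^ b₁ - 1) * (z ^ b₂ - 1) ≠ 0 :=
    mul_ne_zero (sub_ne_zero.mpr h3) (sub_ne_zero.mpr h4)
  have d3 : (z ^ c₁ - 1) * (z ^ c₂ - 1) ≠ 0 :=
    mul_ne_zero (sub_ne_zero.mpr h5) (sub_ne_zero.mpr h6)
  field_simp at h
  show (Pp a₁ a₂ b₁ b₂ c₁ c₂).IsRoot z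
  rw [IsRoot.def, eval_Pp]
  linear_combination h

lemma tendsto_pow_slope (n : ℕ) :
    Tendsto (fun z : ℂ => (z ^ n - 1) / (z - 1)) (𝓝[≠] (1 : ℂ)) (𝓝 (n : ℂ)) := by
  have h : HasDerivAt (fun z : ℂ => z ^ n) ((n : ℂ) * 1 ^ (n - 1)) 1 := hasDerivAt_pow n 1
  rw [hasDerivAt_iff_tendsto_slope] at h
  simp only [one_pow, mul_one] at h
  apply h.congr
  intro z
  rw [slope_def_field]
  norm_num

lemma tendsto_pow_add_one (n : ℕ) :
    Tendsto (fun z : ℂ => z ^ n + 1) (𝓝[≠] (1 : ℂ)) (𝓝 2) := by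
  have : Tendsto (fun z : ℂ => z ^ n + 1) (𝓝 (1 : ℂ)) (𝓝 2) := by
    have h1 : Tendsto (fun z : ℂ => z ^ n) (𝓝 1) (𝓝 1) := by
      simpa using (continuous_pow n).tendsto (1 : ℂ)
    simpa [one_add_one_eq_two] using h1.add (tendsto_const_nhds (x := (1 : ℂ)))
  exact this.mono_left nhdsWithin_le_nhds

lemma tendsto_pow_sub_one (n : ℕ) :
    Tendsto (fun z : ℂ => z ^ n - 1) (𝓝[≠] (1 : ℂ)) (𝓝 0) := by
  have : Tendsto (fun z : ℂ => z ^ n - 1) (𝓝 (1 : ℂ)) (𝓝 0) := by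
    have h1 : Tendsto (fun z : ℂ => z ^ n) (𝓝 1) (𝓝 1) := by
      simpa using (continuous_pow n).tendsto (1 : ℂ)
    simpa using h1.sub (tendsto_const_nhds (x := (1 : ℂ)))
  exact this.mono_left nhdsWithin_le_nhds

set_option maxHeartbeats 1000000 in
lemma relI (a₁ a₂ b₁ b₂ c₁ c₂ : ℕ)
    (hfun : ∀ z : ℂ,
      (z ^ a₁ + 1) * (z ^ a₂ + 1) * (z ^ b₁ - 1) * (z ^ b₂ - 1) * (z ^ c₁ - 1) * (z ^ c₂ - 1)
      + (z ^ b₁ + 1) * (z ^ b₂ + 1) * (z ^ a₁ - 1) * (z ^ a₂ - 1) * (z ^ c₁ - 1) * (z ^ c₂ - 1)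
      - ((z ^ c₁ + 1) * (z ^ c₂ + 1) + (z ^ c₁ - 1) * (z ^ c₂ - 1))
          * (z ^ a₁ - 1) * (z ^ a₂ - 1) * (z ^ b₁ - 1) * (z ^ b₂ - 1) = 0) :
    a₁ * a₂ * (c₁ * c₂) + b₁ * b₂ * (c₁ * c₂) = a₁ * a₂ * (b₁ * b₂) := by
  set S' : ℂ → ℂ := fun z =>
    (z ^ a₁ + 1) * (z ^ a₂ + 1) * ((z ^ b₁ - 1) / (z - 1)) * ((z ^ b₂ - 1) / (z - 1))
      * ((z ^ c₁ - 1) / (z - 1)) * ((z ^ c₂ - 1) / (z - 1))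
    + (z ^ b₁ + 1) * (z ^ b₂ + 1) * ((z ^ a₁ - 1) / (z - 1)) * ((z ^ a₂ - 1) / (z - 1))
      * ((z ^ c₁ - 1) / (z - 1)) * ((z ^ c₂ - 1) / (z - 1))
    - ((z ^ c₁ + 1) * (z ^ c₂ + 1) + (z ^ c₁ - 1) * (z ^ c₂ - 1))
      * ((z ^ a₁ - 1) / (z - 1)) * ((z ^ a₂ - 1) / (z - 1))
      * ((z ^ b₁ - 1) / (z - 1)) * ((z ^ b₂ - 1) / (z - 1)) with hS'
  have hL : Tendsto S' (𝓝[≠] (1 : ℂ))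
      (𝓝 (2 * 2 * (b₁ : ℂ) * (b₂ : ℂ) * (c₁ : ℂ) * (c₂ : ℂ)
        + 2 * 2 * (a₁ : ℂ) * (a₂ : ℂ) * (c₁ : ℂ) * (c₂ : ℂ)
        - (2 * 2 + 0 * 0) * (a₁ : ℂ) * (a₂ : ℂ) * (b₁ : ℂ) * (b₂ : ℂ))) := by
    apply Tendsto.sub
    apply Tendsto.add
    · exact (((((tendsto_pow_add_one a₁).mul (tendsto_pow_add_one a₂)).mul
        (tendsto_pow_slope b₁)).mul (tendsto_pow_slope b₂)).mul
        (tendsto_pow_slope c₁)).mul (tendsto_pow_slope c₂)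
    · exact (((((tendsto_pow_add_one b₁).mul (tendsto_pow_add_one b₂)).mul
        (tendsto_pow_slope a₁)).mul (tendsto_pow_slope a₂)).mul
        (tendsto_pow_slope c₁)).mul (tendsto_pow_slope c₂)
    · exact (((((tendsto_pow_add_one c₁).mul (tendsto_pow_add_one c₂)).add
        ((tendsto_pow_sub_one c₁).mul (tendsto_pow_sub_one c₂))).mul
        (tendsto_pow_slope a₁)).mul (tendsto_pow_slope a₂)).mul
        (tendsto_pow_slope b₁) |>.mul (tendsto_pow_slope b₂)
  have hzero : Tendsto S' (𝓝[≠] (1 : ℂ)) (𝓝 0) := by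
    have hev : ∀ z : ℂ, S' z = 0 := by
      intro z
      rw [hS']
      linear_combination ((z - 1)⁻¹) ^ 4 * hfun z
    have : S' = fun _ => (0 : ℂ) := funext hev
    rw [this]
    exact tendsto_const_nhds
  have := tendsto_nhds_unique hL hzero
  have hC : ((a₁ * a₂ * (c₁ * c₂) + b₁ * b₂ * (c₁ * c₂) : ℕ) : ℂ)
      = ((a₁ * a₂ * (b₁ * b₂) : ℕ) : ℂ) := by
    push_cast
    linear_combination this / 4
  exact_mod_cast hC

lemma keyineq {x y z : ℕ} (hx : 0 < x) (hy : 0 < y) (hz : 0 < z)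
    (h : x * z + y * z = x * y) : z < x ∧ z < y := by
  constructor
  · by_contra hcon
    push_neg at hcon
    have h2 : y * x ≤ y * z := Nat.mul_le_mul_left _ hcon
    have h3 : 0 < x * z := by positivity
    nlinarith
  · by_contra hcon
    push_neg at hcon
    have h2 : x * y ≤ x * z := Nat.mul_le_mul_left _ hcon
    have h3 : 0 < y * z := by positivity
    nlinarith

-- derived inequalities from relation I
lemma ineqI {a₁ a₂ b₁ b₂ c₁ c₂ : ℕ}
    (ha : 0 < a₁) (hb : 0 < b₁) (hc : 0 < c₁)
    (ha' : a₁ ≤ a₂) (hb' : b₁ ≤ b₂) (hc' : c₁ ≤ c₂)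
    (hI : a₁ * a₂ * (c₁ * c₂) + b₁ * b₂ * (c₁ * c₂) = a₁ * a₂ * (b₁ * b₂)) :
    c₁ * c₂ < a₁ * a₂ ∧ c₁ * c₂ < b₁ * b₂ ∧ c₁ < a₂ ∧ c₁ < b₂ := by
  have ha₂ : 0 < a₂ := lt_of_lt_of_le ha ha'
  have hb₂ : 0 < b₂ := lt_of_lt_of_le hb hb'
  have hc₂ : 0 < c₂ := lt_of_lt_of_le hc hc'
  obtain ⟨h1, h2⟩ := keyineq (x := a₁ * a₂) (y := b₁ * b₂) (z := c₁ * c₂)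
    (by positivity) (by positivity) (by positivity) hI
  refine ⟨h1, h2, ?_, ?_⟩
  · by_contra hcon
    push_neg at hcon
    have : a₁ * a₂ ≤ c₁ * c₂ := Nat.mul_le_mul (le_trans ha' hcon) (le_trans hcon hc')
    omega
  · by_contra hcon
    push_neg at hcon
    have : b₁ * b₂ ≤ c₁ * c₂ := Nat.mul_le_mul (le_trans hb' hcon) (le_trans hcon hc')
    omega
set_option maxHeartbeats 1000000 in
lemma killc2b2 (a₁ a₂ b₁ b₂ c₁ : ℕ) (ha : 0 < a₁) (hb : 0 < b₁) (hc : 0 < c₁)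
    (ha' : a₁ ≤ a₂) (hb' : b₁ ≤ b₂) (hab : a₂ < b₂)
    (hP0 : Pp a₁ a₂ b₁ b₂ c₁ b₂ = 0)
    (hI : a₁ * a₂ * (c₁ * b₂) + b₁ * b₂ * (c₁ * b₂) = a₁ * a₂ * (b₁ * b₂)) : False := by
  have hb₂ : 0 < b₂ := lt_of_le_of_lt (Nat.zero_le _) hab
  -- c₁ < b₁
  have hc₁b₁ : c₁ < b₁ := by
    by_contra hcon
    push_neg at hcon
    have h1 : a₁ * a₂ * (b₁ * b₂) ≤ a₁ * a₂ * (c₁ * b₂) :=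
      Nat.mul_le_mul_left _ (Nat.mul_le_mul_right _ hcon)
    have h2 : 0 < b₁ * b₂ * (c₁ * b₂) := by positivity
    omega
  -- factor out (X ^ b₂ - 1)
  have hfac : Pp a₁ a₂ b₁ b₂ c₁ b₂ = (X ^ b₂ - 1) *
      ((X ^ a₁ + 1) * (X ^ a₂ + 1) * (X ^ b₁ - 1) * (X ^ c₁ - 1) * (X ^ b₂ - 1)
      + (X ^ b₁ + 1) * (X ^ b₂ + 1) * (X ^ a₁ - 1) * (X ^ a₂ - 1) * (X ^ c₁ - 1)
      - ((X ^ c₁ + 1) * (X ^ b₂ + 1) + (X ^ c₁ - 1) * (X ^ b₂ - 1))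
          * (X ^ a₁ - 1) * (X ^ a₂ - 1) * (X ^ b₁ - 1)) := by
    unfold Pp; ring
  have hQ : ((X ^ a₁ + 1) * (X ^ a₂ + 1) * (X ^ b₁ - 1) * (X ^ c₁ - 1) * (X ^ b₂ - 1)
      + (X ^ b₁ + 1) * (X ^ b₂ + 1) * (X ^ a₁ - 1) * (X ^ a₂ - 1) * (X ^ c₁ - 1)
      - ((X ^ c₁ + 1) * (X ^ b₂ + 1) + (X ^ c₁ - 1) * (X ^ b₂ - 1))
          * (X ^ a₁ - 1) * (X ^ a₂ - 1) * (X ^ b₁ - 1) : Polynomial ℂ) = 0 := by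
    apply mul_left_cancel₀ (Xpow_sub_one_ne b₂ hb₂)
    rw [mul_zero, ← hfac, hP0]
  obtain ⟨ζ, hprim⟩ : ∃ ζ : ℂ, IsPrimitiveRoot ζ b₂ :=
    ⟨_, Complex.isPrimitiveRoot_exp b₂ hb₂.ne'⟩
  have hζ : ζ ^ b₂ = 1 := hprim.pow_eq_one
  have he := congrArg (eval ζ) hQ
  simp only [eval_add, eval_sub, eval_mul, eval_pow, eval_X, eval_one, eval_zero] at he
  rw [hζ] at he
  have hkey : (ζ ^ a₁ - 1) * ((ζ ^ a₂ - 1) * (ζ ^ c₁ - ζ ^ b₁)) = 0 := by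
    linear_combination he / 4
  have hz : ζ ≠ 0 := fun h => by simp [h, zero_pow hb₂.ne'] at hζ
  rcases mul_eq_zero.mp hkey with h | h
  · have : ζ ^ a₁ = 1 := by linear_combination h
    have := Nat.le_of_dvd ha ((hprim.pow_eq_one_iff_dvd a₁).mp this)
    omega
  rcases mul_eq_zero.mp h with h | h
  · have : ζ ^ a₂ = 1 := by linear_combination h
    have := Nat.le_of_dvd (lt_of_lt_of_le ha ha') ((hprim.pow_eq_one_iff_dvd a₂).mp this)
    omega
  · have hbc : ζ ^ b₁ = ζ ^ c₁ := by linear_combination -h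
    have heq2 : ζ ^ c₁ * ζ ^ (b₁ - c₁) = ζ ^ c₁ * 1 := by
      rw [mul_one, ← pow_add, show c₁ + (b₁ - c₁) = b₁ by omega]
      exact hbc
    have h3 : ζ ^ (b₁ - c₁) = 1 := mul_left_cancel₀ (pow_ne_zero _ hz) heq2
    have hdvd := (hprim.pow_eq_one_iff_dvd (b₁ - c₁)).mp h3
    have hle := Nat.le_of_dvd (by omega) hdvd
    omega

set_option maxHeartbeats 1000000 in
lemma stepA (a₁ a₂ b₁ b₂ c₁ c₂ : ℕ) (ha : 0 < a₁) (hb : 0 < b₁) (hc : 0 < c₁)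
    (ha' : a₁ ≤ a₂) (hb' : b₁ ≤ b₂) (hc' : c₁ ≤ c₂) (hab : a₂ < b₂)
    (hP0 : Pp a₁ a₂ b₁ b₂ c₁ c₂ = 0)
    (hI : a₁ * a₂ * (c₁ * c₂) + b₁ * b₂ * (c₁ * c₂) = a₁ * a₂ * (b₁ * b₂)) : c₂ < b₂ := by
  have ha₂ : 0 < a₂ := lt_of_lt_of_le ha ha'
  have hb₂ : 0 < b₂ := lt_of_lt_of_le hb hb'
  have hc₂ : 0 < c₂ := lt_of_lt_of_le hc hc'
  obtain ⟨hZA, hZB, hc₁a₂, hc₁b₂⟩ := ineqI ha hb hc ha' hb' hc' hI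
  by_contra hcon
  push_neg at hcon
  have hne : c₂ ≠ b₂ := by
    intro e
    rw [e] at hP0 hI
    exact killc2b2 a₁ a₂ b₁ b₂ c₁ ha hb hc ha' hb' hab hP0 hI
  have hbc : b₂ < c₂ := by omega
  obtain ⟨ζ, hprim⟩ : ∃ ζ : ℂ, IsPrimitiveRoot ζ c₂ :=
    ⟨_, Complex.isPrimitiveRoot_exp c₂ hc₂.ne'⟩
  have hζ : ζ ^ c₂ = 1 := hprim.pow_eq_one
  have h := funP hP0 ζ
  rw [hζ] at h
  have hkey : (ζ ^ c₁ + 1) * ((ζ ^ a₁ - 1) * ((ζ ^ a₂ - 1) * ((ζ ^ b₁ - 1) * (ζ ^ b₂ - 1)))) = 0 := by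
    linear_combination -h / 2
  rcases mul_eq_zero.mp hkey with h1 | h1
  · -- ζ ^ c₁ = -1, so c₂ = 2 c₁
    have hneg : ζ ^ c₁ = -1 := by linear_combination h1
    obtain ⟨hdvd2, hnd⟩ := prim_neg_one hprim hneg
    have hc2eq : c₂ = 2 * c₁ := nat_two_mul hc hc' hdvd2 hnd
    obtain ⟨ρ, hρprim⟩ : ∃ ρ : ℂ, IsPrimitiveRoot ρ c₁ :=
      ⟨_, Complex.isPrimitiveRoot_exp c₁ hc.ne'⟩
    have hρ : ρ ^ c₁ = 1 := hρprim.pow_eq_one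
    have hρc₂ : ρ ^ c₂ = 1 := by
      rw [hc2eq, mul_comm, pow_mul, hρ, one_pow]
    have h2 := funP hP0 ρ
    rw [hρ, hρc₂] at h2
    have hkey2 : (ρ ^ a₁ - 1) * ((ρ ^ a₂ - 1) * ((ρ ^ b₁ - 1) * (ρ ^ b₂ - 1))) = 0 := by
      linear_combination -h2 / 4
    rcases mul_eq_zero.mp hkey2 with h3 | h3
    · -- c₁ ∣ a₁  →  a₁ = c₁, then arithmetic contradiction
      have : ρ ^ a₁ = 1 := by linear_combination h3
      have hdvd := (hρprim.pow_eq_one_iff_dvd a₁).mp this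
      have ha1c : a₁ = c₁ := nat_dvd_eq hdvd ha (by omega)
      rw [ha1c, hc2eq] at hI
      -- hI : c₁ * a₂ * (c₁ * (2 * c₁)) + b₁ * b₂ * (c₁ * (2 * c₁)) = c₁ * a₂ * (b₁ * b₂)
      have e1 : c₁ * a₂ * (b₁ * b₂) < b₁ * b₂ * (c₁ * (2 * c₁)) := by
        have hlt : a₂ < 2 * c₁ := by omega
        calc c₁ * a₂ * (b₁ * b₂) < c₁ * (2 * c₁) * (b₁ * b₂) := by
              apply Nat.mul_lt_mul_of_lt_of_le
              · exact Nat.mul_lt_mul_of_le_of_lt (le_refl c₁) hlt hc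
              · exact le_refl _
              · positivity
          _ = b₁ * b₂ * (c₁ * (2 * c₁)) := by ring
      have p1 : 0 < c₁ * a₂ * (c₁ * (2 * c₁)) := by positivity
      omega
    rcases mul_eq_zero.mp h3 with h4 | h4
    · -- c₁ ∣ a₂ : impossible since c₁ < a₂ < 2 c₁
      have : ρ ^ a₂ = 1 := by linear_combination h4
      have hdvd := (hρprim.pow_eq_one_iff_dvd a₂).mp this
      have := nat_dvd_eq hdvd ha₂ (by omega)
      omega
    rcases mul_eq_zero.mp h4 with h5 | h5
    · -- c₁ ∣ b₁ → b₁ = c₁, arithmetic contradiction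
      have : ρ ^ b₁ = 1 := by linear_combination h5
      have hdvd := (hρprim.pow_eq_one_iff_dvd b₁).mp this
      have hb1c : b₁ = c₁ := nat_dvd_eq hdvd hb (by omega)
      rw [hb1c, hc2eq] at hI
      -- hI : a₁ * a₂ * (c₁ * (2 * c₁)) + c₁ * b₂ * (c₁ * (2 * c₁)) = a₁ * a₂ * (c₁ * b₂)
      have e1 : a₁ * a₂ * (c₁ * b₂) < a₁ * a₂ * (c₁ * (2 * c₁)) := by
        have hlt : b₂ < 2 * c₁ := by omega
        apply Nat.mul_lt_mul_of_le_of_lt (le_refl _)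
        · exact Nat.mul_lt_mul_of_le_of_lt (le_refl c₁) hlt hc
        · positivity
      have p1 : 0 < c₁ * b₂ * (c₁ * (2 * c₁)) := by positivity
      omega
    · -- c₁ ∣ b₂ : impossible since c₁ < b₂ < 2 c₁
      have : ρ ^ b₂ = 1 := by linear_combination h5
      have hdvd := (hρprim.pow_eq_one_iff_dvd b₂).mp this
      have := nat_dvd_eq hdvd hb₂ (by omega)
      omega
  rcases mul_eq_zero.mp h1 with h2 | h2
  · have : ζ ^ a₁ = 1 := by linear_combination h2
    have := Nat.le_of_dvd ha ((hprim.pow_eq_one_iff_dvd a₁).mp this)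
    omega
  rcases mul_eq_zero.mp h2 with h3 | h3
  · have : ζ ^ a₂ = 1 := by linear_combination h3
    have := Nat.le_of_dvd ha₂ ((hprim.pow_eq_one_iff_dvd a₂).mp this)
    omega
  rcases mul_eq_zero.mp h3 with h4 | h4
  · have : ζ ^ b₁ = 1 := by linear_combination h4
    have := Nat.le_of_dvd hb ((hprim.pow_eq_one_iff_dvd b₁).mp this)
    omega
  · have : ζ ^ b₂ = 1 := by linear_combination h4
    have := Nat.le_of_dvd hb₂ ((hprim.pow_eq_one_iff_dvd b₂).mp this)
    omega

set_option maxHeartbeats 1000000 in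
lemma step3 (a₁ a₂ b₁ b₂ c₁ c₂ : ℕ) (ha : 0 < a₁) (hb : 0 < b₁) (hc : 0 < c₁)
    (ha' : a₁ ≤ a₂) (hb' : b₁ ≤ b₂) (hc' : c₁ ≤ c₂) (hab : a₂ < b₂) (hcb : c₂ < b₂)
    (hP0 : Pp a₁ a₂ b₁ b₂ c₁ c₂ = 0) : b₂ = 2 * b₁ := by
  have ha₂ : 0 < a₂ := lt_of_lt_of_le ha ha'
  have hb₂ : 0 < b₂ := lt_of_lt_of_le hb hb'
  have hc₂ : 0 < c₂ := lt_of_lt_of_le hc hc'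
  obtain ⟨ζ, hprim⟩ : ∃ ζ : ℂ, IsPrimitiveRoot ζ b₂ :=
    ⟨_, Complex.isPrimitiveRoot_exp b₂ hb₂.ne'⟩
  have hζ : ζ ^ b₂ = 1 := hprim.pow_eq_one
  have h := funP hP0 ζ
  rw [hζ] at h
  have hkey : (ζ ^ b₁ + 1) * ((ζ ^ a₁ - 1) * ((ζ ^ a₂ - 1) * ((ζ ^ c₁ - 1) * (ζ ^ c₂ - 1)))) = 0 := by
    linear_combination h / 2
  rcases mul_eq_zero.mp hkey with h1 | h1
  · have hneg : ζ ^ b₁ = -1 := by linear_combination h1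
    obtain ⟨hdvd2, hnd⟩ := prim_neg_one hprim hneg
    exact nat_two_mul hb hb' hdvd2 hnd
  · exfalso
    rcases mul_eq_zero.mp h1 with h2 | h2
    · have : ζ ^ a₁ = 1 := by linear_combination h2
      have := Nat.le_of_dvd ha ((hprim.pow_eq_one_iff_dvd a₁).mp this)
      omega
    rcases mul_eq_zero.mp h2 with h3 | h3
    · have : ζ ^ a₂ = 1 := by linear_combination h3
      have := Nat.le_of_dvd ha₂ ((hprim.pow_eq_one_iff_dvd a₂).mp this)
      omega
    rcases mul_eq_zero.mp h3 with h4 | h4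
    · have : ζ ^ c₁ = 1 := by linear_combination h4
      have := Nat.le_of_dvd hc ((hprim.pow_eq_one_iff_dvd c₁).mp this)
      omega
    · have : ζ ^ c₂ = 1 := by linear_combination h4
      have := Nat.le_of_dvd hc₂ ((hprim.pow_eq_one_iff_dvd c₂).mp this)
      omega

set_option maxHeartbeats 4000000 in
lemma endgame (a₁ a₂ b₁ c₁ c₂ : ℕ) (ha : 0 < a₁) (hb : 0 < b₁) (hc : 0 < c₁)
    (ha' : a₁ ≤ a₂) (hc' : c₁ ≤ c₂) (hab : a₂ < 2 * b₁) (hcb : c₂ < 2 * b₁)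
    (hc₁a₂ : c₁ < a₂)
    (hP0 : Pp a₁ a₂ b₁ (2 * b₁) c₁ c₂ = 0)
    (hI : a₁ * a₂ * (c₁ * c₂) + b₁ * (2 * b₁) * (c₁ * c₂) = a₁ * a₂ * (b₁ * (2 * b₁))) :
    False := by
  have ha₂ : 0 < a₂ := lt_of_lt_of_le ha ha'
  have hc₂ : 0 < c₂ := lt_of_lt_of_le hc hc'
  -- cancel (X ^ b₁ + 1) from P
  have hfac1 : Pp a₁ a₂ b₁ (2 * b₁) c₁ c₂ = (X ^ b₁ + 1) *
      ((X ^ a₁ + 1) * (X ^ a₂ + 1) * (X ^ b₁ - 1) ^ 2 * (X ^ c₁ - 1) * (X ^ c₂ - 1)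
      + ((X ^ b₁) ^ 2 + 1) * (X ^ a₁ - 1) * (X ^ a₂ - 1) * (X ^ c₁ - 1) * (X ^ c₂ - 1)
      - ((X ^ c₁ + 1) * (X ^ c₂ + 1) + (X ^ c₁ - 1) * (X ^ c₂ - 1))
          * (X ^ a₁ - 1) * (X ^ a₂ - 1) * (X ^ b₁ - 1) ^ 2) := by
    unfold Pp
    rw [show (2 * b₁) = b₁ * 2 by ring, pow_mul]
    ring
  have hQ₁ : ((X ^ a₁ + 1) * (X ^ a₂ + 1) * (X ^ b₁ - 1) ^ 2 * (X ^ c₁ - 1) * (X ^ c₂ - 1)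
      + ((X ^ b₁) ^ 2 + 1) * (X ^ a₁ - 1) * (X ^ a₂ - 1) * (X ^ c₁ - 1) * (X ^ c₂ - 1)
      - ((X ^ c₁ + 1) * (X ^ c₂ + 1) + (X ^ c₁ - 1) * (X ^ c₂ - 1))
          * (X ^ a₁ - 1) * (X ^ a₂ - 1) * (X ^ b₁ - 1) ^ 2 : Polynomial ℂ) = 0 := by
    apply mul_left_cancel₀ (Xpow_add_one_ne b₁ hb)
    rw [mul_zero, ← hfac1, hP0]
  obtain ⟨η, hηprim⟩ : ∃ η : ℂ, IsPrimitiveRoot η b₁ :=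
    ⟨_, Complex.isPrimitiveRoot_exp b₁ hb.ne'⟩
  have hη : η ^ b₁ = 1 := hηprim.pow_eq_one
  have hxeq : ∀ x : ℕ, 0 < x → x < 2 * b₁ → η ^ x - 1 = 0 → x = b₁ := by
    intro x hx0 hx2 hh
    exact nat_dvd_eq ((hηprim.pow_eq_one_iff_dvd x).mp (by linear_combination hh)) hx0 hx2
  have hxle : ∀ x : ℕ, 0 < x → η ^ x - 1 = 0 → b₁ ≤ x := by
    intro x hx0 hh
    exact Nat.le_of_dvd hx0 ((hηprim.pow_eq_one_iff_dvd x).mp (by linear_combination hh))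
  -- the final configuration kill : a₁ = a₂ = c₂ = b₁
  have killA1 : a₁ = b₁ → a₂ = b₁ → c₂ = b₁ → False := by
    intro e1 e2 e3
    rw [e1, e2, e3] at hQ₁
    have hc₁b₁ : c₁ < b₁ := by omega
    have hfac4 : ((X ^ b₁ + 1) * (X ^ b₁ + 1) * (X ^ b₁ - 1) ^ 2 * (X ^ c₁ - 1) * (X ^ b₁ - 1)
        + ((X ^ b₁) ^ 2 + 1) * (X ^ b₁ - 1) * (X ^ b₁ - 1) * (X ^ c₁ - 1) * (X ^ b₁ - 1)
        - ((X ^ c₁ + 1) * (X ^ b₁ + 1) + (X ^ c₁ - 1) * (X ^ b₁ - 1))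
            * (X ^ b₁ - 1) * (X ^ b₁ - 1) * (X ^ b₁ - 1) ^ 2 : Polynomial ℂ)
        = (X ^ b₁ - 1) ^ 3 *
        ((X ^ b₁ + 1) ^ 2 * (X ^ c₁ - 1) + ((X ^ b₁) ^ 2 + 1) * (X ^ c₁ - 1)
          - ((X ^ c₁ + 1) * (X ^ b₁ + 1) + (X ^ c₁ - 1) * (X ^ b₁ - 1)) * (X ^ b₁ - 1)) := by
      ring
    have hT : ((X ^ b₁ + 1) ^ 2 * (X ^ c₁ - 1) + ((X ^ b₁) ^ 2 + 1) * (X ^ c₁ - 1)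
        - ((X ^ c₁ + 1) * (X ^ b₁ + 1) + (X ^ c₁ - 1) * (X ^ b₁ - 1)) * (X ^ b₁ - 1)
        : Polynomial ℂ) = 0 := by
      apply mul_left_cancel₀ (pow_ne_zero 3 (Xpow_sub_one_ne b₁ hb))
      rw [mul_zero, ← hfac4]
      linear_combination hQ₁
    obtain ⟨ζ, hζprim⟩ : ∃ ζ : ℂ, IsPrimitiveRoot ζ (2 * b₁) :=
      ⟨_, Complex.isPrimitiveRoot_exp (2 * b₁) (by omega)⟩
    have hζ2 : ζ ^ (2 * b₁) = 1 := hζprim.pow_eq_one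
    have hζb : ζ ^ b₁ = -1 := by
      have hsq : ζ ^ b₁ * ζ ^ b₁ = 1 := by
        rw [← pow_add, show b₁ + b₁ = 2 * b₁ by ring]; exact hζ2
      rcases mul_self_eq_one_iff.mp hsq with h | h
      · exfalso
        have := Nat.le_of_dvd hb ((hζprim.pow_eq_one_iff_dvd b₁).mp h)
        omega
      · exact h
    have he4 := congrArg (eval ζ) hT
    simp only [eval_add, eval_sub, eval_mul, eval_pow, eval_X, eval_one, eval_zero] at he4
    rw [hζb] at he4
    have hD3 : ζ ^ c₁ - 1 = 0 := by linear_combination -he4 / 2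
    have : ζ ^ c₁ = 1 := by linear_combination hD3
    have := Nat.le_of_dvd hc ((hζprim.pow_eq_one_iff_dvd c₁).mp this)
    omega
  -- first evaluation : one of a₁ a₂ c₁ c₂ equals b₁
  have he := congrArg (eval η) hQ₁
  simp only [eval_add, eval_sub, eval_mul, eval_pow, eval_X, eval_one, eval_zero] at he
  rw [hη] at he
  have hD : (η ^ a₁ - 1) * ((η ^ a₂ - 1) * ((η ^ c₁ - 1) * (η ^ c₂ - 1))) = 0 := by
    linear_combination he / 2
  by_cases hA2 : a₂ = b₁
  · -- C1 : a₂ = b₁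
    rw [hA2] at hQ₁
    have hc₁b₁ : c₁ < b₁ := by omega
    have hfac2 : ((X ^ a₁ + 1) * (X ^ b₁ + 1) * (X ^ b₁ - 1) ^ 2 * (X ^ c₁ - 1) * (X ^ c₂ - 1)
        + ((X ^ b₁) ^ 2 + 1) * (X ^ a₁ - 1) * (X ^ b₁ - 1) * (X ^ c₁ - 1) * (X ^ c₂ - 1)
        - ((X ^ c₁ + 1) * (X ^ c₂ + 1) + (X ^ c₁ - 1) * (X ^ c₂ - 1))
            * (X ^ a₁ - 1) * (X ^ b₁ - 1) * (X ^ b₁ - 1) ^ 2 : Polynomial ℂ)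
        = (X ^ b₁ - 1) *
        ((X ^ a₁ + 1) * (X ^ b₁ + 1) * (X ^ b₁ - 1) * (X ^ c₁ - 1) * (X ^ c₂ - 1)
        + ((X ^ b₁) ^ 2 + 1) * (X ^ a₁ - 1) * (X ^ c₁ - 1) * (X ^ c₂ - 1)
        - ((X ^ c₁ + 1) * (X ^ c₂ + 1) + (X ^ c₁ - 1) * (X ^ c₂ - 1))
            * (X ^ a₁ - 1) * (X ^ b₁ - 1) ^ 2) := by ring
    have hR : ((X ^ a₁ + 1) * (X ^ b₁ + 1) * (X ^ b₁ - 1) * (X ^ c₁ - 1) * (X ^ c₂ - 1)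
        + ((X ^ b₁) ^ 2 + 1) * (X ^ a₁ - 1) * (X ^ c₁ - 1) * (X ^ c₂ - 1)
        - ((X ^ c₁ + 1) * (X ^ c₂ + 1) + (X ^ c₁ - 1) * (X ^ c₂ - 1))
            * (X ^ a₁ - 1) * (X ^ b₁ - 1) ^ 2 : Polynomial ℂ) = 0 := by
      apply mul_left_cancel₀ (Xpow_sub_one_ne b₁ hb)
      rw [mul_zero, ← hfac2]
      linear_combination hQ₁
    have he2 := congrArg (eval η) hR
    simp only [eval_add, eval_sub, eval_mul, eval_pow, eval_X, eval_one, eval_zero] at he2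
    rw [hη] at he2
    have hD1 : (η ^ a₁ - 1) * ((η ^ c₁ - 1) * (η ^ c₂ - 1)) = 0 := by
      linear_combination he2 / 2
    rcases mul_eq_zero.mp hD1 with h1 | h1
    · -- a₁ = b₁ : reach configuration a₁ = a₂ = b₁
      have ha1 : a₁ = b₁ := hxeq a₁ ha (by omega) h1
      rw [ha1] at hR
      have hfac3 : ((X ^ b₁ + 1) * (X ^ b₁ + 1) * (X ^ b₁ - 1) * (X ^ c₁ - 1) * (X ^ c₂ - 1)
          + ((X ^ b₁) ^ 2 + 1) * (X ^ b₁ - 1) * (X ^ c₁ - 1) * (X ^ c₂ - 1)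
          - ((X ^ c₁ + 1) * (X ^ c₂ + 1) + (X ^ c₁ - 1) * (X ^ c₂ - 1))
              * (X ^ b₁ - 1) * (X ^ b₁ - 1) ^ 2 : Polynomial ℂ)
          = (X ^ b₁ - 1) *
          ((X ^ b₁ + 1) ^ 2 * (X ^ c₁ - 1) * (X ^ c₂ - 1)
          + ((X ^ b₁) ^ 2 + 1) * (X ^ c₁ - 1) * (X ^ c₂ - 1)
          - ((X ^ c₁ + 1) * (X ^ c₂ + 1) + (X ^ c₁ - 1) * (X ^ c₂ - 1)) * (X ^ b₁ - 1) ^ 2) := by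
        ring
      have hS : ((X ^ b₁ + 1) ^ 2 * (X ^ c₁ - 1) * (X ^ c₂ - 1)
          + ((X ^ b₁) ^ 2 + 1) * (X ^ c₁ - 1) * (X ^ c₂ - 1)
          - ((X ^ c₁ + 1) * (X ^ c₂ + 1) + (X ^ c₁ - 1) * (X ^ c₂ - 1)) * (X ^ b₁ - 1) ^ 2
          : Polynomial ℂ) = 0 := by
        apply mul_left_cancel₀ (Xpow_sub_one_ne b₁ hb)
        rw [mul_zero, ← hfac3]
        linear_combination hR
      have he3 := congrArg (eval η) hS
      simp only [eval_add, eval_sub, eval_mul, eval_pow, eval_X, eval_one, eval_zero] at he3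
      rw [hη] at he3
      have hD2 : (η ^ c₁ - 1) * (η ^ c₂ - 1) = 0 := by linear_combination he3 / 6
      rcases mul_eq_zero.mp hD2 with h2 | h2
      · have := hxle c₁ hc h2; omega
      · exact killA1 ha1 hA2 (hxeq c₂ hc₂ (by omega) h2)
    rcases mul_eq_zero.mp h1 with h2 | h2
    · have := hxle c₁ hc h2; omega
    · -- c₂ = b₁ : configuration a₂ = c₂ = b₁
      have hc2 : c₂ = b₁ := hxeq c₂ hc₂ (by omega) h2
      rw [hc2] at hR
      have hfac5 : ((X ^ a₁ + 1) * (X ^ b₁ + 1) * (X ^ b₁ - 1) * (X ^ c₁ - 1) * (X ^ b₁ - 1)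
          + ((X ^ b₁) ^ 2 + 1) * (X ^ a₁ - 1) * (X ^ c₁ - 1) * (X ^ b₁ - 1)
          - ((X ^ c₁ + 1) * (X ^ b₁ + 1) + (X ^ c₁ - 1) * (X ^ b₁ - 1))
              * (X ^ a₁ - 1) * (X ^ b₁ - 1) ^ 2 : Polynomial ℂ)
          = (X ^ b₁ - 1) *
          ((X ^ a₁ + 1) * (X ^ b₁ + 1) * (X ^ b₁ - 1) * (X ^ c₁ - 1)
          + ((X ^ b₁) ^ 2 + 1) * (X ^ a₁ - 1) * (X ^ c₁ - 1)
          - ((X ^ c₁ + 1) * (X ^ b₁ + 1) + (X ^ c₁ - 1) * (X ^ b₁ - 1))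
              * (X ^ a₁ - 1) * (X ^ b₁ - 1)) := by ring
      have hS' : ((X ^ a₁ + 1) * (X ^ b₁ + 1) * (X ^ b₁ - 1) * (X ^ c₁ - 1)
          + ((X ^ b₁) ^ 2 + 1) * (X ^ a₁ - 1) * (X ^ c₁ - 1)
          - ((X ^ c₁ + 1) * (X ^ b₁ + 1) + (X ^ c₁ - 1) * (X ^ b₁ - 1))
              * (X ^ a₁ - 1) * (X ^ b₁ - 1) : Polynomial ℂ) = 0 := by
        apply mul_left_cancel₀ (Xpow_sub_one_ne b₁ hb)
        rw [mul_zero, ← hfac5]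
        linear_combination hR
      have he5 := congrArg (eval η) hS'
      simp only [eval_add, eval_sub, eval_mul, eval_pow, eval_X, eval_one, eval_zero] at he5
      rw [hη] at he5
      have hD4 : (η ^ a₁ - 1) * (η ^ c₁ - 1) = 0 := by linear_combination he5 / 2
      rcases mul_eq_zero.mp hD4 with h3 | h3
      · exact killA1 (hxeq a₁ ha (by omega) h3) hA2 hc2
      · have := hxle c₁ hc h3; omega
  · -- a₂ ≠ b₁
    rcases mul_eq_zero.mp hD with h1 | h1
    · -- a₁ = b₁  (C2)
      have ha1 : a₁ = b₁ := hxeq a₁ ha (by omega) h1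
      rw [ha1] at hQ₁
      have hfac6 : ((X ^ b₁ + 1) * (X ^ a₂ + 1) * (X ^ b₁ - 1) ^ 2 * (X ^ c₁ - 1) * (X ^ c₂ - 1)
          + ((X ^ b₁) ^ 2 + 1) * (X ^ b₁ - 1) * (X ^ a₂ - 1) * (X ^ c₁ - 1) * (X ^ c₂ - 1)
          - ((X ^ c₁ + 1) * (X ^ c₂ + 1) + (X ^ c₁ - 1) * (X ^ c₂ - 1))
              * (X ^ b₁ - 1) * (X ^ a₂ - 1) * (X ^ b₁ - 1) ^ 2 : Polynomial ℂ)
          = (X ^ b₁ - 1) *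
          ((X ^ b₁ + 1) * (X ^ a₂ + 1) * (X ^ b₁ - 1) * (X ^ c₁ - 1) * (X ^ c₂ - 1)
          + ((X ^ b₁) ^ 2 + 1) * (X ^ a₂ - 1) * (X ^ c₁ - 1) * (X ^ c₂ - 1)
          - ((X ^ c₁ + 1) * (X ^ c₂ + 1) + (X ^ c₁ - 1) * (X ^ c₂ - 1))
              * (X ^ a₂ - 1) * (X ^ b₁ - 1) ^ 2) := by ring
      have hR2 : ((X ^ b₁ + 1) * (X ^ a₂ + 1) * (X ^ b₁ - 1) * (X ^ c₁ - 1) * (X ^ c₂ - 1)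
          + ((X ^ b₁) ^ 2 + 1) * (X ^ a₂ - 1) * (X ^ c₁ - 1) * (X ^ c₂ - 1)
          - ((X ^ c₁ + 1) * (X ^ c₂ + 1) + (X ^ c₁ - 1) * (X ^ c₂ - 1))
              * (X ^ a₂ - 1) * (X ^ b₁ - 1) ^ 2 : Polynomial ℂ) = 0 := by
        apply mul_left_cancel₀ (Xpow_sub_one_ne b₁ hb)
        rw [mul_zero, ← hfac6]
        linear_combination hQ₁
      have he6 := congrArg (eval η) hR2
      simp only [eval_add, eval_sub, eval_mul, eval_pow, eval_X, eval_one, eval_zero] at he6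
      rw [hη] at he6
      have hD5 : (η ^ a₂ - 1) * ((η ^ c₁ - 1) * (η ^ c₂ - 1)) = 0 := by
        linear_combination he6 / 2
      rcases mul_eq_zero.mp hD5 with h2 | h2
      · exact hA2 (hxeq a₂ ha₂ (by omega) h2)
      rcases mul_eq_zero.mp h2 with h3 | h3
      · -- c₁ = b₁ with a₁ = b₁ : arithmetic kill (P2)
        have hc1 : c₁ = b₁ := hxeq c₁ hc (by omega) h3
        rw [ha1, hc1] at hI
        have e2 : b₁ ≤ c₂ := by omega
        have t1 : b₁ * a₂ * (b₁ * b₁) ≤ b₁ * a₂ * (b₁ * c₂) :=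
          Nat.mul_le_mul_left _ (Nat.mul_le_mul_left _ e2)
        have t2 : b₁ * (2 * b₁) * (b₁ * b₁) ≤ b₁ * (2 * b₁) * (b₁ * c₂) :=
          Nat.mul_le_mul_left _ (Nat.mul_le_mul_left _ e2)
        have t3 : b₁ * a₂ * (b₁ * (2 * b₁)) < b₁ * a₂ * (b₁ * b₁) + b₁ * (2 * b₁) * (b₁ * b₁) := by
          have h4 : b₁ * b₁ * b₁ * a₂ < b₁ * b₁ * b₁ * (2 * b₁) :=
            Nat.mul_lt_mul_of_le_of_lt (le_refl _) hab (by positivity)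
          nlinarith
        linarith
      · -- c₂ = b₁ with a₁ = b₁ : (P3)
        have hc2 : c₂ = b₁ := hxeq c₂ hc₂ (by omega) h3
        rw [hc2] at hR2
        have hfac7 : ((X ^ b₁ + 1) * (X ^ a₂ + 1) * (X ^ b₁ - 1) * (X ^ c₁ - 1) * (X ^ b₁ - 1)
            + ((X ^ b₁) ^ 2 + 1) * (X ^ a₂ - 1) * (X ^ c₁ - 1) * (X ^ b₁ - 1)
            - ((X ^ c₁ + 1) * (X ^ b₁ + 1) + (X ^ c₁ - 1) * (X ^ b₁ - 1))
                * (X ^ a₂ - 1) * (X ^ b₁ - 1) ^ 2 : Polynomial ℂ)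
            = (X ^ b₁ - 1) *
            ((X ^ b₁ + 1) * (X ^ a₂ + 1) * (X ^ b₁ - 1) * (X ^ c₁ - 1)
            + ((X ^ b₁) ^ 2 + 1) * (X ^ a₂ - 1) * (X ^ c₁ - 1)
            - ((X ^ c₁ + 1) * (X ^ b₁ + 1) + (X ^ c₁ - 1) * (X ^ b₁ - 1))
                * (X ^ a₂ - 1) * (X ^ b₁ - 1)) := by ring
        have hR3 : ((X ^ b₁ + 1) * (X ^ a₂ + 1) * (X ^ b₁ - 1) * (X ^ c₁ - 1)
            + ((X ^ b₁) ^ 2 + 1) * (X ^ a₂ - 1) * (X ^ c₁ - 1)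
            - ((X ^ c₁ + 1) * (X ^ b₁ + 1) + (X ^ c₁ - 1) * (X ^ b₁ - 1))
                * (X ^ a₂ - 1) * (X ^ b₁ - 1) : Polynomial ℂ) = 0 := by
          apply mul_left_cancel₀ (Xpow_sub_one_ne b₁ hb)
          rw [mul_zero, ← hfac7]
          linear_combination hR2
        have he7 := congrArg (eval η) hR3
        simp only [eval_add, eval_sub, eval_mul, eval_pow, eval_X, eval_one, eval_zero] at he7
        rw [hη] at he7
        have hD6 : (η ^ a₂ - 1) * (η ^ c₁ - 1) = 0 := by linear_combination he7 / 2
        rcases mul_eq_zero.mp hD6 with h4 | h4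
        · exact hA2 (hxeq a₂ ha₂ (by omega) h4)
        · -- c₁ = c₂ = b₁, a₁ = b₁ : arithmetic kill
          have hc1 : c₁ = b₁ := hxeq c₁ hc (by omega) h4
          rw [ha1, hc1, hc2] at hI
          have h4 : b₁ * b₁ * b₁ * a₂ < b₁ * b₁ * b₁ * (2 * b₁) :=
            Nat.mul_lt_mul_of_le_of_lt (le_refl _) hab (by positivity)
          nlinarith
    rcases mul_eq_zero.mp h1 with h2 | h2
    · exact hA2 (hxeq a₂ ha₂ (by omega) h2)
    rcases mul_eq_zero.mp h2 with h3 | h3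
    · -- c₁ = b₁  (C3 / P2 / P6)
      have hc1 : c₁ = b₁ := hxeq c₁ hc (by omega) h3
      by_cases hA1 : a₁ = b₁
      · -- P2 arithmetic kill again
        rw [hA1, hc1] at hI
        have e2 : b₁ ≤ c₂ := by omega
        have t1 : b₁ * a₂ * (b₁ * b₁) ≤ b₁ * a₂ * (b₁ * c₂) :=
          Nat.mul_le_mul_left _ (Nat.mul_le_mul_left _ e2)
        have t2 : b₁ * (2 * b₁) * (b₁ * b₁) ≤ b₁ * (2 * b₁) * (b₁ * c₂) :=
          Nat.mul_le_mul_left _ (Nat.mul_le_mul_left _ e2)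
        have t3 : b₁ * a₂ * (b₁ * (2 * b₁)) < b₁ * a₂ * (b₁ * b₁) + b₁ * (2 * b₁) * (b₁ * b₁) := by
          have h4 : b₁ * b₁ * b₁ * a₂ < b₁ * b₁ * b₁ * (2 * b₁) :=
            Nat.mul_lt_mul_of_le_of_lt (le_refl _) hab (by positivity)
          nlinarith
        linarith
      · -- C3 : c₁ = b₁, a₁ ≠ b₁, a₂ ≠ b₁
        rw [hc1] at hQ₁
        have hfac8 : ((X ^ a₁ + 1) * (X ^ a₂ + 1) * (X ^ b₁ - 1) ^ 2 * (X ^ b₁ - 1) * (X ^ c₂ - 1)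
            + ((X ^ b₁) ^ 2 + 1) * (X ^ a₁ - 1) * (X ^ a₂ - 1) * (X ^ b₁ - 1) * (X ^ c₂ - 1)
            - ((X ^ b₁ + 1) * (X ^ c₂ + 1) + (X ^ b₁ - 1) * (X ^ c₂ - 1))
                * (X ^ a₁ - 1) * (X ^ a₂ - 1) * (X ^ b₁ - 1) ^ 2 : Polynomial ℂ)
            = (X ^ b₁ - 1) *
            ((X ^ a₁ + 1) * (X ^ a₂ + 1) * (X ^ b₁ - 1) ^ 2 * (X ^ c₂ - 1)
            + ((X ^ b₁) ^ 2 + 1) * (X ^ a₁ - 1) * (X ^ a₂ - 1) * (X ^ c₂ - 1)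
            - ((X ^ b₁ + 1) * (X ^ c₂ + 1) + (X ^ b₁ - 1) * (X ^ c₂ - 1))
                * (X ^ a₁ - 1) * (X ^ a₂ - 1) * (X ^ b₁ - 1)) := by ring
        have hR4 : ((X ^ a₁ + 1) * (X ^ a₂ + 1) * (X ^ b₁ - 1) ^ 2 * (X ^ c₂ - 1)
            + ((X ^ b₁) ^ 2 + 1) * (X ^ a₁ - 1) * (X ^ a₂ - 1) * (X ^ c₂ - 1)
            - ((X ^ b₁ + 1) * (X ^ c₂ + 1) + (X ^ b₁ - 1) * (X ^ c₂ - 1))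
                * (X ^ a₁ - 1) * (X ^ a₂ - 1) * (X ^ b₁ - 1) : Polynomial ℂ) = 0 := by
          apply mul_left_cancel₀ (Xpow_sub_one_ne b₁ hb)
          rw [mul_zero, ← hfac8]
          linear_combination hQ₁
        have he8 := congrArg (eval η) hR4
        simp only [eval_add, eval_sub, eval_mul, eval_pow, eval_X, eval_one, eval_zero] at he8
        rw [hη] at he8
        have hD7 : (η ^ a₁ - 1) * ((η ^ a₂ - 1) * (η ^ c₂ - 1)) = 0 := by
          linear_combination he8 / 2
        rcases mul_eq_zero.mp hD7 with h4 | h4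
        · exact hA1 (hxeq a₁ ha (by omega) h4)
        rcases mul_eq_zero.mp h4 with h5 | h5
        · exact hA2 (hxeq a₂ ha₂ (by omega) h5)
        · -- c₂ = b₁ as well (P6)
          have hc2 : c₂ = b₁ := hxeq c₂ hc₂ (by omega) h5
          rw [hc2] at hR4
          have hfac9 : ((X ^ a₁ + 1) * (X ^ a₂ + 1) * (X ^ b₁ - 1) ^ 2 * (X ^ b₁ - 1)
              + ((X ^ b₁) ^ 2 + 1) * (X ^ a₁ - 1) * (X ^ a₂ - 1) * (X ^ b₁ - 1)
              - ((X ^ b₁ + 1) * (X ^ b₁ + 1) + (X ^ b₁ - 1) * (X ^ b₁ - 1))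
                  * (X ^ a₁ - 1) * (X ^ a₂ - 1) * (X ^ b₁ - 1) : Polynomial ℂ)
              = (X ^ b₁ - 1) *
              ((X ^ a₁ + 1) * (X ^ a₂ + 1) * (X ^ b₁ - 1) ^ 2
              + ((X ^ b₁) ^ 2 + 1) * (X ^ a₁ - 1) * (X ^ a₂ - 1)
              - ((X ^ b₁ + 1) ^ 2 + (X ^ b₁ - 1) ^ 2) * (X ^ a₁ - 1) * (X ^ a₂ - 1)) := by ring
          have hR5 : ((X ^ a₁ + 1) * (X ^ a₂ + 1) * (X ^ b₁ - 1) ^ 2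
              + ((X ^ b₁) ^ 2 + 1) * (X ^ a₁ - 1) * (X ^ a₂ - 1)
              - ((X ^ b₁ + 1) ^ 2 + (X ^ b₁ - 1) ^ 2) * (X ^ a₁ - 1) * (X ^ a₂ - 1)
              : Polynomial ℂ) = 0 := by
            apply mul_left_cancel₀ (Xpow_sub_one_ne b₁ hb)
            rw [mul_zero, ← hfac9]
            linear_combination hR4
          have he9 := congrArg (eval η) hR5
          simp only [eval_add, eval_sub, eval_mul, eval_pow, eval_X, eval_one, eval_zero] at he9
          rw [hη] at he9
          have hD8 : (η ^ a₁ - 1) * (η ^ a₂ - 1) = 0 := by linear_combination -he9 / 2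
          rcases mul_eq_zero.mp hD8 with h6 | h6
          · exact hA1 (hxeq a₁ ha (by omega) h6)
          · exact hA2 (hxeq a₂ ha₂ (by omega) h6)
    · -- c₂ = b₁  (C4 family)
      have hc2 : c₂ = b₁ := hxeq c₂ hc₂ (by omega) h3
      by_cases hA1 : a₁ = b₁
      · -- a₁ = b₁, c₂ = b₁ : P3 chain again
        rw [hA1] at hQ₁
        have hfac6 : ((X ^ b₁ + 1) * (X ^ a₂ + 1) * (X ^ b₁ - 1) ^ 2 * (X ^ c₁ - 1) * (X ^ c₂ - 1)
            + ((X ^ b₁) ^ 2 + 1) * (X ^ b₁ - 1) * (X ^ a₂ - 1) * (X ^ c₁ - 1) * (X ^ c₂ - 1)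
            - ((X ^ c₁ + 1) * (X ^ c₂ + 1) + (X ^ c₁ - 1) * (X ^ c₂ - 1))
                * (X ^ b₁ - 1) * (X ^ a₂ - 1) * (X ^ b₁ - 1) ^ 2 : Polynomial ℂ)
            = (X ^ b₁ - 1) *
            ((X ^ b₁ + 1) * (X ^ a₂ + 1) * (X ^ b₁ - 1) * (X ^ c₁ - 1) * (X ^ c₂ - 1)
            + ((X ^ b₁) ^ 2 + 1) * (X ^ a₂ - 1) * (X ^ c₁ - 1) * (X ^ c₂ - 1)
            - ((X ^ c₁ + 1) * (X ^ c₂ + 1) + (X ^ c₁ - 1) * (X ^ c₂ - 1))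
                * (X ^ a₂ - 1) * (X ^ b₁ - 1) ^ 2) := by ring
        have hR2 : ((X ^ b₁ + 1) * (X ^ a₂ + 1) * (X ^ b₁ - 1) * (X ^ c₁ - 1) * (X ^ c₂ - 1)
            + ((X ^ b₁) ^ 2 + 1) * (X ^ a₂ - 1) * (X ^ c₁ - 1) * (X ^ c₂ - 1)
            - ((X ^ c₁ + 1) * (X ^ c₂ + 1) + (X ^ c₁ - 1) * (X ^ c₂ - 1))
                * (X ^ a₂ - 1) * (X ^ b₁ - 1) ^ 2 : Polynomial ℂ) = 0 := by
          apply mul_left_cancel₀ (Xpow_sub_one_ne b₁ hb)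
          rw [mul_zero, ← hfac6]
          linear_combination hQ₁
        rw [hc2] at hR2
        have hfac7 : ((X ^ b₁ + 1) * (X ^ a₂ + 1) * (X ^ b₁ - 1) * (X ^ c₁ - 1) * (X ^ b₁ - 1)
            + ((X ^ b₁) ^ 2 + 1) * (X ^ a₂ - 1) * (X ^ c₁ - 1) * (X ^ b₁ - 1)
            - ((X ^ c₁ + 1) * (X ^ b₁ + 1) + (X ^ c₁ - 1) * (X ^ b₁ - 1))
                * (X ^ a₂ - 1) * (X ^ b₁ - 1) ^ 2 : Polynomial ℂ)
            = (X ^ b₁ - 1) *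
            ((X ^ b₁ + 1) * (X ^ a₂ + 1) * (X ^ b₁ - 1) * (X ^ c₁ - 1)
            + ((X ^ b₁) ^ 2 + 1) * (X ^ a₂ - 1) * (X ^ c₁ - 1)
            - ((X ^ c₁ + 1) * (X ^ b₁ + 1) + (X ^ c₁ - 1) * (X ^ b₁ - 1))
                * (X ^ a₂ - 1) * (X ^ b₁ - 1)) := by ring
        have hR3 : ((X ^ b₁ + 1) * (X ^ a₂ + 1) * (X ^ b₁ - 1) * (X ^ c₁ - 1)
            + ((X ^ b₁) ^ 2 + 1) * (X ^ a₂ - 1) * (X ^ c₁ - 1)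
            - ((X ^ c₁ + 1) * (X ^ b₁ + 1) + (X ^ c₁ - 1) * (X ^ b₁ - 1))
                * (X ^ a₂ - 1) * (X ^ b₁ - 1) : Polynomial ℂ) = 0 := by
          apply mul_left_cancel₀ (Xpow_sub_one_ne b₁ hb)
          rw [mul_zero, ← hfac7]
          linear_combination hR2
        have he7 := congrArg (eval η) hR3
        simp only [eval_add, eval_sub, eval_mul, eval_pow, eval_X, eval_one, eval_zero] at he7
        rw [hη] at he7
        have hD6 : (η ^ a₂ - 1) * (η ^ c₁ - 1) = 0 := by linear_combination he7 / 2
        rcases mul_eq_zero.mp hD6 with h4 | h4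
        · exact hA2 (hxeq a₂ ha₂ (by omega) h4)
        · have hc1 : c₁ = b₁ := hxeq c₁ hc (by omega) h4
          rw [hA1, hc1, hc2] at hI
          have h5 : b₁ * b₁ * b₁ * a₂ < b₁ * b₁ * b₁ * (2 * b₁) :=
            Nat.mul_lt_mul_of_le_of_lt (le_refl _) hab (by positivity)
          nlinarith
      · by_cases hC1 : c₁ = b₁
        · -- c₁ = c₂ = b₁ : P6 chain
          rw [hC1] at hQ₁
          have hfac8 : ((X ^ a₁ + 1) * (X ^ a₂ + 1) * (X ^ b₁ - 1) ^ 2 * (X ^ b₁ - 1) * (X ^ c₂ - 1)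
              + ((X ^ b₁) ^ 2 + 1) * (X ^ a₁ - 1) * (X ^ a₂ - 1) * (X ^ b₁ - 1) * (X ^ c₂ - 1)
              - ((X ^ b₁ + 1) * (X ^ c₂ + 1) + (X ^ b₁ - 1) * (X ^ c₂ - 1))
                  * (X ^ a₁ - 1) * (X ^ a₂ - 1) * (X ^ b₁ - 1) ^ 2 : Polynomial ℂ)
              = (X ^ b₁ - 1) *
              ((X ^ a₁ + 1) * (X ^ a₂ + 1) * (X ^ b₁ - 1) ^ 2 * (X ^ c₂ - 1)
              + ((X ^ b₁) ^ 2 + 1) * (X ^ a₁ - 1) * (X ^ a₂ - 1) * (X ^ c₂ - 1)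
              - ((X ^ b₁ + 1) * (X ^ c₂ + 1) + (X ^ b₁ - 1) * (X ^ c₂ - 1))
                  * (X ^ a₁ - 1) * (X ^ a₂ - 1) * (X ^ b₁ - 1)) := by ring
          have hR4 : ((X ^ a₁ + 1) * (X ^ a₂ + 1) * (X ^ b₁ - 1) ^ 2 * (X ^ c₂ - 1)
              + ((X ^ b₁) ^ 2 + 1) * (X ^ a₁ - 1) * (X ^ a₂ - 1) * (X ^ c₂ - 1)
              - ((X ^ b₁ + 1) * (X ^ c₂ + 1) + (X ^ b₁ - 1) * (X ^ c₂ - 1))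
                  * (X ^ a₁ - 1) * (X ^ a₂ - 1) * (X ^ b₁ - 1) : Polynomial ℂ) = 0 := by
            apply mul_left_cancel₀ (Xpow_sub_one_ne b₁ hb)
            rw [mul_zero, ← hfac8]
            linear_combination hQ₁
          rw [hc2] at hR4
          have hfac9 : ((X ^ a₁ + 1) * (X ^ a₂ + 1) * (X ^ b₁ - 1) ^ 2 * (X ^ b₁ - 1)
              + ((X ^ b₁) ^ 2 + 1) * (X ^ a₁ - 1) * (X ^ a₂ - 1) * (X ^ b₁ - 1)
              - ((X ^ b₁ + 1) * (X ^ b₁ + 1) + (X ^ b₁ - 1) * (X ^ b₁ - 1))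
                  * (X ^ a₁ - 1) * (X ^ a₂ - 1) * (X ^ b₁ - 1) : Polynomial ℂ)
              = (X ^ b₁ - 1) *
              ((X ^ a₁ + 1) * (X ^ a₂ + 1) * (X ^ b₁ - 1) ^ 2
              + ((X ^ b₁) ^ 2 + 1) * (X ^ a₁ - 1) * (X ^ a₂ - 1)
              - ((X ^ b₁ + 1) ^ 2 + (X ^ b₁ - 1) ^ 2) * (X ^ a₁ - 1) * (X ^ a₂ - 1)) := by ring
          have hR5 : ((X ^ a₁ + 1) * (X ^ a₂ + 1) * (X ^ b₁ - 1) ^ 2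
              + ((X ^ b₁) ^ 2 + 1) * (X ^ a₁ - 1) * (X ^ a₂ - 1)
              - ((X ^ b₁ + 1) ^ 2 + (X ^ b₁ - 1) ^ 2) * (X ^ a₁ - 1) * (X ^ a₂ - 1)
              : Polynomial ℂ) = 0 := by
            apply mul_left_cancel₀ (Xpow_sub_one_ne b₁ hb)
            rw [mul_zero, ← hfac9]
            linear_combination hR4
          have he9 := congrArg (eval η) hR5
          simp only [eval_add, eval_sub, eval_mul, eval_pow, eval_X, eval_one, eval_zero] at he9
          rw [hη] at he9
          have hD8 : (η ^ a₁ - 1) * (η ^ a₂ - 1) = 0 := by linear_combination -he9 / 2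
          rcases mul_eq_zero.mp hD8 with h6 | h6
          · exact hA1 (hxeq a₁ ha (by omega) h6)
          · exact hA2 (hxeq a₂ ha₂ (by omega) h6)
        · -- pure C4 : c₂ = b₁ and a₁, a₂, c₁ ≠ b₁
          rw [hc2] at hQ₁
          have hfac10 : ((X ^ a₁ + 1) * (X ^ a₂ + 1) * (X ^ b₁ - 1) ^ 2 * (X ^ c₁ - 1) * (X ^ b₁ - 1)
              + ((X ^ b₁) ^ 2 + 1) * (X ^ a₁ - 1) * (X ^ a₂ - 1) * (X ^ c₁ - 1) * (X ^ b₁ - 1)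
              - ((X ^ c₁ + 1) * (X ^ b₁ + 1) + (X ^ c₁ - 1) * (X ^ b₁ - 1))
                  * (X ^ a₁ - 1) * (X ^ a₂ - 1) * (X ^ b₁ - 1) ^ 2 : Polynomial ℂ)
              = (X ^ b₁ - 1) *
              ((X ^ a₁ + 1) * (X ^ a₂ + 1) * (X ^ b₁ - 1) ^ 2 * (X ^ c₁ - 1)
              + ((X ^ b₁) ^ 2 + 1) * (X ^ a₁ - 1) * (X ^ a₂ - 1) * (X ^ c₁ - 1)
              - ((X ^ c₁ + 1) * (X ^ b₁ + 1) + (X ^ c₁ - 1) * (X ^ b₁ - 1))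
                  * (X ^ a₁ - 1) * (X ^ a₂ - 1) * (X ^ b₁ - 1)) := by ring
          have hR6 : ((X ^ a₁ + 1) * (X ^ a₂ + 1) * (X ^ b₁ - 1) ^ 2 * (X ^ c₁ - 1)
              + ((X ^ b₁) ^ 2 + 1) * (X ^ a₁ - 1) * (X ^ a₂ - 1) * (X ^ c₁ - 1)
              - ((X ^ c₁ + 1) * (X ^ b₁ + 1) + (X ^ c₁ - 1) * (X ^ b₁ - 1))
                  * (X ^ a₁ - 1) * (X ^ a₂ - 1) * (X ^ b₁ - 1) : Polynomial ℂ) = 0 := by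
            apply mul_left_cancel₀ (Xpow_sub_one_ne b₁ hb)
            rw [mul_zero, ← hfac10]
            linear_combination hQ₁
          have he10 := congrArg (eval η) hR6
          simp only [eval_add, eval_sub, eval_mul, eval_pow, eval_X, eval_one, eval_zero] at he10
          rw [hη] at he10
          have hD9 : (η ^ a₁ - 1) * ((η ^ a₂ - 1) * (η ^ c₁ - 1)) = 0 := by
            linear_combination he10 / 2
          rcases mul_eq_zero.mp hD9 with h6 | h6
          · exact hA1 (hxeq a₁ ha (by omega) h6)
          rcases mul_eq_zero.mp h6 with h7 | h7
          · exact hA2 (hxeq a₂ ha₂ (by omega) h7)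
          · exact hC1 (hxeq c₁ hc (by omega) h7)

/-- Second step of Theorem 2.3: under the m = 3, n = 2 rigidity equation with
a₂ ≤ b₂, the maximal power occurs twice: a₂ = b₂. -/
theorem stmt_10 (a₁ a₂ b₁ b₂ c₁ c₂ : ℕ)
    (ha : 0 < a₁) (hb : 0 < b₁) (hc : 0 < c₁)
    (ha' : a₁ ≤ a₂) (hb' : b₁ ≤ b₂) (hc' : c₁ ≤ c₂) (hab : a₂ ≤ b₂)
    (heq : ∀ z : ℂ, z ≠ 0 → z ^ a₁ ≠ 1 → z ^ a₂ ≠ 1 → z ^ b₁ ≠ 1 → z ^ b₂ ≠ 1 →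
      z ^ c₁ ≠ 1 → z ^ c₂ ≠ 1 →
      (z ^ a₁ + 1) * (z ^ a₂ + 1) / ((z ^ a₁ - 1) * (z ^ a₂ - 1))
        + (z ^ b₁ + 1) * (z ^ b₂ + 1) / ((z ^ b₁ - 1) * (z ^ b₂ - 1))
      = (z ^ c₁ + 1) * (z ^ c₂ + 1) / ((z ^ c₁ - 1) * (z ^ c₂ - 1)) + 1) :
    a₂ = b₂ := by
  rcases eq_or_lt_of_le hab with h | hab'
  · exact h
  · exfalso
    have ha₂ : 0 < a₂ := lt_of_lt_of_le ha ha'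
    have hb₂ : 0 < b₂ := lt_of_lt_of_le hb hb'
    have hc₂ : 0 < c₂ := lt_of_lt_of_le hc hc'
    have hP0 : Pp a₁ a₂ b₁ b₂ c₁ c₂ = 0 := polyP a₁ a₂ b₁ b₂ c₁ c₂ ha ha₂ hb hb₂ hc hc₂ heq
    have hI : a₁ * a₂ * (c₁ * c₂) + b₁ * b₂ * (c₁ * c₂) = a₁ * a₂ * (b₁ * b₂) :=
      relI a₁ a₂ b₁ b₂ c₁ c₂ (funP hP0)
    obtain ⟨hZA, hZB, hc₁a₂, hc₁b₂⟩ := ineqI ha hb hc ha' hb' hc' hI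
    have hcb : c₂ < b₂ := stepA a₁ a₂ b₁ b₂ c₁ c₂ ha hb hc ha' hb' hc' hab' hP0 hI
    have hb2 : b₂ = 2 * b₁ := step3 a₁ a₂ b₁ b₂ c₁ c₂ ha hb hc ha' hb' hc' hab' hcb hP0
    subst hb2
    exact endgame a₁ a₂ b₁ c₁ c₂ ha hb hc ha' hc' hab' hcb hc₁a₂ hP0 hI
end

section
/- Let a_1, b_1, c_1, c_2, a_2 be positive integers with a_2 = a_1 + b_1 satisfying identically in z: (z^{a_2}+1)(z^{a_1+b_1}−1)/((z^{a_2}−1)(z^{a_1}−1)(z^{b_1}−1)) = (z^{c_1+c_2}+1)/((z^{c_1}−1)(z^{c_2}−1)). Then c_1 + c_2 = a_1 + b_1 and {c_1, c_2} = {a_1, b_1}. -/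
open Polynomial

/-- Equation (2.7): if (z^{a₂}+1)(z^{a₁+b₁}-1)/((z^{a₂}-1)(z^{a₁}-1)(z^{b₁}-1))
= (z^{c₁+c₂}+1)/((z^{c₁}-1)(z^{c₂}-1)) identically, with a₂ = a₁ + b₁, then
c₁ + c₂ = a₁ + b₁ and {c₁, c₂} = {a₁, b₁}. -/
theorem stmt_11 (a₁ b₁ c₁ c₂ a₂ : ℕ)
    (ha : 0 < a₁) (hb : 0 < b₁) (hc₁ : 0 < c₁) (hc₂ : 0 < c₂)
    (ha₂ : a₂ = a₁ + b₁)
    (heq : ∀ z : ℂ, z ≠ 0 → z ^ a₂ ≠ 1 → z ^ a₁ ≠ 1 → z ^ b₁ ≠ 1 →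
      z ^ c₁ ≠ 1 → z ^ c₂ ≠ 1 →
      (z ^ a₂ + 1) * (z ^ (a₁ + b₁) - 1) / ((z ^ a₂ - 1) * (z ^ a₁ - 1) * (z ^ b₁ - 1))
        = (z ^ (c₁ + c₂) + 1) / ((z ^ c₁ - 1) * (z ^ c₂ - 1))) :
    c₁ + c₂ = a₁ + b₁ ∧ ((c₁ = a₁ ∧ c₂ = b₁) ∨ (c₁ = b₁ ∧ c₂ = a₁)) := by
  subst ha₂
  -- Step 1: polynomial identity P = Q
  have hPQ : ((X : ℂ[X]) ^ (a₁ + b₁) + 1) * (X ^ c₁ - 1) * (X ^ c₂ - 1)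
      = (X ^ (c₁ + c₂) + 1) * (X ^ a₁ - 1) * (X ^ b₁ - 1) := by
    rw [← sub_eq_zero]
    apply Polynomial.eq_zero_of_infinite_isRoot
    apply Set.Infinite.mono (s := Complex.ofReal '' Set.Ioi (1 : ℝ))
    · rintro z ⟨x, hx, rfl⟩
      have hx1 : (1 : ℝ) < x := hx
      have hpow : ∀ n : ℕ, 0 < n → ((x : ℂ)) ^ n ≠ 1 := by
        intro n hn h
        have h2 : ((x ^ n : ℝ) : ℂ) = ((1 : ℝ) : ℂ) := by push_cast; exact h
        have h3 : x ^ n = 1 := Complex.ofReal_injective h2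
        have h4 : (1 : ℝ) < x ^ n := one_lt_pow₀ hx1 hn.ne'
        linarith
      have hz0 : (x : ℂ) ≠ 0 := by
        intro h
        have : x = 0 := Complex.ofReal_injective (by simpa using h)
        linarith
      have hA : 0 < a₁ + b₁ := by omega
      have h := heq x hz0 (hpow _ hA) (hpow _ ha) (hpow _ hb) (hpow _ hc₁) (hpow _ hc₂)
      have hdA : ((x : ℂ)) ^ (a₁ + b₁) - 1 ≠ 0 := sub_ne_zero_of_ne (hpow _ hA)
      have hda : ((x : ℂ)) ^ a₁ - 1 ≠ 0 := sub_ne_zero_of_ne (hpow _ ha)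
      have hdb : ((x : ℂ)) ^ b₁ - 1 ≠ 0 := sub_ne_zero_of_ne (hpow _ hb)
      have hdc₁ : ((x : ℂ)) ^ c₁ - 1 ≠ 0 := sub_ne_zero_of_ne (hpow _ hc₁)
      have hdc₂ : ((x : ℂ)) ^ c₂ - 1 ≠ 0 := sub_ne_zero_of_ne (hpow _ hc₂)
      have h' : ((x : ℂ) ^ (a₁ + b₁) + 1) * ((x : ℂ) ^ (a₁ + b₁) - 1)
            * (((x : ℂ) ^ c₁ - 1) * ((x : ℂ) ^ c₂ - 1))
          = ((x : ℂ) ^ (c₁ + c₂) + 1)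
            * (((x : ℂ) ^ (a₁ + b₁) - 1) * ((x : ℂ) ^ a₁ - 1) * ((x : ℂ) ^ b₁ - 1)) := by
        exact (div_eq_div_iff (mul_ne_zero (mul_ne_zero hdA hda) hdb)
          (mul_ne_zero hdc₁ hdc₂)).mp h
      have hcancel : ((x : ℂ) ^ (a₁ + b₁) + 1) * ((x : ℂ) ^ c₁ - 1) * ((x : ℂ) ^ c₂ - 1)
          = ((x : ℂ) ^ (c₁ + c₂) + 1) * ((x : ℂ) ^ a₁ - 1) * ((x : ℂ) ^ b₁ - 1) := by
        apply mul_right_cancel₀ hdA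
        linear_combination h'
      show Polynomial.IsRoot _ _
      simp only [IsRoot, eval_sub, eval_mul, eval_add, eval_pow, eval_X, eval_one]
      linear_combination hcancel
    · exact (Set.Ioi_infinite (1 : ℝ)).image Complex.ofReal_injective.injOn
  -- Step 2: coefficient identity
  have hN : ∀ n : ℕ,
      ((if n = c₁ then 1 else 0) + (if n = c₂ then 1 else 0)
        + (if n = a₁ + b₁ + c₁ then 1 else 0) + (if n = a₁ + b₁ + c₂ then 1 else 0) : ℕ)
      = (if n = a₁ then 1 else 0) + (if n = b₁ then 1 else 0)
        + (if n = c₁ + c₂ + a₁ then 1 else 0) + (if n = c₁ + c₂ + b₁ then 1 else 0) := by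
    intro n
    have h2 : ((X : ℂ[X]) ^ c₁ + X ^ c₂ + X ^ (a₁ + b₁ + c₁) + X ^ (a₁ + b₁ + c₂))
        = (X ^ a₁ + X ^ b₁ + X ^ (c₁ + c₂ + a₁) + X ^ (c₁ + c₂ + b₁)) := by
      linear_combination -hPQ
    have h3 := congrArg (fun p => Polynomial.coeff p n) h2
    simp only [coeff_add, coeff_X_pow] at h3
    exact_mod_cast h3
  have hm1 : c₁ = a₁ ∨ c₁ = b₁ ∨ c₁ = c₁ + c₂ + a₁ ∨ c₁ = c₁ + c₂ + b₁ := by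
    have := hN c₁; simp at this; split_ifs at this <;> omega
  have hm2 : c₂ = a₁ ∨ c₂ = b₁ ∨ c₂ = c₁ + c₂ + a₁ ∨ c₂ = c₁ + c₂ + b₁ := by
    have := hN c₂; simp at this; split_ifs at this <;> omega
  have hm3 : a₁ = c₁ ∨ a₁ = c₂ ∨ a₁ = a₁ + b₁ + c₁ ∨ a₁ = a₁ + b₁ + c₂ := by
    have := hN a₁; simp at this; split_ifs at this <;> omega
  have hm4 : b₁ = c₁ ∨ b₁ = c₂ ∨ b₁ = a₁ + b₁ + c₁ ∨ b₁ = a₁ + b₁ + c₂ := by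
    have := hN b₁; simp at this; split_ifs at this <;> omega
  omega
end

section
/- Let W be a 2 × n matrix of nonzero integers with signs ε_1, ε_2 ∈ {1,-1} such that T(z) = ε_1 Π_j (x z^{w_{1j}} + y)/(z^{w_{1j}} − 1) + ε_2 Π_j (x z^{w_{2j}} + y)/(z^{w_{2j}} − 1) is independent of z for all complex x, y. Assume |w_{11}| ≥ … ≥ |w_{1n}| and |w_{21}| ≥ … ≥ |w_{2n}|. Then |w_{1i}| = |w_{2i}| for all i = 1, …, n. -/
open Filter Finset Topology Polynomial

namespace Stmt12Aux

lemma finite_pow_eq_one (m : ℕ) (hm : m ≠ 0) : {z : ℂ | z ^ m = 1}.Finite := by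
  have hp : (X ^ m - C 1 : Polynomial ℂ) ≠ 0 :=
    X_pow_sub_C_ne_zero (Nat.pos_of_ne_zero hm) 1
  refine (Polynomial.finite_setOf_isRoot hp).subset ?_
  intro z hz
  simp only [Set.mem_setOf_eq, IsRoot, eval_sub, eval_pow, eval_X, eval_C] at *
  rw [hz, sub_self]

lemma eventually_pow_ne_one (ζ : ℂ) (m : ℕ) (hm : m ≠ 0) :
    ∀ᶠ z in 𝓝[≠] ζ, z ^ m ≠ 1 := by
  have hfin : ({z : ℂ | z ^ m = 1} \ {ζ}).Finite := (finite_pow_eq_one m hm).diff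
  have hcl : IsClosed ({z : ℂ | z ^ m = 1} \ {ζ}) := hfin.isClosed
  have hζ : ζ ∈ ({z : ℂ | z ^ m = 1} \ {ζ})ᶜ := fun h => h.2 rfl
  have h1 : ∀ᶠ z in 𝓝 ζ, z ∈ ({z : ℂ | z ^ m = 1} \ {ζ})ᶜ :=
    hcl.isOpen_compl.eventually_mem hζ
  have h2 : ∀ᶠ z in 𝓝[≠] ζ, z ≠ ζ := eventually_mem_nhdsWithin
  filter_upwards [h1.filter_mono nhdsWithin_le_nhds, h2] with z h1 h2 hpow
  exact h1 ⟨hpow, h2⟩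

lemma zpow_ne_one_of_natAbs {z : ℂ} (w : ℤ) (h : z ^ w.natAbs ≠ 1) :
    z ^ w ≠ 1 := by
  intro hw
  apply h
  rcases Int.natAbs_eq w with he | he
  · rw [← zpow_natCast, ← he]; exact hw
  · rw [← zpow_natCast, show ((w.natAbs : ℤ)) = -w by omega, zpow_neg, hw, inv_one]

lemma num_ne_zero {ζ : ℂ} {d : ℕ} (hd : d ≠ 0) (hζ : IsPrimitiveRoot ζ d) (w : ℤ) :
    ζ ^ w + 2 ≠ 0 := by
  intro hcon
  have h1 : ‖ζ ^ w‖ = 1 := by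
    rw [norm_zpow, Complex.norm_eq_one_of_pow_eq_one hζ.pow_eq_one hd, one_zpow]
  have h2 : ζ ^ w = -2 := by linear_combination hcon
  rw [h2] at h1
  norm_num at h1

lemma div_factor_tendsto {ζ : ℂ} {d : ℕ} (hd : d ≠ 0) (hζ : IsPrimitiveRoot ζ d)
    {w : ℤ} (hw : w ≠ 0) (hdvd : (d : ℤ) ∣ w) :
    Tendsto (fun z : ℂ => (z - ζ) * ((z ^ w + 2) / (z ^ w - 1))) (𝓝[≠] ζ)
      (𝓝 ((ζ ^ w + 2) * ((w : ℂ) * ζ ^ (w - 1))⁻¹)) := by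
  have hζ0 : ζ ≠ 0 := hζ.ne_zero hd
  have hζw : ζ ^ w = 1 := (hζ.zpow_eq_one_iff_dvd w).mpr hdvd
  have hder : HasDerivAt (fun z : ℂ => z ^ w - 1) ((w : ℂ) * ζ ^ (w - 1)) ζ :=
    (hasDerivAt_zpow w ζ (Or.inl hζ0)).sub_const 1
  have hslope := hasDerivAt_iff_tendsto_slope.mp hder
  have hD : (w : ℂ) * ζ ^ (w - 1) ≠ 0 :=
    mul_ne_zero (Int.cast_ne_zero.mpr hw) (zpow_ne_zero _ hζ0)
  have hinv := hslope.inv₀ hD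
  have hnum : Tendsto (fun z : ℂ => z ^ w + 2) (𝓝[≠] ζ) (𝓝 (ζ ^ w + 2)) :=
    (((continuousAt_zpow₀ ζ w (Or.inl hζ0)).add continuousAt_const).tendsto).mono_left
      nhdsWithin_le_nhds
  refine (hnum.mul hinv).congr' ?_
  filter_upwards [eventually_mem_nhdsWithin] with z hz
  have hzζ : (z : ℂ) ≠ ζ := hz
  have hs : slope (fun z : ℂ => z ^ w - 1) ζ z = (z ^ w - 1) / (z - ζ) := by
    rw [slope_def_field]
    rw [show ζ ^ w - 1 = 0 by rw [hζw]; ring]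
    ring_nf
  rw [hs]
  rcases eq_or_ne (z ^ w - 1) 0 with h0 | h0
  · simp [h0]
  · rw [inv_div]
    field_simp

lemma prod_tendsto {n : ℕ} (w : Fin n → ℤ) (hw : ∀ j, w j ≠ 0)
    {d : ℕ} (hd : d ≠ 0) {ζ : ℂ} (hζ : IsPrimitiveRoot ζ d) :
    ∃ A : ℂ, A ≠ 0 ∧ Tendsto (fun z : ℂ =>
        (z - ζ) ^ (univ.filter fun j => (d : ℤ) ∣ w j).card *
          ∏ j, (z ^ w j + 2) / (z ^ w j - 1)) (𝓝[≠] ζ) (𝓝 A) := by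
  have hζ0 : ζ ≠ 0 := hζ.ne_zero hd
  set S : Finset (Fin n) := univ.filter fun j => (d : ℤ) ∣ w j with hS
  refine ⟨(∏ j ∈ S, (ζ ^ w j + 2) * ((w j : ℂ) * ζ ^ (w j - 1))⁻¹) *
      ∏ j ∈ univ.filter fun j => ¬ (d : ℤ) ∣ w j, (ζ ^ w j + 2) / (ζ ^ w j - 1), ?_, ?_⟩
  · apply mul_ne_zero
    · rw [Finset.prod_ne_zero_iff]
      intro j _
      exact mul_ne_zero (num_ne_zero hd hζ _)
        (inv_ne_zero (mul_ne_zero (Int.cast_ne_zero.mpr (hw j)) (zpow_ne_zero _ hζ0)))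
    · rw [Finset.prod_ne_zero_iff]
      intro j hj
      have hnd : ¬ (d : ℤ) ∣ w j := (Finset.mem_filter.mp hj).2
      have : ζ ^ w j ≠ 1 := fun h => hnd ((hζ.zpow_eq_one_iff_dvd _).mp h)
      exact div_ne_zero (num_ne_zero hd hζ _) (sub_ne_zero.mpr this)
  · have h1 : Tendsto (fun z : ℂ => ∏ j ∈ S, (z - ζ) * ((z ^ w j + 2) / (z ^ w j - 1)))
        (𝓝[≠] ζ) (𝓝 (∏ j ∈ S, (ζ ^ w j + 2) * ((w j : ℂ) * ζ ^ (w j - 1))⁻¹)) := by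
      apply tendsto_finset_prod
      intro j hj
      exact div_factor_tendsto hd hζ (hw j) (Finset.mem_filter.mp hj).2
    have h2 : Tendsto (fun z : ℂ => ∏ j ∈ univ.filter fun j => ¬ (d : ℤ) ∣ w j,
          (z ^ w j + 2) / (z ^ w j - 1)) (𝓝[≠] ζ)
        (𝓝 (∏ j ∈ univ.filter fun j => ¬ (d : ℤ) ∣ w j, (ζ ^ w j + 2) / (ζ ^ w j - 1))) := by
      apply tendsto_finset_prod
      intro j hj
      have hnd : ¬ (d : ℤ) ∣ w j := (Finset.mem_filter.mp hj).2
      have hne : ζ ^ w j - 1 ≠ 0 :=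
        sub_ne_zero.mpr fun h => hnd ((hζ.zpow_eq_one_iff_dvd _).mp h)
      refine Tendsto.mono_left ?_ nhdsWithin_le_nhds
      exact (ContinuousAt.div (((continuousAt_zpow₀ ζ _ (Or.inl hζ0)).add continuousAt_const))
        (((continuousAt_zpow₀ ζ _ (Or.inl hζ0)).sub continuousAt_const)) hne).tendsto
    refine (h1.mul h2).congr fun z => ?_
    rw [Finset.prod_mul_distrib, Finset.prod_const]
    rw [mul_assoc, ← Finset.prod_filter_mul_prod_filter_not univ (fun j => (d : ℤ) ∣ w j)
      (fun j => (z ^ w j + 2) / (z ^ w j - 1))]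

lemma key {n : ℕ} (w₁ w₂ : Fin n → ℤ) (e₁ e₂ c : ℂ)
    (hw₁ : ∀ j, w₁ j ≠ 0) (hw₂ : ∀ j, w₂ j ≠ 0) (he₁ : e₁ ≠ 0)
    (h : ∀ z : ℂ, z ≠ 0 → (∀ j, z ^ w₁ j ≠ 1) → (∀ j, z ^ w₂ j ≠ 1) →
      e₁ * ∏ j, (z ^ w₁ j + 2) / (z ^ w₁ j - 1)
        + e₂ * ∏ j, (z ^ w₂ j + 2) / (z ^ w₂ j - 1) = c)
    (d : ℕ) (hd : d ≠ 0)
    (hk : (univ.filter fun j => (d : ℤ) ∣ w₂ j).card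
        < (univ.filter fun j => (d : ℤ) ∣ w₁ j).card) : False := by
  obtain ⟨ζ, hζ⟩ : ∃ ζ : ℂ, IsPrimitiveRoot ζ d := ⟨_, Complex.isPrimitiveRoot_exp d hd⟩
  have hζ0 : ζ ≠ 0 := hζ.ne_zero hd
  set k₁ := (univ.filter fun j => (d : ℤ) ∣ w₁ j).card with hk₁
  set k₂ := (univ.filter fun j => (d : ℤ) ∣ w₂ j).card with hk₂
  obtain ⟨A, hA, hPA⟩ := prod_tendsto w₁ hw₁ hd hζ
  obtain ⟨B, hB, hPB⟩ := prod_tendsto w₂ hw₂ hd hζ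
  -- base tendsto : (z - ζ) → 0
  have hbase : Tendsto (fun z : ℂ => z - ζ) (𝓝[≠] ζ) (𝓝 0) := by
    have : Tendsto (fun z : ℂ => z - ζ) (𝓝 ζ) (𝓝 (ζ - ζ)) :=
      (continuous_id.sub continuous_const).tendsto ζ
    rw [sub_self] at this
    exact this.mono_left nhdsWithin_le_nhds
  -- second product with k₁ powers tends to 0
  have hP2 : Tendsto (fun z : ℂ => (z - ζ) ^ k₁ * ∏ j, (z ^ w₂ j + 2) / (z ^ w₂ j - 1))
      (𝓝[≠] ζ) (𝓝 0) := by
    have hpow : Tendsto (fun z : ℂ => (z - ζ) ^ (k₁ - k₂)) (𝓝[≠] ζ) (𝓝 0) := by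
      have := hbase.pow (k₁ - k₂)
      rwa [zero_pow (Nat.sub_ne_zero_of_lt hk)] at this
    have := hpow.mul hPB
    rw [zero_mul] at this
    refine this.congr fun z => ?_
    rw [← mul_assoc, ← pow_add]
    congr 2
    omega
  -- the full expression tends to e₁ * A
  have hsum : Tendsto (fun z : ℂ => (z - ζ) ^ k₁ *
      (e₁ * ∏ j, (z ^ w₁ j + 2) / (z ^ w₁ j - 1)
        + e₂ * ∏ j, (z ^ w₂ j + 2) / (z ^ w₂ j - 1))) (𝓝[≠] ζ) (𝓝 (e₁ * A)) := by
    have := (hPA.const_mul e₁).add (hP2.const_mul e₂)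
    rw [mul_zero, add_zero] at this
    refine this.congr fun z => ?_
    ring
  -- eventually the expression equals (z - ζ)^k₁ * c
  have hev : ∀ᶠ z in 𝓝[≠] ζ, (z - ζ) ^ k₁ *
      (e₁ * ∏ j, (z ^ w₁ j + 2) / (z ^ w₁ j - 1)
        + e₂ * ∏ j, (z ^ w₂ j + 2) / (z ^ w₂ j - 1)) = (z - ζ) ^ k₁ * c := by
    have hz0 : ∀ᶠ z in 𝓝[≠] ζ, z ≠ (0 : ℂ) :=
      (eventually_ne_nhds hζ0).filter_mono nhdsWithin_le_nhds
    have hv1 : ∀ᶠ z in 𝓝[≠] ζ, ∀ j, z ^ w₁ j ≠ 1 := by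
      rw [Filter.eventually_all]
      intro j
      filter_upwards [eventually_pow_ne_one ζ (w₁ j).natAbs
        (Int.natAbs_ne_zero.mpr (hw₁ j))] with z hz
      exact zpow_ne_one_of_natAbs _ hz
    have hv2 : ∀ᶠ z in 𝓝[≠] ζ, ∀ j, z ^ w₂ j ≠ 1 := by
      rw [Filter.eventually_all]
      intro j
      filter_upwards [eventually_pow_ne_one ζ (w₂ j).natAbs
        (Int.natAbs_ne_zero.mpr (hw₂ j))] with z hz
      exact zpow_ne_one_of_natAbs _ hz
    filter_upwards [hz0, hv1, hv2] with z hz h1 h2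
    rw [h z hz h1 h2]
  -- but (z - ζ)^k₁ * c tends to 0
  have hc0 : Tendsto (fun z : ℂ => (z - ζ) ^ k₁ * c) (𝓝[≠] ζ) (𝓝 0) := by
    have hpow : Tendsto (fun z : ℂ => (z - ζ) ^ k₁) (𝓝[≠] ζ) (𝓝 0) := by
      have := hbase.pow k₁
      rwa [zero_pow (by omega : k₁ ≠ 0)] at this
    have := hpow.mul_const c
    rwa [zero_mul] at this
  have : e₁ * A = 0 := tendsto_nhds_unique (hsum.congr' hev) hc0
  exact mul_ne_zero he₁ hA this

lemma combinatorics {n : ℕ} (W : Fin 2 → Fin n → ℤ) (hW : ∀ i j, W i j ≠ 0)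
    (hsort : ∀ i : Fin 2, ∀ j j' : Fin n, j ≤ j' → |W i j'| ≤ |W i j|)
    (hcount : ∀ d : ℕ, d ≠ 0 →
      (univ.filter fun j => (d : ℤ) ∣ W 0 j).card = (univ.filter fun j => (d : ℤ) ∣ W 1 j).card) :
    ∀ j, |W 0 j| = |W 1 j| := by
  classical
  set nA : Fin 2 → Fin n → ℕ := fun i j => (W i j).natAbs with hnA
  have hnA0 : ∀ i j, nA i j ≠ 0 := fun i j => Int.natAbs_ne_zero.mpr (hW i j)
  set cnt : Fin 2 → ℕ → ℕ := fun i v => (univ.filter fun j => nA i j = v).card with hcnt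
  set a : Fin 2 → ℕ → ℕ := fun i v => (univ.filter fun j => v ∣ nA i j).card with ha
  set M : ℕ := Finset.univ.sup (fun p : Fin 2 × Fin n => nA p.1 p.2) with hMdef
  have hMle : ∀ i j, nA i j ≤ M := fun i j =>
    Finset.le_sup (f := fun p : Fin 2 × Fin n => nA p.1 p.2) (Finset.mem_univ (i, j))
  have haeq : ∀ v : ℕ, v ≠ 0 → a 0 v = a 1 v := by
    intro v hv
    have hf : ∀ i, a i v = (univ.filter fun j => (v : ℤ) ∣ W i j).card := by
      intro i
      rw [ha]
      simp only
      apply congrArg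
      apply Finset.filter_congr
      intro j _
      simp only [hnA]
      constructor
      · intro h
        rwa [← Int.dvd_natAbs, Int.natCast_dvd_natCast]
      · intro h
        rwa [← Int.dvd_natAbs, Int.natCast_dvd_natCast] at h
    rw [hf 0, hf 1, hcount v hv]
  -- decomposition of divisibility counts into value counts
  have hdecomp : ∀ (i : Fin 2) (v : ℕ), v ≠ 0 →
      a i v = cnt i v + ∑ u ∈ (Finset.Ioc v M).filter (v ∣ ·), cnt i u := by
    intro i v hv
    set U := (Finset.Ioc v M).filter (v ∣ ·) with hU
    have hvU : v ∉ U := by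
      intro h
      have := (Finset.mem_filter.mp h).1
      rw [Finset.mem_Ioc] at this
      omega
    have hfib := Finset.card_eq_sum_card_fiberwise
      (f := nA i) (s := univ.filter fun j => v ∣ nA i j) (t := insert v U) ?_
    · rw [ha]
      simp only
      rw [hfib, Finset.sum_insert hvU]
      have hcongr : ∀ u ∈ insert v U,
          ((univ.filter fun j => v ∣ nA i j).filter fun j => nA i j = u).card = cnt i u := by
        intro u hu
        have hvu : v ∣ u := by
          rcases Finset.mem_insert.mp hu with h | h
          · exact h ▸ dvd_refl v
          · exact (Finset.mem_filter.mp h).2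
        congr 1
        rw [Finset.filter_filter]
        apply Finset.filter_congr
        intro j _
        constructor
        · exact fun h => h.2
        · intro h; exact ⟨h ▸ hvu, h⟩
      rw [hcongr v (Finset.mem_insert_self v U)]
      congr 1
      exact Finset.sum_congr rfl fun u hu => hcongr u (Finset.mem_insert_of_mem hu)
    · intro j hj
      have hvd : v ∣ nA i j := (Finset.mem_filter.mp hj).2
      rcases eq_or_ne (nA i j) v with he | he
      · rw [he]; exact Finset.mem_insert_self v U
      · apply Finset.mem_insert_of_mem
        rw [Finset.mem_filter, Finset.mem_Ioc]
        refine ⟨⟨?_, hMle i j⟩, hvd⟩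
        have := Nat.le_of_dvd (Nat.pos_of_ne_zero (hnA0 i j)) hvd
        omega
  -- descending induction: value counts agree
  have hstep : ∀ k v : ℕ, v ≠ 0 → M + 1 ≤ v + k → cnt 0 v = cnt 1 v := by
    intro k
    induction k with
    | zero =>
      intro v hv hle
      have hz : ∀ i : Fin 2, cnt i v = 0 := by
        intro i
        rw [hcnt]
        simp only
        rw [Finset.card_eq_zero, Finset.filter_eq_empty_iff]
        intro j _
        have := hMle i j
        omega
      rw [hz 0, hz 1]
    | succ k ih =>
      intro v hv hle
      rcases le_or_gt (M + 1) (v + k) with h | h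
      · exact ih v hv h
      · have h0 := hdecomp 0 v hv
        have h1 := hdecomp 1 v hv
        have hsumeq : ∑ u ∈ (Finset.Ioc v M).filter (v ∣ ·), cnt 0 u
            = ∑ u ∈ (Finset.Ioc v M).filter (v ∣ ·), cnt 1 u := by
          apply Finset.sum_congr rfl
          intro u hu
          have hmem := (Finset.mem_filter.mp hu).1
          rw [Finset.mem_Ioc] at hmem
          exact ih u (by omega) (by omega)
        have := haeq v hv
        omega
  have hval : ∀ v : ℕ, cnt 0 v = cnt 1 v := by
    intro v
    rcases eq_or_ne v 0 with rfl | hv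
    · have hz : ∀ i : Fin 2, cnt i 0 = 0 := by
        intro i
        rw [hcnt]
        simp only
        rw [Finset.card_eq_zero, Finset.filter_eq_empty_iff]
        intro j _
        exact hnA0 i j
      rw [hz 0, hz 1]
    · exact hstep (M + 1) v hv (by omega)
  -- multisets of absolute values agree
  have hms : Multiset.map (nA 0) univ.val = Multiset.map (nA 1) univ.val := by
    apply Multiset.ext.mpr
    intro v
    rw [Multiset.count_map, Multiset.count_map]
    have hc : ∀ i : Fin 2,
        Multiset.card (univ.val.filter fun j => v = nA i j) = cnt i v := by
      intro i
      have h1 : univ.val.filter (fun j => v = nA i j)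
          = (univ.filter (fun j => v = nA i j)).val := (Finset.filter_val _ _).symm
      rw [h1, ← Finset.card_def, hcnt]
      simp only
      congr 1
      apply Finset.filter_congr
      intro j _
      exact eq_comm
    rw [hc 0, hc 1, hval v]
  -- sorted lists with equal multisets are equal
  have hlist : List.ofFn (nA 0) = List.ofFn (nA 1) := by
    have hcoe : ∀ i : Fin 2, ((List.ofFn (nA i) : List ℕ) : Multiset ℕ)
        = Multiset.map (nA i) univ.val := by
      intro i
      rw [List.ofFn_eq_map]
      rfl
    have hperm : List.Perm (List.ofFn (nA 0)) (List.ofFn (nA 1)) :=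
      Multiset.coe_eq_coe.mp (by rw [hcoe 0, hcoe 1, hms])
    haveI : IsAntisymm ℕ (fun a b => b ≤ a) := ⟨fun a b h1 h2 => le_antisymm h2 h1⟩
    have hsorted : ∀ i : Fin 2, (List.ofFn (nA i)).Pairwise (fun a b => b ≤ a) := by
      intro i
      apply List.pairwise_ofFn.mpr
      intro j j' hjj'
      have h := hsort i j j' hjj'.le
      rw [Int.abs_eq_natAbs, Int.abs_eq_natAbs] at h
      exact_mod_cast h
    exact List.Perm.eq_of_pairwise (fun a b _ _ h1 h2 => le_antisymm h2 h1) (hsorted 0) (hsorted 1) hperm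
  have hfun : nA 0 = nA 1 := List.ofFn_injective hlist
  intro j
  rw [Int.abs_eq_natAbs, Int.abs_eq_natAbs]
  exact_mod_cast congrFun hfun j

end Stmt12Aux

open Stmt12Aux Finset in
/-- For a T_{x,y}-rigid 2 × n set of powers with rows sorted by decreasing
absolute value, corresponding entries have equal absolute values. -/
theorem stmt_12 (n : ℕ) (W : Fin 2 → Fin n → ℤ) (ε : Fin 2 → ℤ)
    (hW : ∀ i j, W i j ≠ 0) (hε : ∀ i, ε i = 1 ∨ ε i = -1)
    (hsort : ∀ i : Fin 2, ∀ j j' : Fin n, j ≤ j' → |W i j'| ≤ |W i j|)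
    (hrigid : ∀ x y : ℂ, ∃ c : ℂ, ∀ z : ℂ, z ≠ 0 → (∀ i j, z ^ (W i j) ≠ 1) →
      ∑ i, (ε i : ℂ) * ∏ j, (x * z ^ (W i j) + y) / (z ^ (W i j) - 1) = c) :
    ∀ j, |W 0 j| = |W 1 j| := by
  obtain ⟨c, hc⟩ := hrigid 1 2
  simp only [one_mul] at hc
  have hε0 : (ε 0 : ℂ) ≠ 0 := by rcases hε 0 with h | h <;> simp [h]
  have hε1 : (ε 1 : ℂ) ≠ 0 := by rcases hε 1 with h | h <;> simp [h]
  have hcount : ∀ d : ℕ, d ≠ 0 →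
      (univ.filter fun j => (d : ℤ) ∣ W 0 j).card
        = (univ.filter fun j => (d : ℤ) ∣ W 1 j).card := by
    intro d hd
    by_contra hne
    rcases lt_or_gt_of_ne hne with h | h
    · refine Stmt12Aux.key (W 1) (W 0) (ε 1) (ε 0) c (hW 1) (hW 0) hε1 ?_ d hd h
      intro z hz h1 h2
      have hall : ∀ i j, z ^ W i j ≠ 1 := by
        intro i j
        fin_cases i
        · exact h2 j
        · exact h1 j
      have hs := hc z hz hall
      rw [Fin.sum_univ_two] at hs
      linear_combination hs
    · refine Stmt12Aux.key (W 0) (W 1) (ε 0) (ε 1) c (hW 0) (hW 1) hε0 ?_ d hd h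
      intro z hz h1 h2
      have hall : ∀ i j, z ^ W i j ≠ 1 := by
        intro i j
        fin_cases i
        · exact h1 j
        · exact h2 j
      have hs := hc z hz hall
      rw [Fin.sum_univ_two] at hs
      exact hs
  exact Stmt12Aux.combinatorics W hW hsort hcount
end
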